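/- arXiv:1804.08960 — 7 statements merged into one kernel-verified Lean document; each statement's English description precedes it below -/
import Mathlib

section
/- Let T be a bounded linear operator on a complex Hilbert space H such that both T and its inverse exist and sup over all integers n of ‖T^n‖ is finite. Then T is similar to a unitary operator: there exists an invertible bounded operator L on H such that L⁻¹TL is unitary. -/
open ContinuousLinearMap

open Filter Topology Finset ComplexConjugate

theorem similar_to_unitary_of_power_bounded
    {H : Type*} [NormedAddCommGroup H] [InnerProductSpace ℂ H] [CompleteSpace H]
    (T : H ≃L[ℂ] H) (M : ℝ) (hM : 0 < M)
    (hbd : ∀ n : ℤ, ‖((T ^ n : H ≃L[ℂ] H) : H →L[ℂ] H)‖ ≤ M) :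
    ∃ L : H ≃L[ℂ] H, ∀ x : H, ‖L.symm (T (L x))‖ = ‖x‖ := by
  classical
  -- the powers of `T`, as continuous linear maps
  set A : ℤ → H →L[ℂ] H := fun n => ((T ^ n : H ≃L[ℂ] H) : H →L[ℂ] H) with hA
  have hup : ∀ (n : ℤ) (x : H), ‖A n x‖ ≤ M * ‖x‖ := fun n x =>
    ((A n).le_opNorm x).trans (by
      have := hbd n
      exact mul_le_mul_of_nonneg_right this (norm_nonneg x))
  have hAA : ∀ (m n : ℤ) (x : H), A m (A n x) = A (m + n) x := by
    intro m n x
    show (T ^ m : H ≃L[ℂ] H) ((T ^ n : H ≃L[ℂ] H) x) = (T ^ (m + n) : H ≃L[ℂ] H) x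
    rw [zpow_add]
    rfl
  have hA0 : ∀ x : H, A 0 x = x := fun x => by
    show (T ^ (0 : ℤ) : H ≃L[ℂ] H) x = x
    rw [zpow_zero]; rfl
  have hdown : ∀ (n : ℤ) (x : H), ‖x‖ ≤ M * ‖A n x‖ := by
    intro n x
    have h1 : A (-n) (A n x) = x := by rw [hAA, neg_add_cancel, hA0]
    calc ‖x‖ = ‖A (-n) (A n x)‖ := by rw [h1]
      _ ≤ M * ‖A n x‖ := hup _ _
  have hTA : ∀ (n : ℤ) (x : H), A n (T x) = A (n + 1) x := by
    intro n x
    have : T x = A 1 x := by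
      show T x = (T ^ (1 : ℤ) : H ≃L[ℂ] H) x
      rw [zpow_one]
    rw [this, hAA]
  -- the sequence of inner products and its Cesàro averages
  set g : ℕ → H → H → ℂ := fun n x y => (inner ℂ (A n x) (A n y) : ℂ) with hg
  have hgbound : ∀ (n : ℕ) (x y : H), ‖g n x y‖ ≤ M ^ 2 * ‖x‖ * ‖y‖ := by
    intro n x y
    calc ‖g n x y‖ ≤ ‖A n x‖ * ‖A n y‖ := norm_inner_le_norm _ _
      _ ≤ (M * ‖x‖) * (M * ‖y‖) :=
        mul_le_mul (hup _ _) (hup _ _) (norm_nonneg _)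
          (mul_nonneg hM.le (norm_nonneg _))
      _ = M ^ 2 * ‖x‖ * ‖y‖ := by ring
  set c : ℕ → H → H → ℂ := fun N x y =>
    ((((N : ℝ) + 1)⁻¹ : ℝ) : ℂ) * ∑ n ∈ Finset.range (N + 1), g n x y with hc
  have hNpos : ∀ N : ℕ, (0 : ℝ) < (N : ℝ) + 1 := fun N => by positivity
  have hcbound : ∀ (N : ℕ) (x y : H), ‖c N x y‖ ≤ M ^ 2 * ‖x‖ * ‖y‖ := by
    intro N x y
    have h1 : ‖∑ n ∈ Finset.range (N + 1), g n x y‖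
        ≤ ((N : ℝ) + 1) * (M ^ 2 * ‖x‖ * ‖y‖) := by
      calc ‖∑ n ∈ Finset.range (N + 1), g n x y‖
          ≤ ∑ n ∈ Finset.range (N + 1), ‖g n x y‖ := norm_sum_le _ _
        _ ≤ ∑ _n ∈ Finset.range (N + 1), (M ^ 2 * ‖x‖ * ‖y‖) :=
          Finset.sum_le_sum fun n _ => hgbound n x y
        _ = ((N : ℝ) + 1) * (M ^ 2 * ‖x‖ * ‖y‖) := by
          rw [Finset.sum_const, Finset.card_range]
          push_cast; ring
    calc ‖c N x y‖ = ((N : ℝ) + 1)⁻¹ * ‖∑ n ∈ Finset.range (N + 1), g n x y‖ := by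
          rw [hc]
          simp only [norm_mul, Complex.norm_real, Real.norm_eq_abs,
            abs_of_pos (inv_pos.2 (hNpos N))]
        _ ≤ ((N : ℝ) + 1)⁻¹ * (((N : ℝ) + 1) * (M ^ 2 * ‖x‖ * ‖y‖)) :=
          mul_le_mul_of_nonneg_left h1 (inv_pos.2 (hNpos N)).le
        _ = M ^ 2 * ‖x‖ * ‖y‖ := by
          field_simp
  -- an ultrafilter extending `atTop`
  set U : Ultrafilter ℕ := Ultrafilter.of atTop with hU
  have hUle : (U : Filter ℕ) ≤ atTop := Ultrafilter.of_le _
  -- the limit form `B`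
  have hex : ∀ x y : H, ∃ a : ℂ,
      Tendsto (fun N => c N x y) (U : Filter ℕ) (𝓝 a) := by
    intro x y
    have hcpt : IsCompact (Metric.closedBall (0 : ℂ) (M ^ 2 * ‖x‖ * ‖y‖)) :=
      isCompact_closedBall _ _
    have hle : (U.map fun N => c N x y : Filter ℂ)
        ≤ Filter.principal (Metric.closedBall (0 : ℂ) (M ^ 2 * ‖x‖ * ‖y‖)) := by
      rw [Filter.le_principal_iff]
      exact Filter.mem_map.2 (Filter.univ_mem' fun N =>
        Metric.mem_closedBall.2 (by simpa using hcbound N x y))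
    obtain ⟨a, -, ha⟩ := hcpt.ultrafilter_le_nhds (U.map fun N => c N x y) hle
    exact ⟨a, ha⟩
  choose B hB using hex
  have hBbound : ∀ x y : H, ‖B x y‖ ≤ M ^ 2 * ‖x‖ * ‖y‖ := by
    intro x y
    exact le_of_tendsto (hB x y).norm (Filter.Eventually.of_forall fun N => hcbound N x y)
  -- sesquilinearity of B
  have hadd1 : ∀ x x' y : H, B (x + x') y = B x y + B x' y := by
    intro x x' y
    have hcc : (fun N => c N x y + c N x' y) = fun N => c N (x + x') y := by
      funext N
      simp only [hc, hg, map_add, inner_add_left, Finset.sum_add_distrib, mul_add]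
    refine tendsto_nhds_unique (hB (x + x') y) ?_
    rw [← hcc]
    exact (hB x y).add (hB x' y)
  have hsmul1 : ∀ (a : ℂ) (x y : H), B (a • x) y = conj a * B x y := by
    intro a x y
    have hcc : (fun N => conj a * c N x y) = fun N => c N (a • x) y := by
      funext N
      simp only [hc, hg, map_smul, inner_smul_left, ← Finset.mul_sum]
      ring
    refine tendsto_nhds_unique (hB (a • x) y) ?_
    rw [← hcc]
    exact (hB x y).const_mul _
  have hadd2 : ∀ x y y' : H, B x (y + y') = B x y + B x y' := by
    intro x y y'
    have hcc : (fun N => c N x y + c N x y') = fun N => c N x (y + y') := by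
      funext N
      simp only [hc, hg, map_add, inner_add_right, Finset.sum_add_distrib, mul_add]
    refine tendsto_nhds_unique (hB x (y + y')) ?_
    rw [← hcc]
    exact (hB x y).add (hB x y')
  have hsmul2 : ∀ (a : ℂ) (x y : H), B x (a • y) = a * B x y := by
    intro a x y
    have hcc : (fun N => a * c N x y) = fun N => c N x (a • y) := by
      funext N
      simp only [hc, hg, map_smul, inner_smul_right, ← Finset.mul_sum]
      ring
    refine tendsto_nhds_unique (hB x (a • y)) ?_
    rw [← hcc]
    exact (hB x y).const_mul _
  have hconj : ∀ x y : H, B y x = conj (B x y) := by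
    intro x y
    have hcc : (fun N => conj (c N x y)) = fun N => c N y x := by
      funext N
      simp only [hc, hg, map_mul, map_sum, Complex.conj_ofReal, inner_conj_symm]
    refine tendsto_nhds_unique (hB y x) ?_
    rw [← hcc]
    exact (Complex.continuous_conj.tendsto _).comp (hB x y)
  -- diagonal values: real and coercive
  have hdiag : ∀ x : H, (B x x).im = 0 ∧ (‖x‖ / M) ^ 2 ≤ (B x x).re := by
    intro x
    have hKcl : IsClosed {z : ℂ | z.im = 0 ∧ (‖x‖ / M) ^ 2 ≤ z.re} :=
      (isClosed_eq Complex.continuous_im continuous_const).inter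
        (isClosed_le continuous_const Complex.continuous_re)
    have hgreal : ∀ n : ℕ, g n x x = ((‖A (n : ℤ) x‖ ^ 2 : ℝ) : ℂ) := by
      intro n
      simp only [hg]
      rw [inner_self_eq_norm_sq_to_K]
      norm_cast
    have hmem : ∀ N, c N x x ∈ {z : ℂ | z.im = 0 ∧ (‖x‖ / M) ^ 2 ≤ z.re} := by
      intro N
      have hcr : c N x x
          = ((((N : ℝ) + 1)⁻¹ * ∑ n ∈ Finset.range (N + 1), ‖A (n : ℤ) x‖ ^ 2 : ℝ) : ℂ) := by
        simp only [hc, hgreal]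
        push_cast
        ring
      rw [hcr]
      refine ⟨by rw [Complex.ofReal_im], ?_⟩
      rw [Complex.ofReal_re]
      have hterm : ∀ n ∈ Finset.range (N + 1), (‖x‖ / M) ^ 2 ≤ ‖A (n : ℤ) x‖ ^ 2 := by
        intro n _
        have h1 : ‖x‖ / M ≤ ‖A (n : ℤ) x‖ := by
          rw [div_le_iff₀ hM, mul_comm]
          exact hdown n x
        exact pow_le_pow_left₀ (by positivity) h1 2
      have hsum : ((N : ℝ) + 1) * ((‖x‖ / M) ^ 2)
          ≤ ∑ n ∈ Finset.range (N + 1), ‖A (n : ℤ) x‖ ^ 2 := by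
        calc ((N : ℝ) + 1) * ((‖x‖ / M) ^ 2)
            = ∑ _n ∈ Finset.range (N + 1), (‖x‖ / M) ^ 2 := by
              rw [Finset.sum_const, Finset.card_range]; push_cast; ring
          _ ≤ ∑ n ∈ Finset.range (N + 1), ‖A (n : ℤ) x‖ ^ 2 :=
              Finset.sum_le_sum hterm
      calc (‖x‖ / M) ^ 2
          = ((N : ℝ) + 1)⁻¹ * (((N : ℝ) + 1) * ((‖x‖ / M) ^ 2)) := by
            field_simp
        _ ≤ ((N : ℝ) + 1)⁻¹ * ∑ n ∈ Finset.range (N + 1), ‖A (n : ℤ) x‖ ^ 2 :=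
            mul_le_mul_of_nonneg_left hsum (inv_pos.2 (hNpos N)).le
    exact hKcl.mem_of_tendsto (hB x x) (Filter.Eventually.of_forall hmem)
  -- invariance of B
  have hinv : ∀ x y : H, B (T x) (T y) = B x y := by
    intro x y
    have hgT : ∀ n : ℕ, g n (T x) (T y) = g (n + 1) x y := by
      intro n
      simp only [hg]
      rw [hTA, hTA]
      norm_cast
    have key : ∀ N, c N (T x) (T y)
        = c N x y + ((((N : ℝ) + 1)⁻¹ : ℝ) : ℂ) * (g (N + 1) x y - g 0 x y) := by
      intro N
      have hsum : ∑ n ∈ Finset.range (N + 1), g (n + 1) x y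
          = (∑ n ∈ Finset.range (N + 1), g n x y) + g (N + 1) x y - g 0 x y := by
        have := Finset.sum_range_succ' (fun n => g n x y) (N + 1)
        rw [Finset.sum_range_succ (fun n => g n x y) (N + 1)] at this
        linear_combination -this
      calc c N (T x) (T y)
          = ((((N : ℝ) + 1)⁻¹ : ℝ) : ℂ) * ∑ n ∈ Finset.range (N + 1), g (n + 1) x y := by
            rw [hc]; simp only [hgT]
        _ = c N x y + ((((N : ℝ) + 1)⁻¹ : ℝ) : ℂ) * (g (N + 1) x y - g 0 x y) := by
            rw [hsum]; simp only [hc]; ring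
    have hz : Tendsto
        (fun N : ℕ => ((((N : ℝ) + 1)⁻¹ : ℝ) : ℂ) * (g (N + 1) x y - g 0 x y))
        atTop (𝓝 0) := by
      have hbnd : ∀ N : ℕ, ‖((((N : ℝ) + 1)⁻¹ : ℝ) : ℂ) * (g (N + 1) x y - g 0 x y)‖
          ≤ ((N : ℝ) + 1)⁻¹ * (2 * (M ^ 2 * ‖x‖ * ‖y‖)) := by
        intro N
        rw [norm_mul, Complex.norm_real, Real.norm_eq_abs,
          abs_of_pos (inv_pos.2 (hNpos N))]
        refine mul_le_mul_of_nonneg_left ?_ (inv_pos.2 (hNpos N)).le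
        calc ‖g (N + 1) x y - g 0 x y‖ ≤ ‖g (N + 1) x y‖ + ‖g 0 x y‖ := norm_sub_le _ _
          _ ≤ (M ^ 2 * ‖x‖ * ‖y‖) + (M ^ 2 * ‖x‖ * ‖y‖) :=
            add_le_add (hgbound _ x y) (hgbound _ x y)
          _ = 2 * (M ^ 2 * ‖x‖ * ‖y‖) := by ring
      have h0 : Tendsto (fun N : ℕ => ((N : ℝ) + 1)⁻¹ * (2 * (M ^ 2 * ‖x‖ * ‖y‖)))
          atTop (𝓝 0) := by
        have h1 : Tendsto (fun N : ℕ => ((N : ℝ) + 1)⁻¹) atTop (𝓝 0) := by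
          simpa [one_div] using tendsto_one_div_add_atTop_nhds_zero_nat (𝕜 := ℝ)
        simpa using h1.mul_const (2 * (M ^ 2 * ‖x‖ * ‖y‖))
      exact squeeze_zero_norm hbnd h0
    have hz' : Tendsto
        (fun N : ℕ => ((((N : ℝ) + 1)⁻¹ : ℝ) : ℂ) * (g (N + 1) x y - g 0 x y))
        (U : Filter ℕ) (𝓝 0) := hz.mono_left hUle
    have hsum2 := (hB x y).add hz'
    rw [add_zero] at hsum2
    exact tendsto_nhds_unique (hB (T x) (T y)) (hsum2.congr fun N => (key N).symm)
  -- package B as a continuous sesquilinear map and apply Riesz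
  let bBlin : H →ₗ⋆[ℂ] H →ₗ[ℂ] ℂ :=
    LinearMap.mk₂'ₛₗ (starRingEnd ℂ) (RingHom.id ℂ) B hadd1
      (fun a x y => by simpa [smul_eq_mul] using hsmul1 a x y)
      hadd2
      (fun a x y => by simpa [smul_eq_mul] using hsmul2 a x y)
  let bB : H →L⋆[ℂ] H →L[ℂ] ℂ :=
    LinearMap.mkContinuous₂ bBlin (M ^ 2) (fun x y => by
      simpa [bBlin] using hBbound x y)
  set S : H →L[ℂ] H := InnerProductSpace.continuousLinearMapOfBilin bB with hSdef
  have hS : ∀ v w : H, (inner ℂ (S v) w : ℂ) = B v w := fun v w =>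
    InnerProductSpace.continuousLinearMapOfBilin_apply bB v w
  have hSsymm : ∀ x y : H, (inner ℂ (S x) y : ℂ) = inner ℂ x (S y) := by
    intro x y
    have h2 : (inner ℂ x (S y) : ℂ) = B x y := by
      rw [← inner_conj_symm, hS, hconj, Complex.conj_conj]
    rw [hS, h2]
  have hSsa : IsSelfAdjoint S :=
    isSelfAdjoint_iff_isSymmetric.2 fun x y => hSsymm x y
  have hSpos : (0 : H →L[ℂ] H) ≤ S := by
    rw [ContinuousLinearMap.nonneg_iff_isPositive]
    refine ⟨isSelfAdjoint_iff_isSymmetric.1 hSsa, fun x => ?_⟩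
    rw [ContinuousLinearMap.reApplyInnerSelf_apply, hS]
    show (0 : ℝ) ≤ (B x x).re
    exact le_trans (by positivity) (hdiag x).2
  -- the square root of S
  set R : H →L[ℂ] H := CFC.sqrt S with hRdef
  have hR0 : (0 : H →L[ℂ] H) ≤ R := CFC.sqrt_nonneg S
  have hRsa : IsSelfAdjoint R := IsSelfAdjoint.of_nonneg hR0
  have hR2 : R * R = S := CFC.sqrt_mul_sqrt_self S hSpos
  have hRadj : ContinuousLinearMap.adjoint R = R :=
    ContinuousLinearMap.isSelfAdjoint_iff'.1 hRsa
  have hnorm : ∀ z : H, ‖R z‖ ^ 2 = (B z z).re := by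
    intro z
    have h1 : (inner ℂ (R z) (R z) : ℂ) = inner ℂ z (S z) := by
      rw [← hRadj]
      rw [ContinuousLinearMap.adjoint_inner_left]
      rw [hRadj]
      congr 1
      rw [← ContinuousLinearMap.mul_apply, hR2]
    have h2 : (inner ℂ z (S z) : ℂ) = B z z := by
      rw [← hSsymm, hS]
    rw [← inner_self_eq_norm_sq (𝕜 := ℂ) (R z), h1, h2]
    rfl
  have hRlow : ∀ z : H, ‖z‖ ≤ M * ‖R z‖ := by
    intro z
    have h1 : (‖z‖ / M) ^ 2 ≤ ‖R z‖ ^ 2 := by rw [hnorm]; exact (hdiag z).2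
    have h2 : ‖z‖ / M ≤ ‖R z‖ := by
      nlinarith [h1, norm_nonneg (R z), div_nonneg (norm_nonneg z) hM.le]
    rw [div_le_iff₀ hM] at h2
    linarith [h2]
  have hker : LinearMap.ker (R : H →ₗ[ℂ] H) = ⊥ := by
    rw [LinearMap.ker_eq_bot']
    intro x hx
    have := hRlow x
    rw [show R x = 0 from hx] at this
    simp only [norm_zero, mul_zero] at this
    exact norm_le_zero_iff.1 this
  have hanti : AntilipschitzWith (Real.toNNReal M) R :=
    R.antilipschitz_of_bound fun x => by
      rw [Real.coe_toNNReal M hM.le]; exact hRlow x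
  have hclosed : IsClosed (LinearMap.range (R : H →ₗ[ℂ] H) : Set H) := by
    have h1 := hanti.isClosed_range R.uniformContinuous
    have h2 : (LinearMap.range (R : H →ₗ[ℂ] H) : Set H) = Set.range R := by
      ext z
      simp [LinearMap.mem_range, Set.mem_range]
    rw [h2]
    exact h1
  haveI : CompleteSpace (LinearMap.range (R : H →ₗ[ℂ] H)) := hclosed.completeSpace_coe
  have hrange : LinearMap.range (R : H →ₗ[ℂ] H) = ⊤ := by
    rw [← Submodule.orthogonal_eq_bot_iff]
    rw [Submodule.eq_bot_iff]
    intro v hv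
    rw [Submodule.mem_orthogonal] at hv
    have h1 : ∀ x : H, (inner ℂ (R x) v : ℂ) = 0 := fun x =>
      hv (R x) (LinearMap.mem_range_self _ x)
    have h2 : R v = 0 := by
      have h3 : (inner ℂ (R v) (R v) : ℂ) = 0 := by
        have := h1 (R v)  -- ⟪R (R v), v⟫ = 0 would be wrong; need symmetry
        -- ⟪R x, v⟫ = ⟪x, R v⟫
        have hsym : ∀ x' : H, (inner ℂ x' (R v) : ℂ) = 0 := by
          intro x'
          rw [← ContinuousLinearMap.adjoint_inner_left, hRadj]
          exact h1 x'
        exact hsym (R v)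
      exact inner_self_eq_zero.1 h3
    have := hRlow v
    rw [h2] at this
    simp only [norm_zero, mul_zero] at this
    exact norm_le_zero_iff.1 this
  -- the similarity
  set E : H ≃L[ℂ] H := ContinuousLinearEquiv.ofBijective R hker hrange with hE
  have hEapp : ∀ w : H, E w = R w := fun w =>
    congrFun (ContinuousLinearEquiv.coeFn_ofBijective R hker hrange) w
  refine ⟨E.symm, fun x => ?_⟩
  rw [ContinuousLinearEquiv.symm_symm]
  set w : H := E.symm x with hw
  have hRw : R w = x := by
    rw [← hEapp, hw, ContinuousLinearEquiv.apply_symm_apply]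
  have hsq : ‖R (T w)‖ ^ 2 = ‖R w‖ ^ 2 := by
    rw [hnorm, hnorm, hinv]
  have hnorms : ‖R (T w)‖ = ‖R w‖ := by
    have := congrArg Real.sqrt hsq
    rwa [Real.sqrt_sq (norm_nonneg _), Real.sqrt_sq (norm_nonneg _)] at this
  rw [hEapp, hnorms, hRw]
end

section
/- Let T be a bounded linear operator on a complex Hilbert space H. Suppose there exist constants 0 < m ≤ M such that m‖x‖ ≤ ‖T^n x‖ ≤ M‖x‖ for all n ≥ 1 and all x ∈ H. Then T is similar to an isometry: there exists an invertible bounded operator L with L⁻¹TL an isometry. -/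
open Filter Topology ComplexConjugate Finset
local notation "⟪" x ", " y "⟫" => @inner ℂ _ _ x y

namespace STI
variable {H : Type*} [NormedAddCommGroup H] [InnerProductSpace ℂ H]

noncomputable def avg (T : H →L[ℂ] H) (x y : H) (N : ℕ) : ℂ :=
  (N : ℂ)⁻¹ * ∑ n ∈ Finset.Icc 1 N, ⟪(T ^ n) x, (T ^ n) y⟫

noncomputable def ulim (f : ℕ → ℂ) : ℂ := by
  classical exact if h : ∃ z, Tendsto f (Filter.hyperfilter ℕ) (𝓝 z) then h.choose else 0

noncomputable def phi (T : H →L[ℂ] H) (x y : H) : ℂ := ulim (avg T x y)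

variable (T : H →L[ℂ] H) {M : ℝ} (hM : 0 ≤ M)
  (hbdM : ∀ n : ℕ, 1 ≤ n → ∀ x : H, ‖(T ^ n) x‖ ≤ M * ‖x‖)

-- algebra on avg
lemma avg_add_right (x y z : H) (N : ℕ) :
    avg T x (y + z) N = avg T x y N + avg T x z N := by
  simp [avg, inner_add_right, Finset.sum_add_distrib, mul_add]

lemma avg_smul_right (x y : H) (c : ℂ) (N : ℕ) :
    avg T x (c • y) N = c * avg T x y N := by
  simp only [avg, map_smul, inner_smul_right, ← Finset.mul_sum]
  ring

lemma avg_conj (x y : H) (N : ℕ) : (starRingEnd ℂ) (avg T x y N) = avg T y x N := by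
  simp [avg, map_mul, map_sum, inner_conj_symm]

lemma avg_shift (x y : H) (N : ℕ) :
    avg T (T x) (T y) N = avg T x y N
      + (N : ℂ)⁻¹ * (⟪(T ^ (N + 1)) x, (T ^ (N + 1)) y⟫ - ⟪(T ^ 1) x, (T ^ 1) y⟫) := by
  have key : ∀ n : ℕ, ⟪(T ^ n) (T x), (T ^ n) (T y)⟫ = ⟪(T ^ (n + 1)) x, (T ^ (n + 1)) y⟫ := by
    intro n
    rw [pow_succ, ContinuousLinearMap.mul_apply, ContinuousLinearMap.mul_apply]
  have sum_shift : ∀ a : ℕ → ℂ,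
      ∑ n ∈ Finset.Icc 1 N, a (n + 1) = ∑ n ∈ Finset.Icc 1 N, a n + a (N + 1) - a 1 := by
    intro a
    induction N with
    | zero => simp
    | succ N ih =>
        rw [Finset.sum_Icc_succ_top (by omega : 1 ≤ N + 1),
          Finset.sum_Icc_succ_top (by omega : 1 ≤ N + 1), ih]
        ring
  simp only [avg, key]
  rw [sum_shift (fun n => ⟪(T ^ n) x, (T ^ n) y⟫)]
  ring_nf


include hM hbdM

lemma avg_norm_le (x y : H) (N : ℕ) : ‖avg T x y N‖ ≤ M ^ 2 * ‖x‖ * ‖y‖ := by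
  have hpos : (0:ℝ) ≤ M ^ 2 * ‖x‖ * ‖y‖ := by positivity
  rcases Nat.eq_zero_or_pos N with h0 | hN
  · simp [avg, h0, hpos]
  · have h1 : ‖avg T x y N‖ ≤ (N:ℝ)⁻¹ * ∑ n ∈ Finset.Icc 1 N, ‖⟪(T ^ n) x, (T ^ n) y⟫‖ := by
      rw [avg, norm_mul, norm_inv, Complex.norm_natCast]
      gcongr
      exact norm_sum_le _ _
    have h2 : ∑ n ∈ Finset.Icc 1 N, ‖⟪(T ^ n) x, (T ^ n) y⟫‖
        ≤ ∑ _n ∈ Finset.Icc 1 N, M ^ 2 * ‖x‖ * ‖y‖ := by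
      apply Finset.sum_le_sum
      intro n hn
      have hn1 := (Finset.mem_Icc.mp hn).1
      calc ‖⟪(T ^ n) x, (T ^ n) y⟫‖ ≤ ‖(T ^ n) x‖ * ‖(T ^ n) y‖ := norm_inner_le_norm _ _
        _ ≤ (M * ‖x‖) * (M * ‖y‖) :=
            mul_le_mul (hbdM n hn1 x) (hbdM n hn1 y) (norm_nonneg _) (by positivity)
        _ = M ^ 2 * ‖x‖ * ‖y‖ := by ring
    have h3 : (N:ℝ)⁻¹ * ∑ _n ∈ Finset.Icc 1 N, M ^ 2 * ‖x‖ * ‖y‖ = M ^ 2 * ‖x‖ * ‖y‖ := by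
      rw [Finset.sum_const, Nat.card_Icc, nsmul_eq_mul]
      have hN' : (0:ℝ) < (N:ℝ) := by exact_mod_cast hN
      push_cast [Nat.add_sub_cancel]
      field_simp
    calc ‖avg T x y N‖ ≤ (N:ℝ)⁻¹ * ∑ n ∈ Finset.Icc 1 N, ‖⟪(T ^ n) x, (T ^ n) y⟫‖ := h1
      _ ≤ (N:ℝ)⁻¹ * ∑ _n ∈ Finset.Icc 1 N, M ^ 2 * ‖x‖ * ‖y‖ := by gcongr
      _ = M ^ 2 * ‖x‖ * ‖y‖ := h3

lemma tendsto_avg (x y : H) :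
    Tendsto (avg T x y) (Filter.hyperfilter ℕ) (𝓝 (phi T x y)) := by
  classical
  have h : ∃ z, Tendsto (avg T x y) (Filter.hyperfilter ℕ) (𝓝 z) := by
    obtain ⟨z, _, hz⟩ := (isCompact_closedBall (0 : ℂ) (M ^ 2 * ‖x‖ * ‖y‖)).ultrafilter_le_nhds
      ((Filter.hyperfilter ℕ).map (avg T x y)) (by
        rw [Ultrafilter.coe_map, le_principal_iff, Filter.mem_map]
        exact univ_mem' fun n => by
          simpa [Metric.mem_closedBall, dist_zero_right] using avg_norm_le T hM hbdM x y n)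
    exact ⟨z, hz⟩
  rw [phi, ulim]
  simp only [dif_pos h]
  exact h.choose_spec

lemma phi_norm_le (x y : H) : ‖phi T x y‖ ≤ M ^ 2 * ‖x‖ * ‖y‖ := by
  have h := tendsto_avg T hM hbdM x y
  have : Tendsto (fun N => ‖avg T x y N‖) (Filter.hyperfilter ℕ) (𝓝 ‖phi T x y‖) :=
    (continuous_norm.tendsto _).comp h
  exact le_of_tendsto this (Eventually.of_forall fun N => avg_norm_le T hM hbdM x y N)

lemma phi_add_right (x y z : H) : phi T x (y + z) = phi T x y + phi T x z := by
  have h1 := tendsto_avg T hM hbdM x y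
  have h2 := tendsto_avg T hM hbdM x z
  have h3 := tendsto_avg T hM hbdM x (y + z)
  refine tendsto_nhds_unique h3 ?_
  have heq : avg T x (y + z) = fun N => avg T x y N + avg T x z N :=
    funext (avg_add_right T x y z)
  rw [heq]
  exact h1.add h2

lemma phi_smul_right (x y : H) (c : ℂ) : phi T x (c • y) = c * phi T x y := by
  have h1 := tendsto_avg T hM hbdM x y
  have h3 := tendsto_avg T hM hbdM x (c • y)
  refine tendsto_nhds_unique h3 ?_
  have heq : avg T x (c • y) = fun N => c * avg T x y N := funext (avg_smul_right T x y c)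
  rw [heq]
  exact h1.const_mul c

lemma phi_conj (x y : H) : (starRingEnd ℂ) (phi T x y) = phi T y x := by
  have h1 := tendsto_avg T hM hbdM x y
  have h3 := tendsto_avg T hM hbdM y x
  refine tendsto_nhds_unique ?_ h3
  have : Tendsto (fun N => (starRingEnd ℂ) (avg T x y N)) (Filter.hyperfilter ℕ)
      (𝓝 ((starRingEnd ℂ) (phi T x y))) := (Complex.continuous_conj.tendsto _).comp h1
  simpa [avg_conj] using this

lemma phi_shift (x y : H) : phi T (T x) (T y) = phi T x y := by
  have h1 := tendsto_avg T hM hbdM (T x) (T y)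
  have h2 := tendsto_avg T hM hbdM x y
  have hdiff : Tendsto (fun N => avg T (T x) (T y) N - avg T x y N) (Filter.hyperfilter ℕ)
      (𝓝 (phi T (T x) (T y) - phi T x y)) := h1.sub h2
  have hzero : Tendsto (fun N => avg T (T x) (T y) N - avg T x y N) (Filter.hyperfilter ℕ)
      (𝓝 0) := by
    apply Tendsto.mono_left _ Nat.hyperfilter_le_atTop
    apply squeeze_zero_norm (a := fun N : ℕ => (N:ℝ)⁻¹ * (2 * (M ^ 2 * ‖x‖ * ‖y‖)))
    · intro N
      rw [avg_shift]
      simp only [add_sub_cancel_left, norm_mul, norm_inv, Complex.norm_natCast]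
      gcongr
      calc ‖⟪(T ^ (N + 1)) x, (T ^ (N + 1)) y⟫ - ⟪(T ^ 1) x, (T ^ 1) y⟫‖
          ≤ ‖⟪(T ^ (N + 1)) x, (T ^ (N + 1)) y⟫‖ + ‖⟪(T ^ 1) x, (T ^ 1) y⟫‖ := norm_sub_le _ _
        _ ≤ (M * ‖x‖) * (M * ‖y‖) + (M * ‖x‖) * (M * ‖y‖) := by
            gcongr <;>
              exact (norm_inner_le_norm _ _).trans
                (mul_le_mul (hbdM _ (by omega) x) (hbdM _ (by omega) y) (norm_nonneg _)
                  (by positivity))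
        _ = 2 * (M ^ 2 * ‖x‖ * ‖y‖) := by ring
    · have := (tendsto_inv_atTop_nhds_zero_nat (𝕜 := ℝ)).mul_const (2 * (M ^ 2 * ‖x‖ * ‖y‖))
      rwa [zero_mul] at this
  have := tendsto_nhds_unique hdiff hzero
  linear_combination this


lemma phi_re_ge {m : ℝ} (hm0 : 0 ≤ m)
    (hlow : ∀ n : ℕ, 1 ≤ n → ∀ x : H, m * ‖x‖ ≤ ‖(T ^ n) x‖) (x : H) :
    m ^ 2 * ‖x‖ ^ 2 ≤ (phi T x x).re := by
  have h := tendsto_avg T hM hbdM x x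
  have hre : Tendsto (fun N => (avg T x x N).re) (Filter.hyperfilter ℕ) (𝓝 (phi T x x).re) :=
    (Complex.continuous_re.tendsto _).comp h
  refine ge_of_tendsto hre ?_
  have h1 : ∀ᶠ N : ℕ in Filter.hyperfilter ℕ, 1 ≤ N :=
    Nat.hyperfilter_le_atTop (eventually_ge_atTop 1)
  filter_upwards [h1] with N hN
  have hcast : (avg T x x N).re = (N:ℝ)⁻¹ * ∑ n ∈ Finset.Icc 1 N, ‖(T ^ n) x‖ ^ 2 := by
    have heq : avg T x x N = (((N:ℝ)⁻¹ * ∑ n ∈ Finset.Icc 1 N, ‖(T ^ n) x‖ ^ 2 : ℝ) : ℂ) := by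
      rw [avg]
      push_cast
      congr 1
      refine Finset.sum_congr rfl fun n _ => ?_
      rw [inner_self_eq_norm_sq_to_K]
      norm_num
    rw [heq, Complex.ofReal_re]
  rw [hcast]
  have hNpos : (0:ℝ) < N := by exact_mod_cast hN
  have hsum : (N:ℝ) * (m ^ 2 * ‖x‖ ^ 2) ≤ ∑ n ∈ Finset.Icc 1 N, ‖(T ^ n) x‖ ^ 2 := by
    calc (N:ℝ) * (m ^ 2 * ‖x‖ ^ 2) = ∑ _n ∈ Finset.Icc 1 N, m ^ 2 * ‖x‖ ^ 2 := by
          rw [Finset.sum_const, Nat.card_Icc, nsmul_eq_mul]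
          push_cast [Nat.add_sub_cancel]
          ring
      _ ≤ _ := Finset.sum_le_sum fun n hn => by
          have h' := hlow n (Finset.mem_Icc.mp hn).1 x
          have h2 : (m * ‖x‖) ^ 2 ≤ ‖(T ^ n) x‖ ^ 2 :=
            pow_le_pow_left₀ (by positivity) h' 2
          nlinarith
  calc m ^ 2 * ‖x‖ ^ 2 = (N:ℝ)⁻¹ * ((N:ℝ) * (m ^ 2 * ‖x‖ ^ 2)) := by field_simp
    _ ≤ (N:ℝ)⁻¹ * ∑ n ∈ Finset.Icc 1 N, ‖(T ^ n) x‖ ^ 2 := by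
        have := inv_nonneg.mpr hNpos.le
        gcongr

end STI

set_option maxHeartbeats 1000000 in
set_option synthInstance.maxHeartbeats 400000 in
theorem similar_to_isometry_of_two_sided_orbit_bounds
    {H : Type*} [NormedAddCommGroup H] [InnerProductSpace ℂ H] [CompleteSpace H]
    (T : H →L[ℂ] H) (m M : ℝ) (hm : 0 < m) (hmM : m ≤ M)
    (hbd : ∀ n : ℕ, 1 ≤ n → ∀ x : H,
      m * ‖x‖ ≤ ‖(T ^ n) x‖ ∧ ‖(T ^ n) x‖ ≤ M * ‖x‖) :
    ∃ L : H ≃L[ℂ] H, ∀ x : H, ‖L.symm (T (L x))‖ = ‖x‖ := by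
  classical
  have hM0 : (0:ℝ) ≤ M := hm.le.trans hmM
  have hbdM : ∀ n : ℕ, 1 ≤ n → ∀ x : H, ‖(T ^ n) x‖ ≤ M * ‖x‖ := fun n hn x => (hbd n hn x).2
  have hlow : ∀ n : ℕ, 1 ≤ n → ∀ x : H, m * ‖x‖ ≤ ‖(T ^ n) x‖ := fun n hn x => (hbd n hn x).1
  have hadd := STI.phi_add_right T hM0 hbdM
  have hsmul := STI.phi_smul_right T hM0 hbdM
  have hconj := STI.phi_conj T hM0 hbdM
  have hshift := STI.phi_shift T hM0 hbdM
  have hnorm := STI.phi_norm_le T hM0 hbdM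
  have hcoer := STI.phi_re_ge T hM0 hbdM hm.le hlow
  have hadd' : ∀ x y z : H, STI.phi T (x + y) z = STI.phi T x z + STI.phi T y z := by
    intro x y z
    rw [← hconj z, hadd, map_add, hconj, hconj]
  have hsmul' : ∀ (c : ℂ) (x z : H),
      STI.phi T (c • x) z = (starRingEnd ℂ) c * STI.phi T x z := by
    intro c x z
    rw [← hconj z, hsmul, map_mul, hconj]
  -- construct the positive operator S with ⟪S y, z⟫ = φ y z
  obtain ⟨S, hS⟩ : ∃ S : H →L[ℂ] H, ∀ y z : H, ⟪S y, z⟫ = STI.phi T y z := by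
    let f : H → (H →L[ℂ] ℂ) := fun y => LinearMap.mkContinuous
      { toFun := fun z => STI.phi T y z
        map_add' := hadd y
        map_smul' := fun c z => by simpa using hsmul y z c }
      (M ^ 2 * ‖y‖) (fun z => by simpa using hnorm y z)
    have hfn : ∀ y, ‖f y‖ ≤ M ^ 2 * ‖y‖ := fun y =>
      LinearMap.mkContinuous_norm_le _ (by positivity) _
    let S0 : H → H := fun y => (InnerProductSpace.toDual ℂ H).symm (f y)
    have hS0 : ∀ y z, ⟪S0 y, z⟫ = STI.phi T y z := fun y z =>
      InnerProductSpace.toDual_symm_apply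
    refine ⟨LinearMap.mkContinuous
      { toFun := S0
        map_add' := fun y y' => ext_inner_right ℂ fun z => by
          rw [hS0, inner_add_left, hS0, hS0, hadd']
        map_smul' := fun c y => ext_inner_right ℂ fun z => by
          rw [RingHom.id_apply, hS0, inner_smul_left, hS0, hsmul'] }
      (M ^ 2) (fun y => ?_), hS0⟩
    calc ‖S0 y‖ = ‖f y‖ := LinearIsometryEquiv.norm_map _ _
      _ ≤ M ^ 2 * ‖y‖ := hfn y
  -- S is self-adjoint and positive
  have hSsym : (S : H →ₗ[ℂ] H).IsSymmetric := by
    intro y z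
    rw [ContinuousLinearMap.coe_coe, hS, ← inner_conj_symm y (S z), hS, hconj]
  have hSsa : IsSelfAdjoint S := ContinuousLinearMap.isSelfAdjoint_iff_isSymmetric.mpr hSsym
  have hSpos : S.IsPositive := by
    refine ⟨hSsym, fun x => ?_⟩
    rw [ContinuousLinearMap.reApplyInnerSelf_apply, hS, RCLike.re_to_complex]
    have := hcoer x
    nlinarith [sq_nonneg m, sq_nonneg ‖x‖, sq_nonneg (m * ‖x‖)]
  have hSnn : (0 : H →L[ℂ] H) ≤ S := (ContinuousLinearMap.nonneg_iff_isPositive S).mpr hSpos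
  -- square root
  set R := CFC.sqrt S with hRdef
  have hR2 : R * R = S := by
    have := CFC.sq_sqrt S hSnn
    rwa [pow_two] at this
  have hRsa : IsSelfAdjoint R := IsSelfAdjoint.of_nonneg (CFC.sqrt_nonneg S)
  have hRsym : (R : H →ₗ[ℂ] H).IsSymmetric :=
    ContinuousLinearMap.isSelfAdjoint_iff_isSymmetric.mp hRsa
  have hRR : ∀ b : H, R (R b) = S b := fun b => by
    rw [← ContinuousLinearMap.mul_apply, hR2]
  have hkey : ∀ a b : H, ⟪R a, R b⟫ = STI.phi T a b := by
    intro a b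
    have h1 : ⟪R a, R b⟫ = ⟪a, R (R b)⟫ := hRsym a (R b)
    rw [h1, hRR, ← inner_conj_symm a (S b), hS, hconj]
  have hRnorm : ∀ a : H, ‖R a‖ ^ 2 = (STI.phi T a a).re := by
    intro a
    rw [← hkey a a]
    have := @inner_self_eq_norm_sq ℂ _ _ _ _ (R a)
    rw [RCLike.re_to_complex] at this
    linarith
  have hRlow : ∀ a : H, m * ‖a‖ ≤ ‖R a‖ := by
    intro a
    have h1 : m ^ 2 * ‖a‖ ^ 2 ≤ ‖R a‖ ^ 2 := by rw [hRnorm]; exact hcoer a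
    calc m * ‖a‖ = Real.sqrt ((m * ‖a‖) ^ 2) := (Real.sqrt_sq (by positivity)).symm
      _ ≤ Real.sqrt (‖R a‖ ^ 2) := Real.sqrt_le_sqrt (by nlinarith)
      _ = ‖R a‖ := Real.sqrt_sq (norm_nonneg _)
  -- R is bijective
  have hker : LinearMap.ker (R : H →ₗ[ℂ] H) = ⊥ := by
    rw [LinearMap.ker_eq_bot']
    intro x hx
    have := hRlow x
    rw [ContinuousLinearMap.coe_coe] at hx
    rw [hx, norm_zero] at this
    have : ‖x‖ ≤ 0 := by
      by_contra hc
      push_neg at hc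
      nlinarith
    simpa using le_antisymm this (norm_nonneg x)
  have hclosed : IsClosed ((LinearMap.range (R : H →ₗ[ℂ] H) : Submodule ℂ H) : Set H) := by
    have hK : ∀ x : H, ‖x‖ ≤ ((Real.toNNReal m)⁻¹ : NNReal) * ‖R x‖ := by
      intro x
      have h1 := (le_div_iff₀' hm).mpr (hRlow x)
      have h2 : (((Real.toNNReal m)⁻¹ : NNReal) : ℝ) = m⁻¹ := by
        rw [NNReal.coe_inv, Real.coe_toNNReal _ hm.le]
      rw [h2]
      simpa [div_eq_inv_mul] using h1
    have := (ContinuousLinearMap.antilipschitz_of_bound R hK).isClosed_range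
      R.uniformContinuous
    simpa [LinearMap.coe_range] using this
  have hrange : LinearMap.range (R : H →ₗ[ℂ] H) = ⊤ := by
    have hcs : CompleteSpace (LinearMap.range (R : H →ₗ[ℂ] H) : Submodule ℂ H) := hclosed.completeSpace_coe
    refine Submodule.orthogonal_eq_bot_iff.mp ?_
    rw [Submodule.eq_bot_iff]
    intro v hv
    have hmem : S v ∈ LinearMap.range (R : H →ₗ[ℂ] H) := ⟨R v, hRR v⟩
    have hv' : ⟪S v, v⟫ = 0 := (Submodule.mem_orthogonal _ v).mp hv (S v) hmem
    have h0 : (STI.phi T v v).re = 0 := by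
      rw [← hS v v, hv']
      simp
    have h1 := hcoer v
    rw [h0] at h1
    have h2 : ‖v‖ = 0 := by
      by_contra hc
      have hpos : 0 < ‖v‖ := lt_of_le_of_ne (norm_nonneg v) (Ne.symm hc)
      have := mul_pos (mul_pos hm hm) (mul_pos hpos hpos)
      nlinarith
    simpa using h2
  let E := ContinuousLinearEquiv.ofBijective R hker hrange
  have hEapp : ∀ y, E y = R y := fun y => by
    rw [ContinuousLinearEquiv.coeFn_ofBijective]
  refine ⟨E.symm, fun x => ?_⟩
  rw [ContinuousLinearEquiv.symm_symm]
  have hx : R (E.symm x) = x := by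
    rw [← hEapp]
    exact E.apply_symm_apply x
  have h2 : ‖R (T (E.symm x))‖ ^ 2 = ‖x‖ ^ 2 := by
    rw [hRnorm, hshift, ← hRnorm, hx]
  rw [hEapp]
  calc ‖R (T (E.symm x))‖ = Real.sqrt (‖R (T (E.symm x))‖ ^ 2) :=
        (Real.sqrt_sq (norm_nonneg _)).symm
    _ = Real.sqrt (‖x‖ ^ 2) := by rw [h2]
    _ = ‖x‖ := Real.sqrt_sq (norm_nonneg _)
end

section
/- Let T be a bounded linear operator on a complex Hilbert space H. Suppose there exist constants 0 < m ≤ M such that m²‖x‖² ≤ (1/N)·Σ_{n=0}^{N-1} ‖T^n x‖² ≤ M²‖x‖² for every N ≥ 1 and every x ∈ H. Then T is similar to an isometry. -/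
open scoped ComplexInnerProductSpace
open Filter ContinuousLinearMap

set_option maxHeartbeats 1000000
set_option synthInstance.maxHeartbeats 1000000

theorem aux_exists_similar {H : Type*} [NormedAddCommGroup H] [InnerProductSpace ℂ H]
    [CompleteSpace H] (T : H →L[ℂ] H) (m C : ℝ) (hm : 0 < m)
    (B : H → H → ℂ)
    (hadd : ∀ x y z : H, B x (y + z) = B x y + B x z)
    (hsmul : ∀ (a : ℂ) (x y : H), B x (a • y) = a * B x y)
    (hconj : ∀ x y : H, B y x = starRingEnd ℂ (B x y))
    (hbound : ∀ x y : H, ‖B x y‖ ≤ C * (‖x‖ * ‖y‖))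
    (hcoer : ∀ x : H, m ^ 2 * ‖x‖ ^ 2 ≤ (B x x).re)
    (hinv : ∀ x : H, B (T x) (T x) = B x x) :
    ∃ L : H ≃L[ℂ] H, ∀ x : H, ‖L.symm (T (L x))‖ = ‖x‖ := by
  classical
  -- B is conjugate linear in the first slot
  have hadd1 : ∀ x x' y : H, B (x + x') y = B x y + B x' y := by
    intro x x' y
    rw [hconj y (x + x'), hadd, map_add, ← hconj y x, ← hconj y x']
  have hsmul1 : ∀ (a : ℂ) (x y : H), B (a • x) y = starRingEnd ℂ a * B x y := by
    intro a x y
    rw [hconj y (a • x), hsmul, map_mul, ← hconj y x]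
  -- the functional y ↦ B x y
  let f : H → (H →L[ℂ] ℂ) := fun x =>
    LinearMap.mkContinuous
      { toFun := fun y => B x y
        map_add' := hadd x
        map_smul' := fun a y => by simpa using hsmul a x y }
      (C * ‖x‖)
      (fun y => by simpa [mul_assoc] using hbound x y)
  have hf : ∀ x y : H, f x y = B x y := fun x y => rfl
  let S₀ : H → H := fun x => (InnerProductSpace.toDual ℂ H).symm (f x)
  have hS₀ : ∀ x y : H, ⟪S₀ x, y⟫ = B x y := fun x y => InnerProductSpace.toDual_symm_apply
  have hS₀add : ∀ x x' : H, S₀ (x + x') = S₀ x + S₀ x' := by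
    intro x x'
    refine ext_inner_right ℂ fun v => ?_
    rw [hS₀, inner_add_left, hS₀, hS₀, hadd1]
  have hS₀smul : ∀ (a : ℂ) (x : H), S₀ (a • x) = a • S₀ x := by
    intro a x
    refine ext_inner_right ℂ fun v => ?_
    rw [hS₀, inner_smul_left, hS₀, hsmul1]
  have hS₀bound : ∀ x : H, ‖S₀ x‖ ≤ max C 0 * ‖x‖ := by
    intro x
    have h1 : ‖S₀ x‖ = ‖f x‖ := (InnerProductSpace.toDual ℂ H).symm.norm_map _
    have h2 : ‖f x‖ ≤ max (C * ‖x‖) 0 := LinearMap.mkContinuous_norm_le' _ _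
    refine h1.le.trans (h2.trans ?_)
    rcases le_total C 0 with hC | hC
    · have : C * ‖x‖ ≤ 0 := mul_nonpos_of_nonpos_of_nonneg hC (norm_nonneg x)
      simp [max_eq_right this, max_eq_right hC]
    · have : 0 ≤ C * ‖x‖ := mul_nonneg hC (norm_nonneg x)
      rw [max_eq_left this, max_eq_left hC]
  let S : H →L[ℂ] H := LinearMap.mkContinuous
    { toFun := S₀, map_add' := hS₀add, map_smul' := fun a x => by simpa using hS₀smul a x }
    (max C 0) hS₀bound
  have hS : ∀ x y : H, ⟪S x, y⟫ = B x y := hS₀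
  -- S is self-adjoint
  have hSsa : IsSelfAdjoint S := by
    rw [ContinuousLinearMap.isSelfAdjoint_iff_isSymmetric]
    intro x y
    simp only [ContinuousLinearMap.coe_coe]
    rw [hS, ← inner_conj_symm, hS, ← hconj]
  have hSre : ∀ x : H, (⟪S x, x⟫).re = (B x x).re := fun x => by rw [hS]
  -- S is positive and invertible
  have hSpos : S.IsPositive := by
    refine ⟨ContinuousLinearMap.isSelfAdjoint_iff_isSymmetric.mp hSsa, fun x => ?_⟩
    have h1 := hcoer x
    have h2 : (0:ℝ) ≤ m ^ 2 * ‖x‖ ^ 2 := by positivity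
    have h3 := h2.trans h1
    rw [← hSre x] at h3
    simpa [ContinuousLinearMap.reApplyInnerSelf_apply, RCLike.re_to_complex] using h3
  have hSnn : 0 ≤ S := (ContinuousLinearMap.nonneg_iff_isPositive S).mpr hSpos
  have hSunit : IsUnit S := by
    refine isUnit_of_forall_le_norm_inner_map S (c := ⟨m ^ 2, by positivity⟩)
      (NNReal.coe_pos.mp (pow_pos hm 2)) fun x => ?_
    have h1 := hcoer x
    have h2 : (B x x).re ≤ ‖⟪S x, x⟫‖ := by
      rw [← hSre x]
      exact (le_abs_self _).trans (Complex.abs_re_le_norm _)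
    calc ‖x‖ ^ 2 * (⟨m ^ 2, by positivity⟩ : NNReal) = m ^ 2 * ‖x‖ ^ 2 := by
          simp [mul_comm]
      _ ≤ ‖⟪S x, x⟫‖ := h1.trans h2
  -- the square root of S
  set R : H →L[ℂ] H := CFC.sqrt S with hRdef
  have hR0 : 0 ≤ R := CFC.sqrt_nonneg S
  have hRsq : R * R = S := CFC.sqrt_mul_sqrt_self S hSnn
  have hRsa : IsSelfAdjoint R :=
    ((ContinuousLinearMap.nonneg_iff_isPositive R).mp hR0).isSelfAdjoint
  have hRsym : ∀ x y : H, ⟪R x, y⟫ = ⟪x, R y⟫ := by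
    intro x y
    have := (ContinuousLinearMap.isSelfAdjoint_iff_isSymmetric.mp hRsa) x y
    simpa using this
  have hRRS : ∀ x : H, R (R x) = S x := by
    intro x
    rw [← ContinuousLinearMap.mul_apply, hRsq]
  -- R is bijective
  have hSinj : Function.Injective S := (isUnit_iff_bijective.mp hSunit).1
  have hRinj : Function.Injective R := by
    intro a b hab
    have h0 : R (a - b) = 0 := by rw [map_sub, hab, sub_self]
    have h1 : S (a - b) = 0 := by rw [← hRRS, h0, map_zero]
    have h2 := hcoer (a - b)
    rw [← hSre, h1] at h2
    rw [inner_zero_left] at h2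
    simp only [Complex.zero_re] at h2
    have h3 : ‖a - b‖ ^ 2 ≤ 0 := by nlinarith [pow_pos hm 2, sq_nonneg ‖a - b‖]
    have h4 : a - b = 0 := by
      have := norm_nonneg (a - b)
      have : ‖a - b‖ = 0 := by nlinarith
      exact norm_eq_zero.mp this
    exact sub_eq_zero.mp h4
  have hRsurj : Function.Surjective R := by
    intro y
    obtain ⟨z, hz⟩ := (isUnit_iff_bijective.mp hSunit).2 y
    exact ⟨R z, by rw [hRRS, hz]⟩
  -- the equivalence
  let E : H ≃L[ℂ] H := ContinuousLinearEquiv.ofBijective R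
    ((LinearMap.ker_eq_bot (f := (R : H →ₗ[ℂ] H))).mpr hRinj)
    (LinearMap.range_eq_top.mpr hRsurj)
  have hE : ∀ z : H, E z = R z := fun z => rfl
  refine ⟨E.symm, fun x => ?_⟩
  rw [ContinuousLinearEquiv.symm_symm]
  set u : H := E.symm x with hu
  have hux : R u = x := by rw [← hE, hu, E.apply_symm_apply]
  have key : ∀ v : H, ‖R v‖ ^ 2 = (B v v).re := by
    intro v
    have h1 : (⟪R v, R v⟫).re = ‖R v‖ ^ 2 := by
      have := inner_self_eq_norm_sq (𝕜 := ℂ) (R v)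
      simpa [RCLike.re_to_complex] using this
    have h2 : ⟪R v, R v⟫ = ⟪v, S v⟫ := by rw [hRsym v (R v), hRRS]
    have h3 : ⟪v, S v⟫ = starRingEnd ℂ (B v v) := by
      rw [← inner_conj_symm, hS]
    rw [← h1, h2, h3, Complex.conj_re]
  have hgoal : ‖E (T u)‖ ^ 2 = ‖x‖ ^ 2 := by
    rw [hE, key (T u), hinv u, ← key u, hux]
  have h1 : (0:ℝ) ≤ ‖E (T u)‖ := norm_nonneg _
  have h2 : (0:ℝ) ≤ ‖x‖ := norm_nonneg _
  nlinarith [hgoal, h1, h2]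




noncomputable def cesC {H : Type*} [NormedAddCommGroup H] [InnerProductSpace ℂ H]
    (T : H →L[ℂ] H) (x y : H) (k : ℕ) : ℂ :=
  ((k : ℕ) : ℂ)⁻¹ * ∑ n ∈ Finset.range k, ⟪(T ^ n) x, (T ^ n) y⟫

noncomputable def cesD {H : Type*} [NormedAddCommGroup H] [InnerProductSpace ℂ H]
    (T : H →L[ℂ] H) (x y : H) (N : ℕ) : ℂ :=
  ((N : ℕ) : ℂ)⁻¹ * ∑ k ∈ Finset.range N, cesC T x y (k + 1)

section lemmas
variable {H : Type*} [NormedAddCommGroup H] [InnerProductSpace ℂ H] (T : H →L[ℂ] H)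

-- diagonal values are real
lemma cesC_diag (x : H) (k : ℕ) :
    cesC T x x k = ((((k : ℕ) : ℝ)⁻¹ * ∑ n ∈ Finset.range k, ‖(T ^ n) x‖ ^ 2 : ℝ) : ℂ) := by
  simp only [cesC, inner_self_eq_norm_sq_to_K]
  push_cast
  rfl

-- norm bound on cesC from the Cesàro hypothesis
lemma cesC_bound (M : ℝ) (hM : 0 ≤ M)
    (hub : ∀ (z : H) (k : ℕ), 1 ≤ k →
      ((k : ℕ) : ℝ)⁻¹ * ∑ n ∈ Finset.range k, ‖(T ^ n) z‖ ^ 2 ≤ M ^ 2 * ‖z‖ ^ 2)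
    (x y : H) (k : ℕ) : ‖cesC T x y k‖ ≤ M ^ 2 * (‖x‖ * ‖y‖) := by
  rcases Nat.eq_zero_or_pos k with hk | hk
  · subst hk; simp [cesC]; positivity
  have hk1 : (1:ℝ) ≤ (k:ℝ) := by exact_mod_cast hk
  have hkpos : (0:ℝ) < (k:ℝ) := by linarith
  have h1 : ‖cesC T x y k‖ ≤ ((k:ℝ))⁻¹ * ∑ n ∈ Finset.range k, ‖(T ^ n) x‖ * ‖(T ^ n) y‖ := by
    rw [cesC, norm_mul]
    have : ‖(((k:ℕ)):ℂ)⁻¹‖ = ((k:ℝ))⁻¹ := by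
      rw [norm_inv]; norm_num
    rw [this]
    gcongr
    calc ‖∑ n ∈ Finset.range k, ⟪(T ^ n) x, (T ^ n) y⟫‖
        ≤ ∑ n ∈ Finset.range k, ‖⟪(T ^ n) x, (T ^ n) y⟫‖ := norm_sum_le _ _
      _ ≤ ∑ n ∈ Finset.range k, ‖(T ^ n) x‖ * ‖(T ^ n) y‖ := by
          gcongr with n hn; exact norm_inner_le_norm _ _
  have h2 : (∑ n ∈ Finset.range k, ‖(T ^ n) x‖ * ‖(T ^ n) y‖) ^ 2
      ≤ (∑ n ∈ Finset.range k, ‖(T ^ n) x‖ ^ 2) * (∑ n ∈ Finset.range k, ‖(T ^ n) y‖ ^ 2) :=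
    Finset.sum_mul_sq_le_sq_mul_sq _ _ _
  have h3 := hub x k hk
  have h4 := hub y k hk
  have h5 : (((k:ℝ))⁻¹ * ∑ n ∈ Finset.range k, ‖(T ^ n) x‖ * ‖(T ^ n) y‖) ^ 2
      ≤ (M ^ 2 * ‖x‖ ^ 2) * (M ^ 2 * ‖y‖ ^ 2) := by
    have hx0 : (0:ℝ) ≤ ∑ n ∈ Finset.range k, ‖(T ^ n) x‖ ^ 2 :=
      Finset.sum_nonneg fun n _ => sq_nonneg _
    have hy0 : (0:ℝ) ≤ ∑ n ∈ Finset.range k, ‖(T ^ n) y‖ ^ 2 :=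
      Finset.sum_nonneg fun n _ => sq_nonneg _
    have hinv0 : (0:ℝ) ≤ ((k:ℝ))⁻¹ := by positivity
    calc (((k:ℝ))⁻¹ * ∑ n ∈ Finset.range k, ‖(T ^ n) x‖ * ‖(T ^ n) y‖) ^ 2
        = ((k:ℝ))⁻¹ * ((k:ℝ))⁻¹ * (∑ n ∈ Finset.range k, ‖(T ^ n) x‖ * ‖(T ^ n) y‖) ^ 2 := by
          ring
      _ ≤ ((k:ℝ))⁻¹ * ((k:ℝ))⁻¹ *
            ((∑ n ∈ Finset.range k, ‖(T ^ n) x‖ ^ 2) * (∑ n ∈ Finset.range k, ‖(T ^ n) y‖ ^ 2)) := by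
          gcongr
      _ = (((k:ℝ))⁻¹ * ∑ n ∈ Finset.range k, ‖(T ^ n) x‖ ^ 2) *
            (((k:ℝ))⁻¹ * ∑ n ∈ Finset.range k, ‖(T ^ n) y‖ ^ 2) := by ring
      _ ≤ (M ^ 2 * ‖x‖ ^ 2) * (M ^ 2 * ‖y‖ ^ 2) := by
          apply mul_le_mul h3 h4 (by positivity) (by positivity)
  have h6 : (0:ℝ) ≤ ((k:ℝ))⁻¹ * ∑ n ∈ Finset.range k, ‖(T ^ n) x‖ * ‖(T ^ n) y‖ := by
    apply mul_nonneg (by positivity)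
    exact Finset.sum_nonneg fun n _ => mul_nonneg (norm_nonneg _) (norm_nonneg _)
  have h7 : ((k:ℝ))⁻¹ * ∑ n ∈ Finset.range k, ‖(T ^ n) x‖ * ‖(T ^ n) y‖ ≤ M ^ 2 * (‖x‖ * ‖y‖) := by
    have hs : (0:ℝ) ≤ M ^ 2 * (‖x‖ * ‖y‖) := by positivity
    nlinarith [h5, h6, hs]
  exact h1.trans h7

lemma cesD_bound (M : ℝ) (x y : H) (C : ℝ) (hC : 0 ≤ C)
    (hc : ∀ k : ℕ, ‖cesC T x y k‖ ≤ C) (N : ℕ) : ‖cesD T x y N‖ ≤ C := by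
  rcases Nat.eq_zero_or_pos N with hN | hN
  · subst hN; simpa [cesD] using hC
  have hNpos : (0:ℝ) < (N:ℝ) := by exact_mod_cast hN
  rw [cesD, norm_mul]
  have h1 : ‖(((N:ℕ)):ℂ)⁻¹‖ = ((N:ℝ))⁻¹ := by rw [norm_inv]; norm_num
  rw [h1]
  calc ((N:ℝ))⁻¹ * ‖∑ k ∈ Finset.range N, cesC T x y (k + 1)‖
      ≤ ((N:ℝ))⁻¹ * ∑ k ∈ Finset.range N, ‖cesC T x y (k + 1)‖ := by
        gcongr; exact norm_sum_le _ _
    _ ≤ ((N:ℝ))⁻¹ * ∑ k ∈ Finset.range N, C := by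
        gcongr with k hk; exact hc (k + 1)
    _ = ((N:ℝ))⁻¹ * ((N:ℝ) * C) := by rw [Finset.sum_const, Finset.card_range]; ring_nf
    _ = C := by field_simp

end lemmas

section invariance
variable {H : Type*} [NormedAddCommGroup H] [InnerProductSpace ℂ H] (T : H →L[ℂ] H)

lemma cesD_shift_tendsto (x : H) (C : ℝ) (hC : 0 ≤ C)
    (hc : ∀ k : ℕ, ‖cesC T x x k‖ ≤ C) :
    Filter.Tendsto (fun N : ℕ => cesD T (T x) (T x) N - cesD T x x N)
      Filter.atTop (nhds 0) := by
  set b : ℕ → ℂ := fun n => (⟪(T ^ n) x, (T ^ n) x⟫ : ℂ) with hbdef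
  set cc : ℕ → ℂ := fun k => cesC T x x k with hccdef
  set ht : ℕ → ℂ := fun k => ((k + 1 : ℕ) : ℂ)⁻¹ * (cc (k + 2) - b 0) with htdef
  have hb : ∀ n : ℕ, (⟪(T ^ n) (T x), (T ^ n) (T x)⟫ : ℂ) = b (n + 1) := by
    intro n
    have h : (T ^ (n + 1)) x = (T ^ n) (T x) := by
      rw [pow_succ, ContinuousLinearMap.mul_apply]
    simp only [hbdef, h]
  have hcc' : ∀ k : ℕ, cesC T (T x) (T x) (k + 1)
      = cc (k + 2) + ((k + 1 : ℕ) : ℂ)⁻¹ * (cc (k + 2) - b 0) := by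
    intro k
    have e1 : ((k + 1 : ℕ) : ℂ) ≠ 0 := Nat.cast_ne_zero.mpr (by omega)
    have e2 : ((k + 2 : ℕ) : ℂ) ≠ 0 := Nat.cast_ne_zero.mpr (by omega)
    have hs : ∑ n ∈ Finset.range (k + 1), b (n + 1)
        = ∑ n ∈ Finset.range (k + 2), b n - b 0 := by
      rw [Finset.sum_range_succ' b (k + 1)]
      ring
    have h1 : cesC T (T x) (T x) (k + 1)
        = ((k + 1 : ℕ) : ℂ)⁻¹ * (∑ n ∈ Finset.range (k + 2), b n - b 0) := by
      rw [cesC, Finset.sum_congr rfl fun n _ => hb n, hs]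
    have h2 : cc (k + 2) = ((k + 2 : ℕ) : ℂ)⁻¹ * ∑ n ∈ Finset.range (k + 2), b n := rfl
    rw [h1, h2]
    have e3 : ((k + 2 : ℕ) : ℂ) = ((k + 1 : ℕ) : ℂ) + 1 := by push_cast; ring
    have key : ∀ (S b0 K : ℂ), K ≠ 0 → K + 1 ≠ 0 →
        K⁻¹ * (S - b0) = (K + 1)⁻¹ * S + K⁻¹ * ((K + 1)⁻¹ * S - b0) := by
      intro S b0 K h1 h2
      field_simp
      ring
    rw [e3]
    exact key _ _ _ e1 (e3 ▸ e2)
  have hdd : ∀ N : ℕ, cesD T (T x) (T x) N - cesD T x x N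
      = ((N : ℕ) : ℂ)⁻¹ * (cc (N + 1) - cc 1)
        + ((N : ℕ) : ℂ)⁻¹ * ∑ k ∈ Finset.range N, ht k := by
    intro N
    have htel : ∑ k ∈ Finset.range N, (cc (k + 2) - cc (k + 1)) = cc (N + 1) - cc 1 := by
      simpa using Finset.sum_range_sub (fun k => cc (k + 1)) N
    have h1 : ∑ k ∈ Finset.range N, cesC T (T x) (T x) (k + 1)
        = ∑ k ∈ Finset.range N, (cc (k + 2) + ht k) :=
      Finset.sum_congr rfl fun k _ => hcc' k
    have h2 : ∑ k ∈ Finset.range N, (cc (k + 2) + ht k)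
        = (cc (N + 1) - cc 1) + ∑ k ∈ Finset.range N, cc (k + 1)
          + ∑ k ∈ Finset.range N, ht k := by
      rw [← htel, ← Finset.sum_add_distrib, ← Finset.sum_add_distrib]
      exact Finset.sum_congr rfl fun k _ => by ring
    simp only [cesD]
    rw [h1, h2]
    ring
  have hnc : ∀ N : ℕ, ‖((N : ℕ) : ℂ)⁻¹‖ = ((N : ℕ) : ℝ)⁻¹ := by
    intro N; rw [norm_inv]; norm_num
  have t1 : Filter.Tendsto (fun N : ℕ => ((N : ℕ) : ℂ)⁻¹ * (cc (N + 1) - cc 1))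
      Filter.atTop (nhds 0) := by
    apply squeeze_zero_norm (a := fun N : ℕ => ((N : ℕ) : ℝ)⁻¹ * (2 * C))
    · intro N
      rw [norm_mul, hnc]
      gcongr
      calc ‖cc (N + 1) - cc 1‖ ≤ ‖cc (N + 1)‖ + ‖cc 1‖ := norm_sub_le _ _
        _ ≤ C + C := add_le_add (hc _) (hc _)
        _ = 2 * C := by ring
    · simpa using (tendsto_inv_atTop_nhds_zero_nat (𝕜 := ℝ)).mul_const (2 * C)
  have t2pre : Filter.Tendsto ht Filter.atTop (nhds 0) := by
    apply squeeze_zero_norm (a := fun k : ℕ => ((k : ℝ) + 1)⁻¹ * (C + ‖b 0‖))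
    · intro k
      rw [htdef]
      simp only
      rw [norm_mul, hnc]
      have : (((k + 1 : ℕ) : ℝ))⁻¹ = ((k : ℝ) + 1)⁻¹ := by push_cast; ring
      rw [this]
      gcongr
      calc ‖cc (k + 2) - b 0‖ ≤ ‖cc (k + 2)‖ + ‖b 0‖ := norm_sub_le _ _
        _ ≤ C + ‖b 0‖ := by gcongr; exact hc _
    · have h0 : Filter.Tendsto (fun k : ℕ => ((k : ℝ) + 1)⁻¹) Filter.atTop (nhds 0) := by
        simpa only [one_div] using tendsto_one_div_add_atTop_nhds_zero_nat (𝕜 := ℝ)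
      simpa using h0.mul_const (C + ‖b 0‖)
  have t2 : Filter.Tendsto (fun N : ℕ => ((N : ℕ) : ℂ)⁻¹ * ∑ k ∈ Finset.range N, ht k)
      Filter.atTop (nhds 0) := by
    have h1 := t2pre.cesaro_smul
    have h2 : (fun N : ℕ => ((N : ℕ) : ℂ)⁻¹ * ∑ k ∈ Finset.range N, ht k)
        = fun N : ℕ => ((N : ℕ) : ℝ)⁻¹ • ∑ k ∈ Finset.range N, ht k := by
      funext N
      rw [Complex.real_smul]
      push_cast
      ring
    rw [h2]
    simpa using h1
  have := t1.add t2
  rw [show (0:ℂ) + 0 = 0 by ring] at this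
  exact this.congr fun N => (hdd N).symm

end invariance




theorem similar_to_isometry_of_cesaro_bounds
    {H : Type*} [NormedAddCommGroup H] [InnerProductSpace ℂ H] [CompleteSpace H]
    (T : H →L[ℂ] H) (m M : ℝ) (hm : 0 < m) (hmM : m ≤ M)
    (hbd : ∀ N : ℕ, 1 ≤ N → ∀ x : H,
      m ^ 2 * ‖x‖ ^ 2 ≤ (1 / (N : ℝ)) * ∑ n ∈ Finset.range N, ‖(T ^ n) x‖ ^ 2 ∧
      (1 / (N : ℝ)) * ∑ n ∈ Finset.range N, ‖(T ^ n) x‖ ^ 2 ≤ M ^ 2 * ‖x‖ ^ 2) :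
    ∃ L : H ≃L[ℂ] H, ∀ x : H, ‖L.symm (T (L x))‖ = ‖x‖ := by
  classical
  have hM0 : (0:ℝ) ≤ M := hm.le.trans hmM
  have hub : ∀ (z : H) (k : ℕ), 1 ≤ k →
      ((k : ℕ) : ℝ)⁻¹ * ∑ n ∈ Finset.range k, ‖(T ^ n) z‖ ^ 2 ≤ M ^ 2 * ‖z‖ ^ 2 := by
    intro z k hk
    have := (hbd k hk z).2
    rwa [one_div] at this
  have hlb : ∀ (z : H) (k : ℕ), 1 ≤ k →
      m ^ 2 * ‖z‖ ^ 2 ≤ ((k : ℕ) : ℝ)⁻¹ * ∑ n ∈ Finset.range k, ‖(T ^ n) z‖ ^ 2 := by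
    intro z k hk
    have := (hbd k hk z).1
    rwa [one_div] at this
  have hC : ∀ (x y : H) (k : ℕ), ‖cesC T x y k‖ ≤ M ^ 2 * (‖x‖ * ‖y‖) :=
    cesC_bound T M hM0 hub
  have hD : ∀ (x y : H) (N : ℕ), ‖cesD T x y N‖ ≤ M ^ 2 * (‖x‖ * ‖y‖) := fun x y N =>
    cesD_bound T M x y _ (by positivity) (hC x y) N
  -- the ultrafilter
  set F : Filter ℕ := ↑(Filter.hyperfilter ℕ) with hF
  haveI hFne : F.NeBot := (Filter.hyperfilter ℕ).neBot
  have hFle : F ≤ Filter.atTop := by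
    rw [hF, ← Nat.cofinite_eq_atTop]
    exact Filter.hyperfilter_le_cofinite
  -- existence of limits along F
  have hex : ∀ x y : H, ∃ a : ℂ, Filter.Tendsto (cesD T x y) F (nhds a) := by
    intro x y
    have hmem : Metric.closedBall (0:ℂ) (M ^ 2 * (‖x‖ * ‖y‖)) ∈
        Ultrafilter.map (cesD T x y) (Filter.hyperfilter ℕ) := by
      refine Filter.mem_map.mpr (Filter.univ_mem' fun N => ?_)
      have h : dist (cesD T x y N) 0 ≤ M ^ 2 * (‖x‖ * ‖y‖) := by
        rw [dist_zero_right]; exact hD x y N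
      exact h
    obtain ⟨a, -, ha⟩ := (isCompact_closedBall (0:ℂ) (M ^ 2 * (‖x‖ * ‖y‖))).ultrafilter_le_nhds
      (Ultrafilter.map (cesD T x y) (Filter.hyperfilter ℕ)) (Filter.le_principal_iff.mpr hmem)
    exact ⟨a, ha⟩
  choose B hB using hex
  -- properties of B
  have hBadd : ∀ x y z : H, B x (y + z) = B x y + B x z := by
    intro x y z
    refine tendsto_nhds_unique (hB x (y + z)) (((hB x y).add (hB x z)).congr fun N => ?_)
    simp [cesD, cesC, map_add, inner_add_right, Finset.sum_add_distrib, mul_add]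
  have hBsmul : ∀ (a : ℂ) (x y : H), B x (a • y) = a * B x y := by
    intro a x y
    refine tendsto_nhds_unique (hB x (a • y)) (((hB x y).const_mul a).congr fun N => ?_)
    have h1 : ∀ k, cesC T x (a • y) k = a * cesC T x y k := by
      intro k
      simp only [cesC, map_smul, inner_smul_right, ← Finset.mul_sum]
      ring
    simp only [cesD, h1, ← Finset.mul_sum]
    ring
  have hBconj : ∀ x y : H, B y x = starRingEnd ℂ (B x y) := by
    intro x y
    have hcd : ∀ N, cesD T y x N = starRingEnd ℂ (cesD T x y N) := by
      intro N
      have h1 : ∀ k, cesC T y x k = starRingEnd ℂ (cesC T x y k) := by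
        intro k
        simp only [cesC, map_mul, map_sum, map_inv₀, map_natCast, inner_conj_symm]
      simp only [cesD, h1, map_mul, map_sum, map_inv₀, map_natCast]
    have h2 : Filter.Tendsto (fun N => starRingEnd ℂ (cesD T x y N)) F
        (nhds (starRingEnd ℂ (B x y))) :=
      ((Complex.continuous_conj).tendsto _).comp (hB x y)
    exact tendsto_nhds_unique (hB y x) (h2.congr fun N => (hcd N).symm)
  have hBbound : ∀ x y : H, ‖B x y‖ ≤ M ^ 2 * (‖x‖ * ‖y‖) := by
    intro x y
    exact le_of_tendsto (hB x y).norm (Filter.Eventually.of_forall fun N => hD x y N)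
  have hBcoer : ∀ x : H, m ^ 2 * ‖x‖ ^ 2 ≤ (B x x).re := by
    intro x
    have hre : Filter.Tendsto (fun N => (cesD T x x N).re) F (nhds (B x x).re) :=
      (Complex.continuous_re.tendsto _).comp (hB x x)
    refine ge_of_tendsto hre (Filter.Eventually.filter_mono hFle ?_)
    refine Filter.eventually_atTop.mpr ⟨1, fun N hN => ?_⟩
    have hNpos : (0:ℝ) < (N:ℝ) := by exact_mod_cast hN
    have hdre : cesD T x x N = ((((N : ℕ) : ℝ)⁻¹ *
        ∑ k ∈ Finset.range N, (((k + 1 : ℕ) : ℝ)⁻¹ *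
          ∑ n ∈ Finset.range (k + 1), ‖(T ^ n) x‖ ^ 2) : ℝ) : ℂ) := by
      simp only [cesD, cesC_diag]
      push_cast
      rfl
    rw [hdre, Complex.ofReal_re]
    have hterm : ∀ k ∈ Finset.range N, m ^ 2 * ‖x‖ ^ 2 ≤
        ((k + 1 : ℕ) : ℝ)⁻¹ * ∑ n ∈ Finset.range (k + 1), ‖(T ^ n) x‖ ^ 2 :=
      fun k _ => hlb x (k + 1) (by omega)
    have hsum : (N : ℝ) * (m ^ 2 * ‖x‖ ^ 2) ≤
        ∑ k ∈ Finset.range N, (((k + 1 : ℕ) : ℝ)⁻¹ *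
          ∑ n ∈ Finset.range (k + 1), ‖(T ^ n) x‖ ^ 2) := by
      calc (N : ℝ) * (m ^ 2 * ‖x‖ ^ 2)
          = ∑ _k ∈ Finset.range N, m ^ 2 * ‖x‖ ^ 2 := by
            rw [Finset.sum_const, Finset.card_range, nsmul_eq_mul]
        _ ≤ _ := Finset.sum_le_sum hterm
    calc m ^ 2 * ‖x‖ ^ 2 = ((N : ℕ) : ℝ)⁻¹ * ((N : ℝ) * (m ^ 2 * ‖x‖ ^ 2)) := by
          field_simp
      _ ≤ _ := by
          have h0 : (0:ℝ) ≤ ((N : ℕ) : ℝ)⁻¹ := by positivity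
          exact mul_le_mul_of_nonneg_left hsum h0
  have hBinv : ∀ x : H, B (T x) (T x) = B x x := by
    intro x
    have h0 := cesD_shift_tendsto T x (M ^ 2 * (‖x‖ * ‖x‖)) (by positivity) (hC x x)
    have h1 : Filter.Tendsto (fun N => cesD T (T x) (T x) N - cesD T x x N) F (nhds 0) :=
      h0.mono_left hFle
    have h2 := (hB (T x) (T x)).sub (hB x x)
    exact sub_eq_zero.mp (tendsto_nhds_unique h2 h1)
  exact aux_exists_similar T m (M ^ 2) hm B hBadd hBsmul hBconj hBbound hBcoer hBinv
end

section
/- Let T be a bounded linear operator on a complex Hilbert space H. Suppose there exist positive constants m, M and an operator K ∈ B(H) with closed range and finite-dimensional kernel such that m‖Kx‖² ≤ (1/N)·Σ_{n=0}^{N-1} ‖T^n x‖² ≤ M‖x‖² for every N ≥ 1 and every x ∈ H, and every eigenvalue of T (if any) has modulus one. Then T is similar to an isometry. -/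
open Filter Finset ContinuousLinearMap

noncomputable section CesAux

variable {H : Type*} [NormedAddCommGroup H] [InnerProductSpace ℂ H]

local notation "⟪" x ", " y "⟫" => @inner ℂ _ _ x y

/-- Cesàro inner averages. -/
def phiC (T : H →L[ℂ] H) (x y : H) (n : ℕ) : ℂ :=
  (n : ℂ)⁻¹ * ∑ k ∈ Finset.range n, ⟪(T ^ k) x, (T ^ k) y⟫

/-- Double Cesàro averages. -/
def psiC (T : H →L[ℂ] H) (x y : H) (N : ℕ) : ℂ :=
  (N : ℂ)⁻¹ * ∑ n ∈ Finset.range N, phiC T x y (n + 1)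

lemma phiC_conj (T : H →L[ℂ] H) (x y : H) (n : ℕ) :
    phiC T y x n = (starRingEnd ℂ) (phiC T x y n) := by
  simp [phiC, map_mul, map_sum, inner_conj_symm]

lemma psiC_conj (T : H →L[ℂ] H) (x y : H) (N : ℕ) :
    psiC T y x N = (starRingEnd ℂ) (psiC T x y N) := by
  simp only [psiC, map_mul, map_sum]
  rw [show ((starRingEnd ℂ) (N : ℂ)⁻¹) = (N : ℂ)⁻¹ by simp]
  congr 1
  exact Finset.sum_congr rfl fun n _ => phiC_conj T x y (n+1)

lemma psiC_add_right (T : H →L[ℂ] H) (x y z : H) (N : ℕ) :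
    psiC T x (y + z) N = psiC T x y N + psiC T x z N := by
  simp [psiC, phiC, inner_add_right, Finset.sum_add_distrib, mul_add]

lemma psiC_smul_right (T : H →L[ℂ] H) (x y : H) (c : ℂ) (N : ℕ) :
    psiC T x (c • y) N = c * psiC T x y N := by
  simp only [psiC, phiC, map_smul, inner_smul_right, ← Finset.mul_sum,
    Finset.mul_sum]
  refine Finset.sum_congr rfl fun n _ => Finset.sum_congr rfl fun k _ => ?_
  ring

end CesAux

section Bounds

variable {H : Type*} [NormedAddCommGroup H] [InnerProductSpace ℂ H]

local notation "⟪" x ", " y "⟫" => @inner ℂ _ _ x y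

lemma sum_sq_le' {M : ℝ} (T : H →L[ℂ] H)
    (hub : ∀ n : ℕ, 1 ≤ n → ∀ x : H,
      (1/(n:ℝ)) * ∑ k ∈ Finset.range n, ‖(T ^ k) x‖ ^ 2 ≤ M * ‖x‖ ^ 2)
    {n : ℕ} (hn : 1 ≤ n) (x : H) :
    ∑ k ∈ Finset.range n, ‖(T ^ k) x‖ ^ 2 ≤ n * (M * ‖x‖ ^ 2) := by
  have h := hub n hn x
  have hn' : (0:ℝ) < n := by exact_mod_cast hn
  rw [one_div] at h
  calc ∑ k ∈ Finset.range n, ‖(T ^ k) x‖ ^ 2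
      = n * ((n:ℝ)⁻¹ * ∑ k ∈ Finset.range n, ‖(T ^ k) x‖ ^ 2) := by
        field_simp
    _ ≤ n * (M * ‖x‖ ^ 2) := by
        exact mul_le_mul_of_nonneg_left h hn'.le

lemma phiC_norm_le {M : ℝ} (T : H →L[ℂ] H) (hM : 0 ≤ M)
    (hub : ∀ n : ℕ, 1 ≤ n → ∀ x : H,
      (1/(n:ℝ)) * ∑ k ∈ Finset.range n, ‖(T ^ k) x‖ ^ 2 ≤ M * ‖x‖ ^ 2)
    {n : ℕ} (hn : 1 ≤ n) (x y : H) :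
    ‖phiC T x y n‖ ≤ M * (‖x‖ * ‖y‖) := by
  have hn' : (0:ℝ) < n := by exact_mod_cast hn
  have hsum : ‖∑ k ∈ Finset.range n, ⟪(T ^ k) x, (T ^ k) y⟫‖
      ≤ ∑ k ∈ Finset.range n, ‖(T ^ k) x‖ * ‖(T ^ k) y‖ :=
    (norm_sum_le _ _).trans (Finset.sum_le_sum fun k _ => norm_inner_le_norm _ _)
  have cs := Finset.sum_mul_sq_le_sq_mul_sq (Finset.range n)
    (fun k => ‖(T ^ k) x‖) (fun k => ‖(T ^ k) y‖)
  have hx := sum_sq_le' T hub hn x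
  have hy := sum_sq_le' T hub hn y
  have hab : (0:ℝ) ≤ ∑ k ∈ Finset.range n, ‖(T ^ k) x‖ * ‖(T ^ k) y‖ :=
    Finset.sum_nonneg fun k _ => mul_nonneg (norm_nonneg _) (norm_nonneg _)
  have hgoal : ∑ k ∈ Finset.range n, ‖(T ^ k) x‖ * ‖(T ^ k) y‖
      ≤ n * (M * (‖x‖ * ‖y‖)) := by
    have hx0 : (0:ℝ) ≤ ∑ k ∈ Finset.range n, ‖(T ^ k) x‖ ^ 2 :=
      Finset.sum_nonneg fun k _ => sq_nonneg _
    have hy0 : (0:ℝ) ≤ ∑ k ∈ Finset.range n, ‖(T ^ k) y‖ ^ 2 :=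
      Finset.sum_nonneg fun k _ => sq_nonneg _
    have h1 : (∑ k ∈ Finset.range n, ‖(T ^ k) x‖ * ‖(T ^ k) y‖) ^ 2
        ≤ (n * (M * (‖x‖ * ‖y‖))) ^ 2 := by
      calc (∑ k ∈ Finset.range n, ‖(T ^ k) x‖ * ‖(T ^ k) y‖) ^ 2
          ≤ (∑ k ∈ Finset.range n, ‖(T ^ k) x‖ ^ 2) *
            (∑ k ∈ Finset.range n, ‖(T ^ k) y‖ ^ 2) := cs
        _ ≤ (n * (M * ‖x‖ ^ 2)) * (n * (M * ‖y‖ ^ 2)) :=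
            mul_le_mul hx hy hy0 (by positivity)
        _ = (n * (M * (‖x‖ * ‖y‖))) ^ 2 := by ring
    have h2 : (0:ℝ) ≤ n * (M * (‖x‖ * ‖y‖)) := by positivity
    nlinarith [h1, hab, h2]
  have hnorm : ‖phiC T x y n‖
      = (n:ℝ)⁻¹ * ‖∑ k ∈ Finset.range n, ⟪(T ^ k) x, (T ^ k) y⟫‖ := by
    rw [phiC, norm_mul, norm_inv, Complex.norm_natCast]
  rw [hnorm]
  calc (n:ℝ)⁻¹ * ‖∑ k ∈ Finset.range n, ⟪(T ^ k) x, (T ^ k) y⟫‖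
      ≤ (n:ℝ)⁻¹ * (n * (M * (‖x‖ * ‖y‖))) := by
        exact mul_le_mul_of_nonneg_left (hsum.trans hgoal) (by positivity)
    _ = M * (‖x‖ * ‖y‖) := by field_simp

lemma psiC_norm_le {M : ℝ} (T : H →L[ℂ] H) (hM : 0 ≤ M)
    (hub : ∀ n : ℕ, 1 ≤ n → ∀ x : H,
      (1/(n:ℝ)) * ∑ k ∈ Finset.range n, ‖(T ^ k) x‖ ^ 2 ≤ M * ‖x‖ ^ 2)
    (N : ℕ) (x y : H) :
    ‖psiC T x y N‖ ≤ M * (‖x‖ * ‖y‖) := by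
  rcases Nat.eq_zero_or_pos N with h | h
  · subst h; simp [psiC]; positivity
  have hN' : (0:ℝ) < N := by exact_mod_cast h
  have : ‖psiC T x y N‖ ≤ (N:ℝ)⁻¹ * (N * (M * (‖x‖ * ‖y‖))) := by
    rw [psiC, norm_mul, norm_inv, Complex.norm_natCast]
    refine mul_le_mul_of_nonneg_left ?_ (by positivity)
    refine (norm_sum_le _ _).trans ?_
    have := Finset.sum_le_sum (s := Finset.range N)
      (fun n _ => phiC_norm_le T hM hub (Nat.succ_le_succ (Nat.zero_le n)) x y)
    simpa using this
  calc ‖psiC T x y N‖ ≤ (N:ℝ)⁻¹ * (N * (M * (‖x‖ * ‖y‖))) := this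
    _ = M * (‖x‖ * ‖y‖) := by field_simp

end Bounds

section Shift

variable {H : Type*} [NormedAddCommGroup H] [InnerProductSpace ℂ H]

local notation "⟪" x ", " y "⟫" => @inner ℂ _ _ x y

lemma phiC_shift (T : H →L[ℂ] H) (x y : H) {n : ℕ} (hn : 1 ≤ n) :
    phiC T (T x) (T y) n
      = (n:ℂ)⁻¹ * (((n:ℂ)+1) * phiC T x y (n+1) - ⟪x, y⟫) := by
  have hkey : ∀ k : ℕ, ∀ z : H, (T ^ k) (T z) = (T ^ (k+1)) z := fun k z => by
    rw [pow_succ, ContinuousLinearMap.mul_apply]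
  have hsum : ∑ k ∈ Finset.range n, ⟪(T ^ k) (T x), (T ^ k) (T y)⟫
      = ∑ k ∈ Finset.range (n+1), ⟪(T ^ k) x, (T ^ k) y⟫ - ⟪x, y⟫ := by
    rw [Finset.sum_range_succ' (fun k => ⟪(T ^ k) x, (T ^ k) y⟫) n]
    simp [hkey]
  have hne : ((n:ℂ)+1) ≠ 0 := by
    have : ((n+1 : ℕ) : ℂ) ≠ 0 := Nat.cast_ne_zero.mpr (Nat.succ_ne_zero n)
    push_cast at this; exact this
  have hmul : ((n:ℂ)+1) * phiC T x y (n+1)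
      = ∑ k ∈ Finset.range (n+1), ⟪(T ^ k) x, (T ^ k) y⟫ := by
    rw [phiC]; push_cast; field_simp
  rw [phiC, hsum, hmul]

lemma tendsto_shift {M : ℝ} (T : H →L[ℂ] H) (hM : 0 ≤ M)
    (hub : ∀ n : ℕ, 1 ≤ n → ∀ x : H,
      (1/(n:ℝ)) * ∑ k ∈ Finset.range n, ‖(T ^ k) x‖ ^ 2 ≤ M * ‖x‖ ^ 2)
    (x y : H) :
    Filter.Tendsto (fun N => psiC T (T x) (T y) N - psiC T x y N)
      Filter.atTop (nhds 0) := by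
  classical
  set C₁ : ℝ := M * (‖x‖ * ‖y‖) + ‖x‖ * ‖y‖ with hC₁
  set d : ℕ → ℂ := fun n => phiC T (T x) (T y) n - phiC T x y (n+1) with hd
  have hdbound : ∀ n : ℕ, 1 ≤ n → ‖d n‖ ≤ C₁ / n := by
    intro n hn
    have hn0 : ((n:ℂ)) ≠ 0 := Nat.cast_ne_zero.mpr (by omega)
    have hform : d n = (n:ℂ)⁻¹ * (phiC T x y (n+1) - ⟪x, y⟫) := by
      rw [hd]
      simp only
      rw [phiC_shift T x y hn]
      field_simp
      ring
    rw [hform, norm_mul, norm_inv, Complex.norm_natCast]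
    rw [div_eq_inv_mul]
    refine mul_le_mul_of_nonneg_left ?_ (by positivity)
    refine (norm_sub_le _ _).trans ?_
    exact add_le_add (phiC_norm_le T hM hub (by omega) x y) (norm_inner_le_norm _ _)
  have hdzero : Filter.Tendsto d Filter.atTop (nhds 0) := by
    refine squeeze_zero_norm' ?_ (tendsto_const_div_atTop_nhds_zero_nat C₁)
    filter_upwards [Filter.eventually_ge_atTop 1] with n hn
    exact hdbound n hn
  -- identity
  have hiden : ∀ N : ℕ, psiC T (T x) (T y) N - psiC T x y N
      = (N:ℂ)⁻¹ * ∑ n ∈ Finset.range N, d (n+1)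
        + (N:ℂ)⁻¹ * (phiC T x y (N+1) - phiC T x y 1) := by
    intro N
    have htel : ∑ n ∈ Finset.range N,
        (phiC T x y (n+1+1) - phiC T x y (n+1)) = phiC T x y (N+1) - phiC T x y 1 :=
      Finset.sum_range_sub (fun n => phiC T x y (n+1)) N
    have : ∑ n ∈ Finset.range N, phiC T (T x) (T y) (n+1)
        = ∑ n ∈ Finset.range N, d (n+1) + ∑ n ∈ Finset.range N, phiC T x y (n+1)
          + (phiC T x y (N+1) - phiC T x y 1) := by
      rw [← htel, ← Finset.sum_add_distrib, ← Finset.sum_add_distrib]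
      refine Finset.sum_congr rfl fun n _ => ?_
      simp only [hd]
      ring
    rw [psiC, psiC, this]
    ring
  have hA : Filter.Tendsto (fun N : ℕ => (N:ℂ)⁻¹ * ∑ n ∈ Finset.range N, d (n+1))
      Filter.atTop (nhds 0) := by
    have hnormd : Filter.Tendsto (fun n : ℕ => ‖d (n+1)‖) Filter.atTop (nhds 0) := by
      have := (hdzero.comp (Filter.tendsto_add_atTop_nat 1)).norm
      simpa using this
    have hces := hnormd.cesaro
    refine squeeze_zero_norm ?_ (by simpa [smul_eq_mul] using hces)
    intro N
    rw [norm_mul, norm_inv, Complex.norm_natCast]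
    refine mul_le_mul_of_nonneg_left ((norm_sum_le _ _).trans (le_of_eq ?_)) (by positivity)
    simp
  have hB : Filter.Tendsto
      (fun N : ℕ => (N:ℂ)⁻¹ * (phiC T x y (N+1) - phiC T x y 1)) Filter.atTop (nhds 0) := by
    refine squeeze_zero_norm' ?_
      (tendsto_const_div_atTop_nhds_zero_nat (M * (‖x‖ * ‖y‖) + M * (‖x‖ * ‖y‖)))
    filter_upwards [Filter.eventually_ge_atTop 1] with N hN
    rw [norm_mul, norm_inv, Complex.norm_natCast, div_eq_inv_mul]
    refine mul_le_mul_of_nonneg_left ?_ (by positivity)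
    refine (norm_sub_le _ _).trans ?_
    exact add_le_add (phiC_norm_le T hM hub (by omega) x y)
      (phiC_norm_le T hM hub le_rfl x y)
  have := hA.add hB
  rw [add_zero] at this
  refine this.congr fun N => (hiden N).symm

end Shift

section Diag

variable {H : Type*} [NormedAddCommGroup H] [InnerProductSpace ℂ H]

noncomputable def realPsi (T : H →L[ℂ] H) (x : H) (N : ℕ) : ℝ :=
  (N:ℝ)⁻¹ * ∑ n ∈ Finset.range N,
    ((n:ℝ)+1)⁻¹ * ∑ k ∈ Finset.range (n+1), ‖(T ^ k) x‖ ^ 2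

lemma phiC_self (T : H →L[ℂ] H) (x : H) (n : ℕ) :
    phiC T x x n = (((n:ℝ)⁻¹ * ∑ k ∈ Finset.range n, ‖(T ^ k) x‖ ^ 2 : ℝ) : ℂ) := by
  rw [phiC]
  simp only [inner_self_eq_norm_sq_to_K]
  push_cast
  rfl

lemma psiC_self (T : H →L[ℂ] H) (x : H) (N : ℕ) :
    psiC T x x N = ((realPsi T x N : ℝ) : ℂ) := by
  rw [psiC, realPsi]
  push_cast [phiC_self]
  ring

lemma realPsi_le {M : ℝ} (T : H →L[ℂ] H)
    (hub : ∀ n : ℕ, 1 ≤ n → ∀ x : H,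
      (1/(n:ℝ)) * ∑ k ∈ Finset.range n, ‖(T ^ k) x‖ ^ 2 ≤ M * ‖x‖ ^ 2)
    (x : H) {N : ℕ} (hN : 1 ≤ N) : realPsi T x N ≤ M * ‖x‖ ^ 2 := by
  have hN' : (0:ℝ) < N := by exact_mod_cast hN
  rw [realPsi]
  have hsum : ∑ n ∈ Finset.range N,
      ((n:ℝ)+1)⁻¹ * ∑ k ∈ Finset.range (n+1), ‖(T ^ k) x‖ ^ 2
      ≤ ∑ _n ∈ Finset.range N, M * ‖x‖ ^ 2 := by
    refine Finset.sum_le_sum fun n _ => ?_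
    have := hub (n+1) (Nat.succ_le_succ (Nat.zero_le n)) x
    rw [one_div] at this
    push_cast at this ⊢
    exact this
  rw [Finset.sum_const, Finset.card_range, nsmul_eq_mul] at hsum
  calc (N:ℝ)⁻¹ * ∑ n ∈ Finset.range N,
        ((n:ℝ)+1)⁻¹ * ∑ k ∈ Finset.range (n+1), ‖(T ^ k) x‖ ^ 2
      ≤ (N:ℝ)⁻¹ * (N * (M * ‖x‖ ^ 2)) :=
        mul_le_mul_of_nonneg_left hsum (by positivity)
    _ = M * ‖x‖ ^ 2 := by field_simp

lemma le_realPsi {m : ℝ} (T K : H →L[ℂ] H)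
    (hlb : ∀ n : ℕ, 1 ≤ n → ∀ x : H,
      m * ‖K x‖ ^ 2 ≤ (1/(n:ℝ)) * ∑ k ∈ Finset.range n, ‖(T ^ k) x‖ ^ 2)
    (x : H) {N : ℕ} (hN : 1 ≤ N) : m * ‖K x‖ ^ 2 ≤ realPsi T x N := by
  have hN' : (0:ℝ) < N := by exact_mod_cast hN
  rw [realPsi]
  have hsum : ∑ _n ∈ Finset.range N, m * ‖K x‖ ^ 2
      ≤ ∑ n ∈ Finset.range N,
        ((n:ℝ)+1)⁻¹ * ∑ k ∈ Finset.range (n+1), ‖(T ^ k) x‖ ^ 2 := by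
    refine Finset.sum_le_sum fun n _ => ?_
    have := hlb (n+1) (Nat.succ_le_succ (Nat.zero_le n)) x
    rw [one_div] at this
    push_cast at this ⊢
    exact this
  rw [Finset.sum_const, Finset.card_range, nsmul_eq_mul] at hsum
  calc m * ‖K x‖ ^ 2 = (N:ℝ)⁻¹ * (N * (m * ‖K x‖ ^ 2)) := by field_simp
    _ ≤ (N:ℝ)⁻¹ * ∑ n ∈ Finset.range N,
        ((n:ℝ)+1)⁻¹ * ∑ k ∈ Finset.range (n+1), ‖(T ^ k) x‖ ^ 2 :=
        mul_le_mul_of_nonneg_left hsum (by positivity)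

lemma realPsi_const (T : H →L[ℂ] H) (x : H)
    (hx : ∀ k : ℕ, ‖(T ^ k) x‖ = ‖x‖) {N : ℕ} (hN : 1 ≤ N) :
    realPsi T x N = ‖x‖ ^ 2 := by
  have hN' : (0:ℝ) < N := by exact_mod_cast hN
  rw [realPsi]
  have : ∀ n ∈ Finset.range N,
      ((n:ℝ)+1)⁻¹ * ∑ k ∈ Finset.range (n+1), ‖(T ^ k) x‖ ^ 2 = ‖x‖ ^ 2 := by
    intro n _
    have : ∀ k ∈ Finset.range (n+1), ‖(T ^ k) x‖ ^ 2 = ‖x‖ ^ 2 := fun k _ => by rw [hx k]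
    rw [Finset.sum_congr rfl this, Finset.sum_const, Finset.card_range, nsmul_eq_mul]
    have hn1 : ((n:ℝ)+1) ≠ 0 := by positivity
    push_cast
    field_simp
  rw [Finset.sum_congr rfl this, Finset.sum_const, Finset.card_range, nsmul_eq_mul]
  field_simp

end Diag


section MainProof

local notation "⟪" x ", " y "⟫" => @inner ℂ _ _ x y

set_option maxHeartbeats 2000000 in
theorem similar_to_isometry_of_K_cesaro_bounds
    {H : Type*} [NormedAddCommGroup H] [InnerProductSpace ℂ H] [CompleteSpace H]
    (T K : H →L[ℂ] H) (m M : ℝ) (hm : 0 < m) (hM : 0 < M)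
    (hclosed : IsClosed (Set.range K))
    (hker : FiniteDimensional ℂ (LinearMap.ker (K : H →ₗ[ℂ] H)))
    (hbd : ∀ N : ℕ, 1 ≤ N → ∀ x : H,
      m * ‖K x‖ ^ 2 ≤ (1 / (N : ℝ)) * ∑ n ∈ Finset.range N, ‖(T ^ n) x‖ ^ 2 ∧
      (1 / (N : ℝ)) * ∑ n ∈ Finset.range N, ‖(T ^ n) x‖ ^ 2 ≤ M * ‖x‖ ^ 2)
    (heig : ∀ (lam : ℂ) (x : H), x ≠ 0 → T x = lam • x → ‖lam‖ = 1) :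
    ∃ L : H ≃L[ℂ] H, ∀ x : H, ‖L.symm (T (L x))‖ = ‖x‖ := by
  classical
  have hM0 : (0:ℝ) ≤ M := hM.le
  have hub : ∀ n : ℕ, 1 ≤ n → ∀ x : H,
      (1/(n:ℝ)) * ∑ k ∈ Finset.range n, ‖(T ^ k) x‖ ^ 2 ≤ M * ‖x‖ ^ 2 :=
    fun n hn x => (hbd n hn x).2
  have hlb : ∀ n : ℕ, 1 ≤ n → ∀ x : H,
      m * ‖K x‖ ^ 2 ≤ (1/(n:ℝ)) * ∑ k ∈ Finset.range n, ‖(T ^ k) x‖ ^ 2 :=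
    fun n hn x => (hbd n hn x).1
  obtain ⟨U, hU⟩ := Ultrafilter.exists_le (Filter.atTop : Filter ℕ)
  -- existence of ultrafilter limits
  have hBex : ∀ x y : H, ∃ z, Filter.Tendsto (psiC T x y) ↑U (nhds z) := by
    intro x y
    have hc : IsCompact (Metric.closedBall (0:ℂ) (M * (‖x‖ * ‖y‖))) :=
      isCompact_closedBall _ _
    have hmem : ∀ N, psiC T x y N ∈ Metric.closedBall (0:ℂ) (M * (‖x‖ * ‖y‖)) := by
      intro N
      rw [Metric.mem_closedBall, dist_zero_right]
      exact psiC_norm_le T hM0 hub N x y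
    obtain ⟨z, _, hz⟩ := hc.ultrafilter_le_nhds (U.map (psiC T x y))
      (Filter.le_principal_iff.mpr (Filter.mem_map.mpr (Filter.univ_mem' hmem)))
    exact ⟨z, hz⟩
  set B : H → H → ℂ := fun x y => (hBex x y).choose with hBdef
  have hB : ∀ x y, Filter.Tendsto (psiC T x y) ↑U (nhds (B x y)) :=
    fun x y => (hBex x y).choose_spec
  have huniq : ∀ {x y : H} {z : ℂ},
      Filter.Tendsto (psiC T x y) ↑U (nhds z) → B x y = z :=
    fun h => tendsto_nhds_unique (hB _ _) h
  have hBadd : ∀ x y z : H, B x (y + z) = B x y + B x z := by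
    intro x y z
    refine huniq (((hB x y).add (hB x z)).congr fun N => (psiC_add_right T x y z N).symm)
  have hBsmul : ∀ (c : ℂ) (x y : H), B x (c • y) = c * B x y := by
    intro c x y
    refine huniq (((hB x y).const_mul c).congr fun N => (psiC_smul_right T x y c N).symm)
  have hBconj : ∀ x y : H, B y x = (starRingEnd ℂ) (B x y) := by
    intro x y
    refine huniq ?_
    have : Filter.Tendsto (fun N => (starRingEnd ℂ) (psiC T x y N)) ↑U
        (nhds ((starRingEnd ℂ) (B x y))) := ((RCLike.continuous_conj (K := ℂ)).tendsto _).comp (hB x y)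
    exact this.congr fun N => (psiC_conj T x y N).symm
  have hBT : ∀ x y : H, B (T x) (T y) = B x y := by
    intro x y
    refine (huniq ?_)
    have h0 := (tendsto_shift T hM0 hub x y).mono_left hU
    have := (hB x y).add h0
    rw [add_zero] at this
    exact this.congr fun N => by ring
  -- the quadratic form
  set pB : H → ℝ := fun x => (B x x).re with hpBdef
  have hBreal : ∀ x : H, B x x = ((pB x : ℝ) : ℂ) := by
    intro x
    exact (Complex.conj_eq_iff_re.mp (hBconj x x).symm).symm
  have hpB_tendsto : ∀ x : H, Filter.Tendsto (realPsi T x) ↑U (nhds (pB x)) := by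
    intro x
    have h1 : Filter.Tendsto (fun N => (realPsi T x N : ℂ)) ↑U (nhds (B x x)) :=
      (hB x x).congr fun N => psiC_self T x N
    have := (Complex.continuous_re.tendsto _).comp h1
    simpa [Function.comp_def, hpBdef] using this
  have hpB_ub : ∀ x : H, pB x ≤ M * ‖x‖ ^ 2 := by
    intro x
    refine le_of_tendsto (hpB_tendsto x) ?_
    filter_upwards [hU (Filter.eventually_ge_atTop 1)] with N hN
    exact realPsi_le T hub x hN
  have hpB_lb : ∀ x : H, m * ‖K x‖ ^ 2 ≤ pB x := by
    intro x
    refine ge_of_tendsto (hpB_tendsto x) ?_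
    filter_upwards [hU (Filter.eventually_ge_atTop 1)] with N hN
    exact le_realPsi T K hlb x hN
  have hpB_T : ∀ x : H, pB (T x) = pB x := by
    intro x; rw [hpBdef]; simp only; rw [hBT x x]
  have hpB_const : ∀ x : H, (∀ k : ℕ, ‖(T ^ k) x‖ = ‖x‖) → pB x = ‖x‖ ^ 2 := by
    intro x hx
    refine tendsto_nhds_unique (hpB_tendsto x) ?_
    refine Filter.Tendsto.congr' ?_ (tendsto_const_nhds : Filter.Tendsto _ (↑U : Filter ℕ) (nhds (‖x‖^2)))
    filter_upwards [hU (Filter.eventually_ge_atTop 1)] with N hN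
    exact (realPsi_const T x hx hN).symm
  -- the operator S
  have hBnorm : ∀ x y : H, ‖B x y‖ ≤ M * (‖x‖ * ‖y‖) := by
    intro x y
    refine le_of_tendsto (hB x y).norm ?_
    exact Filter.Eventually.of_forall fun N => psiC_norm_le T hM0 hub N x y
  have hBadd_left : ∀ x y z : H, B (x + y) z = B x z + B y z := by
    intro x y z
    rw [hBconj, hBadd, map_add, ← hBconj, ← hBconj]
  have hBsmul_left : ∀ (c : ℂ) (x y : H), B (c • x) y = (starRingEnd ℂ) c * B x y := by
    intro c x y
    rw [hBconj, hBsmul, map_mul, ← hBconj]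
  set g : H → (H →L[ℂ] ℂ) := fun y => LinearMap.mkContinuous
    { toFun := fun x' => B y x'
      map_add' := fun a b => hBadd y a b
      map_smul' := fun c a => hBsmul c y a }
    (M * ‖y‖) (fun x' => by
      simpa [mul_assoc] using hBnorm y x') with hgdef
  have hg_apply : ∀ y x' : H, g y x' = B y x' := fun y x' => rfl
  set S0 : H → H := fun y => (InnerProductSpace.toDual ℂ H).symm (g y) with hS0def
  have hS0 : ∀ y x' : H, ⟪S0 y, x'⟫ = B y x' := by
    intro y x'
    rw [hS0def]
    exact InnerProductSpace.toDual_symm_apply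
  have hS0add : ∀ y z : H, S0 (y + z) = S0 y + S0 z := by
    intro y z
    refine ext_inner_right ℂ fun v => ?_
    rw [inner_add_left, hS0, hS0, hS0, hBadd_left]
  have hS0smul : ∀ (c : ℂ) (y : H), S0 (c • y) = c • S0 y := by
    intro c y
    refine ext_inner_right ℂ fun v => ?_
    rw [inner_smul_left, hS0, hS0, hBsmul_left]
  have hS0norm : ∀ y : H, ‖S0 y‖ ≤ M * ‖y‖ := by
    intro y
    rw [hS0def]
    simp only
    rw [LinearIsometryEquiv.norm_map]
    exact LinearMap.mkContinuous_norm_le _ (by positivity) _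
  set S : H →L[ℂ] H := LinearMap.mkContinuous
    { toFun := S0
      map_add' := hS0add
      map_smul' := hS0smul } M hS0norm with hSdef
  have hS : ∀ x y : H, ⟪S x, y⟫ = B x y := fun x y => hS0 x y
  have hSsym : ∀ x y : H, ⟪S x, y⟫ = ⟪x, S y⟫ := by
    intro x y
    rw [hS, ← inner_conj_symm, hS, ← hBconj]
  have hSpos : (0 : H →L[ℂ] H) ≤ S := by
    rw [ContinuousLinearMap.nonneg_iff_isPositive]
    refine ContinuousLinearMap.isPositive_def'.mpr ⟨ContinuousLinearMap.isSelfAdjoint_iff_isSymmetric.mpr fun x y => hSsym x y, ?_⟩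
    intro x
    rw [ContinuousLinearMap.reApplyInnerSelf_apply]
    have h1 : ⟪S x, x⟫ = ((pB x : ℝ) : ℂ) := by rw [hS, hBreal]
    have h2 : RCLike.re (⟪S x, x⟫ : ℂ) = pB x := by rw [h1]; simp
    rw [h2]
    exact le_trans (by positivity) (hpB_lb x)
  set R : H →L[ℂ] H := CFC.sqrt S with hRdef
  have hR0 : (0 : H →L[ℂ] H) ≤ R := CFC.sqrt_nonneg S
  have hRmul : R * R = S := CFC.sqrt_mul_sqrt_self S hSpos
  have hRsa : IsSelfAdjoint R := IsSelfAdjoint.of_nonneg hR0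
  have hRsym : ∀ x y : H, ⟪R x, y⟫ = ⟪x, R y⟫ :=
    fun x y => (ContinuousLinearMap.isSelfAdjoint_iff_isSymmetric.mp hRsa) x y
  have hRnorm : ∀ x : H, ‖R x‖ ^ 2 = pB x := by
    intro x
    have h1 : ⟪R x, R x⟫ = ⟪S x, x⟫ := by
      rw [← hRmul, ContinuousLinearMap.mul_apply]
      exact (hRsym (R x) x).symm
    have h2 : (‖R x‖ ^ 2 : ℝ) = RCLike.re ⟪R x, R x⟫ := (inner_self_eq_norm_sq _).symm
    rw [h2, h1, hS, hBreal]
    simp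
  have hRT : ∀ x : H, ‖R (T x)‖ = ‖R x‖ := by
    intro x
    have h2 : ‖R (T x)‖ ^ 2 = ‖R x‖ ^ 2 := by rw [hRnorm, hRnorm, hpB_T]
    calc ‖R (T x)‖ = Real.sqrt (‖R (T x)‖ ^ 2) := (Real.sqrt_sq (norm_nonneg _)).symm
      _ = Real.sqrt (‖R x‖ ^ 2) := by rw [h2]
      _ = ‖R x‖ := Real.sqrt_sq (norm_nonneg _)
  have hKR : ∀ x : H, m * ‖K x‖ ^ 2 ≤ ‖R x‖ ^ 2 := fun x => by
    rw [hRnorm]; exact hpB_lb x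
  -- R has trivial kernel (via the eigenvalue hypothesis)
  have hkerR : ∀ x : H, R x = 0 → x = 0 := by
    intro x0 hx0
    by_contra hne
    set V : Submodule ℂ H := R.ker with hVdef
    have hVK : V ≤ K.ker := by
      intro v hv
      rw [hVdef, LinearMap.mem_ker] at hv
      rw [LinearMap.mem_ker]
      have h0 : ‖R v‖ ^ 2 = 0 := by rw [show R v = 0 from hv]; simp
      have h1 := hKR v
      rw [h0] at h1
      have h2 : ‖K v‖ ^ 2 ≤ 0 := by nlinarith [sq_nonneg ‖K v‖]
      have h3 : ‖K v‖ ^ 2 = 0 := le_antisymm h2 (sq_nonneg _)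
      exact norm_eq_zero.mp (pow_eq_zero_iff two_ne_zero |>.mp h3)
    haveI : FiniteDimensional ℂ V := Submodule.finiteDimensional_of_le hVK
    haveI : Nontrivial V := by
      refine ⟨⟨⟨x0, by rwa [hVdef, LinearMap.mem_ker]⟩, 0, ?_⟩⟩
      simp only [ne_eq, Submodule.mk_eq_zero]
      exact hne
    have hTV : ∀ v ∈ V, T v ∈ V := by
      intro v hv
      rw [hVdef, LinearMap.mem_ker] at hv ⊢
      have : ‖R (T v)‖ = 0 := by rw [hRT v, show R v = 0 from hv, norm_zero]
      exact norm_eq_zero.mp this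
    set f : Module.End ℂ V := LinearMap.restrict (T : H →ₗ[ℂ] H) hTV with hfdef
    obtain ⟨μ, hμ⟩ := Module.End.exists_eigenvalue f
    obtain ⟨v, hv⟩ := hμ.exists_hasEigenvector
    have hvne : (v : H) ≠ 0 := fun h => hv.2 (Subtype.coe_injective (by simpa using h))
    have hTv : T (v : H) = μ • (v : H) := by
      have h1 := hv.apply_eq_smul
      have h2 : ((f v : V) : H) = T (v : H) := rfl
      rw [h1] at h2
      rw [← h2]
      simp
    have habs := heig μ (v : H) hvne hTv
    have hpow : ∀ k : ℕ, (T ^ k) (v : H) = μ ^ k • (v : H) := by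
      intro k
      induction k with
      | zero => simp
      | succ k ih =>
        rw [pow_succ, ContinuousLinearMap.mul_apply, hTv, map_smul, ih, pow_succ,
          smul_smul, mul_comm]
    have hnk : ∀ k : ℕ, ‖(T ^ k) (v : H)‖ = ‖(v : H)‖ := by
      intro k
      rw [hpow k, norm_smul]
      simp [map_pow, habs]
    have hp := hpB_const (v : H) hnk
    have hvker : R (v : H) = 0 := LinearMap.mem_ker.mp v.2
    have hz : ‖R (v : H)‖ ^ 2 = 0 := by rw [hvker]; simp
    rw [hRnorm, hp] at hz
    exact hvne (norm_eq_zero.mp (pow_eq_zero_iff two_ne_zero |>.mp hz))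
  -- K is bounded below on the orthogonal complement of its kernel
  set Kk : Submodule ℂ H := K.ker with hKkdef
  haveI : CompleteSpace Kk := FiniteDimensional.complete ℂ Kk
  have hRangeK : IsClosed ((K.range : Submodule ℂ H) : Set H) := by
    have hset : ((K.range : Submodule ℂ H) : Set H) = Set.range K := by
      ext z; simp [LinearMap.mem_range]
    rw [hset]; exact hclosed
  haveI : CompleteSpace (K.range) := hRangeK.completeSpace_coe
  set K' : Kkᗮ →L[ℂ] (K.range) :=
    (K.comp (Submodule.subtypeL Kkᗮ)).codRestrict (K.range)
      (fun v => LinearMap.mem_range_self _ _) with hK'def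
  have hK'app : ∀ v : Kkᗮ, ((K' v : H)) = K (v : H) := fun v => rfl
  have hK'inj : K'.ker = ⊥ := by
    rw [LinearMap.ker_eq_bot']
    intro v hv
    have hKv : K (v : H) = 0 := by
      have := congrArg Subtype.val hv
      simpa [hK'app] using this
    have hvKk : (v : H) ∈ Kk := LinearMap.mem_ker.mpr hKv
    have hbot : Kk ⊓ Kkᗮ = ⊥ := disjoint_iff.mp Kk.orthogonal_disjoint
    have hmem : (v : H) ∈ (⊥ : Submodule ℂ H) := hbot ▸ Submodule.mem_inf.mpr ⟨hvKk, v.2⟩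
    exact Subtype.ext (by simpa using hmem)
  have hK'surj : K'.range = ⊤ := by
    rw [LinearMap.range_eq_top]
    rintro ⟨w, hw⟩
    obtain ⟨y, hy⟩ := hw
    obtain ⟨a, ha, b, hb, hab⟩ := Kk.exists_add_mem_mem_orthogonal y
    refine ⟨⟨b, hb⟩, ?_⟩
    apply Subtype.ext
    have hKa : K a = 0 := LinearMap.mem_ker.mp ha
    show K b = w
    rw [← hy, ContinuousLinearMap.coe_coe, hab, map_add, hKa, zero_add]
  set e : Kkᗮ ≃L[ℂ] (K.range) :=
    ContinuousLinearEquiv.ofBijective K' hK'inj hK'surj with hedef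
  set c₀ : ℝ := ‖(e.symm : (K.range) →L[ℂ] Kkᗮ)‖ with hc₀def
  have hc₀ : ∀ v : H, v ∈ Kkᗮ → ‖v‖ ≤ c₀ * ‖K v‖ := by
    intro v hv
    have h1 : e.symm (e ⟨v, hv⟩) = ⟨v, hv⟩ := e.symm_apply_apply _
    have h2 : ‖e.symm (e ⟨v, hv⟩)‖ ≤ c₀ * ‖e ⟨v, hv⟩‖ := by
      rw [hc₀def]
      exact (e.symm : (K.range) →L[ℂ] Kkᗮ).le_opNorm _
    rw [h1] at h2
    have h3 : ‖e ⟨v, hv⟩‖ = ‖K v‖ := by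
      have : e ⟨v, hv⟩ = K' ⟨v, hv⟩ := by
        rw [hedef]; rfl
      rw [this]
      rfl
    rw [h3] at h2
    exact h2
  -- coercivity of R
  have hcoer : ∃ c : ℝ, 0 < c ∧ ∀ x : H, c * ‖x‖ ≤ ‖R x‖ := by
    by_contra hno
    push_neg at hno
    have hseq : ∀ j : ℕ, ∃ x : H, ‖x‖ = 1 ∧ ‖R x‖ < 1 / (j + 1) := by
      intro j
      obtain ⟨y, hy⟩ := hno (1 / (j + 1) : ℝ) (by positivity)
      have hy0 : y ≠ 0 := by
        rintro rfl
        simp at hy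
      have hyn : (0:ℝ) < ‖y‖ := norm_pos_iff.mpr hy0
      refine ⟨((‖y‖ : ℂ))⁻¹ • y, ?_, ?_⟩
      · rw [norm_smul, norm_inv, Complex.norm_real, norm_norm]
        field_simp
      · rw [map_smul, norm_smul, norm_inv, Complex.norm_real, norm_norm]
        rw [inv_mul_lt_iff₀ hyn]
        calc ‖R y‖ < 1 / (j + 1) * ‖y‖ := hy
          _ = ‖y‖ * (1 / (j + 1)) := by ring
    choose xs hxs1 hxs2 using hseq
    have honej : Filter.Tendsto (fun j : ℕ => 1 / ((j:ℝ) + 1)) Filter.atTop (nhds 0) :=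
      tendsto_one_div_add_atTop_nhds_zero_nat
    have hRxs : Filter.Tendsto (fun j => ‖R (xs j)‖) Filter.atTop (nhds 0) :=
      squeeze_zero (fun j => norm_nonneg _) (fun j => (hxs2 j).le) honej
    have hKxs : Filter.Tendsto (fun j => ‖K (xs j)‖) Filter.atTop (nhds 0) := by
      have hs : (0:ℝ) < Real.sqrt m := Real.sqrt_pos.mpr hm
      have hb : ∀ j, ‖K (xs j)‖ ≤ (Real.sqrt m)⁻¹ * ‖R (xs j)‖ := by
        intro j
        rw [inv_mul_eq_div, le_div_iff₀ hs]
        have h1 := hKR (xs j)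
        have h2 : Real.sqrt m * Real.sqrt m = m := Real.mul_self_sqrt hm.le
        nlinarith [norm_nonneg (K (xs j)), norm_nonneg (R (xs j))]
      have := hRxs.const_mul ((Real.sqrt m)⁻¹)
      rw [mul_zero] at this
      exact squeeze_zero (fun j => norm_nonneg _) hb this
    set u : ℕ → Kk := fun j => Submodule.orthogonalProjection Kk (xs j) with hudef
    have hv_mem : ∀ j, xs j - (u j : H) ∈ Kkᗮ := fun j =>
      Submodule.sub_starProjection_mem_orthogonal (K := Kk) (xs j)
    have hvnorm : ∀ j, ‖xs j - (u j : H)‖ ≤ c₀ * ‖K (xs j)‖ := by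
      intro j
      have h1 := hc₀ _ (hv_mem j)
      have h2 : K (xs j - (u j : H)) = K (xs j) := by
        rw [map_sub, show K (u j : H) = 0 from LinearMap.mem_ker.mp (u j).2, sub_zero]
      rwa [h2] at h1
    have hvzero : Filter.Tendsto (fun j => xs j - (u j : H)) Filter.atTop (nhds 0) := by
      have := hKxs.const_mul c₀
      rw [mul_zero] at this
      exact squeeze_zero_norm hvnorm this
    have hub1 : ∀ j, u j ∈ Metric.closedBall (0 : Kk) 1 := by
      intro j
      rw [Metric.mem_closedBall, dist_zero_right]
      have h1 : ‖u j‖ ≤ ‖Submodule.orthogonalProjection Kk‖ * ‖xs j‖ :=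
        (Submodule.orthogonalProjection Kk).le_opNorm _
      have h2 := Submodule.orthogonalProjection_norm_le Kk
      rw [hxs1 j] at h1
      calc ‖u j‖ ≤ ‖Submodule.orthogonalProjection Kk‖ * 1 := h1
        _ ≤ 1 * 1 := by exact mul_le_mul_of_nonneg_right h2 zero_le_one
        _ = 1 := one_mul 1
    haveI : ProperSpace Kk := FiniteDimensional.proper ℂ Kk
    obtain ⟨a, -, φ, hφmono, hφtendsto⟩ :=
      tendsto_subseq_of_bounded Metric.isBounded_closedBall hub1
    have hxφ : Filter.Tendsto (fun j => xs (φ j)) Filter.atTop (nhds (a : H)) := by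
      have h1 : Filter.Tendsto (fun j => ((u (φ j)) : H)) Filter.atTop (nhds (a : H)) :=
        (continuous_subtype_val.tendsto _).comp hφtendsto
      have h2 : Filter.Tendsto (fun j => xs (φ j) - (u (φ j) : H)) Filter.atTop (nhds 0) :=
        hvzero.comp hφmono.tendsto_atTop
      have h3 := h1.add h2
      rw [add_zero] at h3
      exact h3.congr fun j => by abel
    have hanorm : ‖(a : H)‖ = 1 := by
      have h1 : Filter.Tendsto (fun j => ‖xs (φ j)‖) Filter.atTop (nhds ‖(a : H)‖) :=
        (continuous_norm.tendsto _).comp hxφ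
      have h2 : Filter.Tendsto (fun j => ‖xs (φ j)‖) Filter.atTop (nhds 1) := by
        refine Filter.Tendsto.congr (fun j => (hxs1 (φ j)).symm) tendsto_const_nhds
      exact tendsto_nhds_unique h1 h2
    have hRa : R (a : H) = 0 := by
      have h1 : Filter.Tendsto (fun j => R (xs (φ j))) Filter.atTop (nhds (R (a : H))) :=
        (R.continuous.tendsto _).comp hxφ
      have h2 : Filter.Tendsto (fun j => R (xs (φ j))) Filter.atTop (nhds 0) := by
        refine squeeze_zero_norm (fun j => ?_) honej
        calc ‖R (xs (φ j))‖ ≤ 1 / ((φ j : ℝ) + 1) := (hxs2 (φ j)).le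
          _ ≤ 1 / ((j : ℝ) + 1) := by
              apply one_div_le_one_div_of_le (by positivity)
              have hle : j ≤ φ j := hφmono.le_apply
              have hle' : (j:ℝ) ≤ (φ j : ℝ) := Nat.cast_le.mpr hle
              linarith
      exact tendsto_nhds_unique h1 h2
    have : (a : H) = 0 := hkerR _ hRa
    rw [this, norm_zero] at hanorm
    exact zero_ne_one hanorm
  obtain ⟨c, hc, hcoer⟩ := hcoer
  -- R is a continuous linear equivalence
  have hRker : R.ker = ⊥ := LinearMap.ker_eq_bot'.mpr fun x hx => hkerR x hx
  have hcnn : ∀ x : H, ‖x‖ ≤ (⟨c⁻¹, inv_nonneg.mpr hc.le⟩ : NNReal) * ‖R x‖ := by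
    intro x
    show ‖x‖ ≤ c⁻¹ * ‖R x‖
    have h := hcoer x
    rw [inv_mul_eq_div, le_div_iff₀ hc]
    calc ‖x‖ * c = c * ‖x‖ := mul_comm _ _
      _ ≤ ‖R x‖ := h
  have hanti := R.antilipschitz_of_bound (K := (⟨c⁻¹, inv_nonneg.mpr hc.le⟩ : NNReal)) hcnn
  have hRrange : R.range = ⊤ := by
    have hclosedR : IsClosed ((R.range : Submodule ℂ H) : Set H) := by
      have hset : ((R.range : Submodule ℂ H) : Set H) = Set.range R := by
        ext z; simp [LinearMap.mem_range]
      rw [hset]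
      exact hanti.isClosed_range R.uniformContinuous
    haveI : CompleteSpace (R.range) := hclosedR.completeSpace_coe
    have horth : (R.range)ᗮ = ⊥ := by
      rw [Submodule.eq_bot_iff]
      intro y hy
      have h0 : ∀ x : H, ⟪R x, y⟫ = 0 := fun x =>
        ((Submodule.mem_orthogonal _ y).mp hy) (R x) (LinearMap.mem_range_self _ x)
      have h1 : ⟪R y, R y⟫ = 0 := by
        rw [← hRsym (R y) y]
        exact h0 (R y)
      exact hkerR y (inner_self_eq_zero.mp h1)
    exact Submodule.orthogonal_eq_bot_iff.mp horth
  set e' : H ≃L[ℂ] H := ContinuousLinearEquiv.ofBijective R hRker hRrange with he'def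
  have he' : ∀ z : H, e' z = R z := fun z => rfl
  refine ⟨e'.symm, fun x => ?_⟩
  rw [ContinuousLinearEquiv.symm_symm]
  calc ‖e' (T (e'.symm x))‖ = ‖R (T (e'.symm x))‖ := by rw [he']
    _ = ‖R (e'.symm x)‖ := hRT _
    _ = ‖e' (e'.symm x)‖ := by rw [he']
    _ = ‖x‖ := by rw [e'.apply_symm_apply]

end MainProof
end

section
/- Let S be a countable discrete semigroup with a right Følner sequence (F_N) of finite nonempty subsets, i.e. |F_N s △ F_N|/|F_N| → 0 for every s ∈ S. Let π : S → B(H) be a representation (π(st) = π(s)π(t)) such that for positive constants m, M: m²‖x‖² ≤ (1/|F_N|)·Σ_{g ∈ F_N} ‖π(g)x‖² ≤ M²‖x‖² for all N and all x ∈ H, and (1/|F_N|)·Σ_{g ∈ F_N s △ F_N} ‖π(g)‖² → 0 as N → ∞ for every s ∈ S. Then there exists an invertible L ∈ B(H) with ‖L⁻¹‖·‖L‖ ≤ M/m such that L⁻¹π(s)L is an isometry for every s ∈ S. -/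
open Filter Finset
open scoped ComplexConjugate

local notation "⟪" x ", " y "⟫" => @inner ℂ _ _ x y

private lemma exists_ulim (U : Ultrafilter ℕ) (u : ℕ → ℂ) (C : ℝ) (hu : ∀ n, ‖u n‖ ≤ C) :
    ∃ l, Filter.Tendsto u ↑U (nhds l) := by
  have h0 : ∀ n, u n ∈ Metric.closedBall (0 : ℂ) C := fun n => by
    simpa [Metric.mem_closedBall, dist_eq_norm] using hu n
  have h1 : Metric.closedBall (0 : ℂ) C ∈ Ultrafilter.map u U := by
    rw [Ultrafilter.mem_map]
    exact Filter.univ_mem' h0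
  obtain ⟨l, -, hl⟩ := (isCompact_closedBall (0 : ℂ) C).ultrafilter_le_nhds
    (Ultrafilter.map u U) (Filter.le_principal_iff.mpr h1)
  refine ⟨l, ?_⟩
  have h2 : (↑(Ultrafilter.map u U) : Filter ℂ) = Filter.map u ↑U := Ultrafilter.coe_map u U
  rw [h2] at hl
  exact hl

private lemma sum_comp_image {S : Type*} [DecidableEq S] (F : Finset S) (σ : S → S)
    {β : Type*} [AddCommMonoid β] (f : S → β) :
    ∑ g ∈ F, f (σ g) = ∑ h ∈ F.image σ, ((F.filter (fun g => σ g = h)).card) • f h := by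
  rw [← Finset.sum_fiberwise_of_maps_to' (fun i hi => Finset.mem_image_of_mem σ hi) f]
  exact Finset.sum_congr rfl fun h _ => by rw [Finset.sum_const]

private lemma one_le_fiber {S : Type*} [DecidableEq S] {F : Finset S} {σ : S → S} {h : S}
    (hh : h ∈ F.image σ) : 1 ≤ (F.filter (fun g => σ g = h)).card := by
  obtain ⟨g, hg, rfl⟩ := Finset.mem_image.mp hh
  exact Finset.card_pos.mpr ⟨g, Finset.mem_filter.mpr ⟨hg, rfl⟩⟩

private lemma count_lower {S : Type*} [DecidableEq S] (F : Finset S) (σ : S → S) (f : S → ℝ)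
    (hf : ∀ g, 0 ≤ f g) :
    (∑ h ∈ F, f h) - (∑ h ∈ F \ F.image σ, f h) ≤ ∑ g ∈ F, f (σ g) := by
  have hcomp := sum_comp_image F σ f
  have h1 : ∑ h ∈ F.image σ, f h
      ≤ ∑ h ∈ F.image σ, ((F.filter (fun g => σ g = h)).card) • f h := by
    refine Finset.sum_le_sum fun h hh => ?_
    rw [nsmul_eq_mul]
    exact le_mul_of_one_le_left (hf h) (by exact_mod_cast one_le_fiber hh)
  have h2 : ∑ h ∈ F ∩ F.image σ, f h ≤ ∑ h ∈ F.image σ, f h :=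
    Finset.sum_le_sum_of_subset_of_nonneg Finset.inter_subset_right (fun i _ _ => hf i)
  have h3 : (∑ h ∈ F ∩ F.image σ, f h) + ∑ h ∈ F \ F.image σ, f h = ∑ h ∈ F, f h :=
    Finset.sum_inter_add_sum_sdiff F (F.image σ) f
  linarith [hcomp ▸ (h1.trans_eq hcomp.symm)]

private lemma count_near {S : Type*} [DecidableEq S] (F : Finset S) (σ : S → S) (f : S → ℂ)
    (C : ℝ) (hC : 0 ≤ C) (hf : ∀ g, ‖f g‖ ≤ C) :
    ‖(∑ g ∈ F, f (σ g)) - ∑ g ∈ F, f g‖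
      ≤ 2 * C * (((F.image σ \ F) ∪ (F \ F.image σ)).card : ℝ) := by
  classical
  set I := F.image σ with hI
  set n : S → ℕ := fun h => (F.filter (fun g => σ g = h)).card with hn
  have hcomp : ∑ g ∈ F, f (σ g) = ∑ h ∈ I, (n h) • f h := sum_comp_image F σ f
  have hδ : (((I \ F) ∪ (F \ I)).card : ℝ) = ((I \ F).card : ℝ) + ((F \ I).card : ℝ) := by
    rw [Finset.card_union_of_disjoint disjoint_sdiff_sdiff]; push_cast; ring
  have key : (∑ g ∈ F, f (σ g)) - ∑ g ∈ F, f g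
      = (∑ h ∈ I, ((n h : ℂ) - 1) * f h)
        + ((∑ h ∈ I \ F, f h) - ∑ h ∈ F \ I, f h) := by
    have e1 : ∑ h ∈ I, (n h) • f h
        = (∑ h ∈ I, ((n h : ℂ) - 1) * f h) + ∑ h ∈ I, f h := by
      rw [← Finset.sum_add_distrib]
      refine Finset.sum_congr rfl fun h _ => ?_
      rw [nsmul_eq_mul]; ring
    have e2 : (∑ h ∈ I ∩ F, f h) + ∑ h ∈ I \ F, f h = ∑ h ∈ I, f h :=
      Finset.sum_inter_add_sum_sdiff I F f
    have e3 : (∑ h ∈ F ∩ I, f h) + ∑ h ∈ F \ I, f h = ∑ h ∈ F, f h :=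
      Finset.sum_inter_add_sum_sdiff F I f
    have e4 : I ∩ F = F ∩ I := Finset.inter_comm I F
    rw [hcomp, e1]
    rw [← e2, ← e3, e4]
    ring
  rw [key]
  have hb1 : ‖∑ h ∈ I, ((n h : ℂ) - 1) * f h‖ ≤ ((F.card : ℝ) - (I.card : ℝ)) * C := by
    refine (norm_sum_le _ _).trans ?_
    have hsum : ∑ h ∈ I, ‖((n h : ℂ) - 1) * f h‖ ≤ ∑ h ∈ I, ((n h : ℝ) - 1) * C := by
      refine Finset.sum_le_sum fun h hh => ?_
      rw [norm_mul]
      have h1 : (1 : ℝ) ≤ (n h : ℝ) := by exact_mod_cast one_le_fiber hh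
      have h2 : ‖((n h : ℂ) - 1)‖ = (n h : ℝ) - 1 := by
        rw [show ((n h : ℂ) - 1) = (((n h : ℝ) - 1 : ℝ) : ℂ) by push_cast; ring]
        rw [Complex.norm_real]
        exact abs_of_nonneg (by linarith)
      rw [h2]
      exact mul_le_mul_of_nonneg_left (hf h) (by linarith)
    refine hsum.trans ?_
    have hcard : (F.card : ℝ) = ∑ h ∈ I, (n h : ℝ) := by
      exact_mod_cast Finset.card_eq_sum_card_image σ F
    rw [← Finset.sum_mul]
    apply mul_le_mul_of_nonneg_right _ hC
    rw [Finset.sum_sub_distrib, Finset.sum_const, hcard]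
    simp
  have hb2 : ‖∑ h ∈ I \ F, f h‖ ≤ ((I \ F).card : ℝ) * C := by
    refine (norm_sum_le _ _).trans ?_
    calc ∑ h ∈ I \ F, ‖f h‖ ≤ ∑ _h ∈ I \ F, C := Finset.sum_le_sum fun h _ => hf h
    _ = ((I \ F).card : ℝ) * C := by rw [Finset.sum_const, nsmul_eq_mul]
  have hb3 : ‖∑ h ∈ F \ I, f h‖ ≤ ((F \ I).card : ℝ) * C := by
    refine (norm_sum_le _ _).trans ?_
    calc ∑ h ∈ F \ I, ‖f h‖ ≤ ∑ _h ∈ F \ I, C := Finset.sum_le_sum fun h _ => hf h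
    _ = ((F \ I).card : ℝ) * C := by rw [Finset.sum_const, nsmul_eq_mul]
  have hcardineq : (F.card : ℝ) - (I.card : ℝ) ≤ ((F \ I).card : ℝ) := by
    have h1 := Finset.card_inter_add_card_sdiff F I
    have h2 : (F ∩ I).card ≤ I.card := Finset.card_le_card Finset.inter_subset_right
    have h1' : ((F ∩ I).card : ℝ) + ((F \ I).card : ℝ) = (F.card : ℝ) := by exact_mod_cast h1
    have h2' : ((F ∩ I).card : ℝ) ≤ (I.card : ℝ) := by exact_mod_cast h2
    linarith
  calc ‖(∑ h ∈ I, ((n h : ℂ) - 1) * f h) + ((∑ h ∈ I \ F, f h) - ∑ h ∈ F \ I, f h)‖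
      ≤ ‖∑ h ∈ I, ((n h : ℂ) - 1) * f h‖ + (‖∑ h ∈ I \ F, f h‖ + ‖∑ h ∈ F \ I, f h‖) :=
        (norm_add_le _ _).trans (by gcongr; exact norm_sub_le _ _)
  _ ≤ ((F.card : ℝ) - (I.card : ℝ)) * C + (((I \ F).card : ℝ) * C + ((F \ I).card : ℝ) * C) := by
        gcongr
  _ ≤ ((F \ I).card : ℝ) * C + (((I \ F).card : ℝ) * C + ((F \ I).card : ℝ) * C) := by
        gcongr
  _ ≤ 2 * C * (((I \ F) ∪ (F \ I)).card : ℝ) := by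
        rw [hδ]
        have h1 : (0:ℝ) ≤ ((I \ F).card : ℝ) := by positivity
        nlinarith

set_option maxHeartbeats 2000000 in
set_option synthInstance.maxHeartbeats 400000 in
theorem isometrizable_of_folner_cesaro_bounds
    {S : Type*} [Semigroup S] [Countable S] [DecidableEq S]
    {H : Type*} [NormedAddCommGroup H] [InnerProductSpace ℂ H] [CompleteSpace H]
    (F : ℕ → Finset S) (hFne : ∀ N, (F N).Nonempty)
    (hFolner : ∀ s : S, Filter.Tendsto
      (fun N : ℕ => ((((F N).image (· * s) \ F N) ∪ (F N \ (F N).image (· * s))).card : ℝ)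
        / (F N).card) Filter.atTop (nhds 0))
    (π : S → (H →L[ℂ] H))
    (hrep : ∀ s t : S, π (s * t) = (π s).comp (π t))
    (m M : ℝ) (hm : 0 < m) (hM : 0 < M)
    (hbd : ∀ (N : ℕ) (x : H),
      m ^ 2 * ‖x‖ ^ 2 ≤ (1 / ((F N).card : ℝ)) * ∑ g ∈ F N, ‖π g x‖ ^ 2 ∧
      (1 / ((F N).card : ℝ)) * ∑ g ∈ F N, ‖π g x‖ ^ 2 ≤ M ^ 2 * ‖x‖ ^ 2)
    (hsd : ∀ s : S, Filter.Tendsto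
      (fun N : ℕ => (1 / ((F N).card : ℝ)) *
        ∑ g ∈ ((F N).image (· * s) \ F N) ∪ (F N \ (F N).image (· * s)), ‖π g‖ ^ 2)
      Filter.atTop (nhds 0)) :
    ∃ L : H ≃L[ℂ] H,
      ‖(L.symm : H →L[ℂ] H)‖ * ‖(L : H →L[ℂ] H)‖ ≤ M / m ∧
      ∀ (s : S) (x : H), ‖L.symm (π s (L x))‖ = ‖x‖ := by
  classical
  -- setup
  set c : ℕ → ℝ := fun N => ((F N).card : ℝ) with hc
  have hcpos : ∀ N, 0 < c N := fun N => by
    have := Finset.card_pos.mpr (hFne N)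
    simp only [hc]
    exact_mod_cast this
  have hcinv : ∀ N, (0:ℝ) < 1 / c N := fun N => by positivity
  set U : Ultrafilter ℕ := Ultrafilter.of Filter.atTop with hUdef
  have hU : (U : Filter ℕ) ≤ Filter.atTop := Ultrafilter.of_le _
  set q : ℕ → H → H → ℂ := fun N x y =>
    ((1 / c N : ℝ) : ℂ) * ∑ g ∈ F N, ⟪π g x, π g y⟫ with hq
  -- bound for q
  have qbound : ∀ (N : ℕ) (x y : H), ‖q N x y‖ ≤ M^2/2 * (‖x‖^2 + ‖y‖^2) := by
    intro N x y
    have h1 : ‖∑ g ∈ F N, ⟪π g x, π g y⟫‖ ≤ ∑ g ∈ F N, (‖π g x‖^2 + ‖π g y‖^2)/2 := by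
      refine (norm_sum_le _ _).trans (Finset.sum_le_sum fun g _ => ?_)
      refine (norm_inner_le_norm _ _).trans ?_
      nlinarith [sq_nonneg (‖π g x‖ - ‖π g y‖)]
    have h2 : (1 / c N) * ∑ g ∈ F N, (‖π g x‖^2 + ‖π g y‖^2)/2
        = ((1 / c N) * ∑ g ∈ F N, ‖π g x‖^2)/2 + ((1 / c N) * ∑ g ∈ F N, ‖π g y‖^2)/2 := by
      have e : ∑ g ∈ F N, (‖π g x‖^2 + ‖π g y‖^2)/2
          = ((∑ g ∈ F N, ‖π g x‖^2) + ∑ g ∈ F N, ‖π g y‖^2)/2 := by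
        rw [← Finset.sum_add_distrib, ← Finset.sum_div]
      rw [e]; ring
    have h3 : ‖q N x y‖ = (1 / c N) * ‖∑ g ∈ F N, ⟪π g x, π g y⟫‖ := by
      rw [hq]
      rw [norm_mul, Complex.norm_real, Real.norm_eq_abs, abs_of_pos (hcinv N)]
    rw [h3]
    have h4 := (hbd N x).2
    have h5 := (hbd N y).2
    have h6 : (1 / c N) * ‖∑ g ∈ F N, ⟪π g x, π g y⟫‖
        ≤ (1 / c N) * ∑ g ∈ F N, (‖π g x‖^2 + ‖π g y‖^2)/2 :=
      mul_le_mul_of_nonneg_left h1 (hcinv N).le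
    rw [h2] at h6
    calc (1 / c N) * ‖∑ g ∈ F N, ⟪π g x, π g y⟫‖
        ≤ ((1 / c N) * ∑ g ∈ F N, ‖π g x‖^2)/2 + ((1 / c N) * ∑ g ∈ F N, ‖π g y‖^2)/2 := h6
    _ ≤ (M^2*‖x‖^2)/2 + (M^2*‖y‖^2)/2 := by gcongr
    _ = M^2/2 * (‖x‖^2 + ‖y‖^2) := by ring
  -- the limit form W
  have hWex : ∀ x y : H, ∃ l, Tendsto (fun N => q N x y) ↑U (nhds l) := fun x y =>
    exists_ulim U _ _ (fun N => qbound N x y)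
  choose W hW using hWex
  -- real limits
  have hre : ∀ x : H, Tendsto (fun N => (1 / c N) * ∑ g ∈ F N, ‖π g x‖^2) ↑U
      (nhds ((W x x).re)) := by
    intro x
    have h1 : ∀ N, (1 / c N) * ∑ g ∈ F N, ‖π g x‖^2 = (q N x x).re := by
      intro N
      rw [hq]
      simp only
      rw [show ∑ g ∈ F N, ⟪π g x, π g x⟫ = ((∑ g ∈ F N, ‖π g x‖^2 : ℝ) : ℂ) by
        push_cast
        exact Finset.sum_congr rfl fun g _ => inner_self_eq_norm_sq_to_K _]
      rw [← Complex.ofReal_mul, Complex.ofReal_re]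
    have h2 : Tendsto (fun N => (q N x x).re) ↑U (nhds ((W x x).re)) :=
      (Complex.continuous_re.tendsto _).comp (hW x x)
    exact h2.congr fun N => (h1 N).symm
  set p : H → ℝ := fun x => (W x x).re with hp
  have hp_lb : ∀ x, m^2*‖x‖^2 ≤ p x := fun x =>
    ge_of_tendsto (hre x) (Eventually.of_forall fun N => (hbd N x).1)
  have hp_ub : ∀ x, p x ≤ M^2*‖x‖^2 := fun x =>
    le_of_tendsto (hre x) (Eventually.of_forall fun N => (hbd N x).2)
  -- notation for symmetric differences
  set D : S → ℕ → Finset S := fun s N =>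
    ((F N).image (· * s) \ F N) ∪ (F N \ (F N).image (· * s)) with hD
  -- subinvariance of p
  have hsub : ∀ (g : S) (z : H), p z ≤ p (π g z) := by
    intro g z
    have key : ∀ N, (1 / c N) * ∑ t ∈ F N, ‖π t z‖^2
        ≤ (1 / c N) * ∑ t ∈ F N, ‖π t (π g z)‖^2
          + ‖z‖^2 * ((1 / c N) * ∑ t ∈ D g N, ‖π t‖^2) := by
      intro N
      have h0 := count_lower (F N) (· * g) (fun h => ‖π h z‖^2) (fun h => sq_nonneg _)
      have h1 : ∀ t ∈ F N, ‖π ((fun x => x * g) t) z‖^2 = ‖π t (π g z)‖^2 := by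
        intro t _
        rw [hrep t g]
        rfl
      rw [Finset.sum_congr rfl h1] at h0
      have h2 : ∑ h ∈ F N \ (F N).image (· * g), ‖π h z‖^2
          ≤ ‖z‖^2 * ∑ t ∈ D g N, ‖π t‖^2 := by
        have h2a : ∑ h ∈ F N \ (F N).image (· * g), ‖π h z‖^2
            ≤ ∑ h ∈ F N \ (F N).image (· * g), ‖π h‖^2 * ‖z‖^2 := by
          refine Finset.sum_le_sum fun h _ => ?_
          have := (π h).le_opNorm z
          nlinarith [norm_nonneg (π h z), norm_nonneg z, norm_nonneg (π h)]
        have h2b : ∑ h ∈ F N \ (F N).image (· * g), ‖π h‖^2 * ‖z‖^2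
            ≤ ∑ h ∈ D g N, ‖π h‖^2 * ‖z‖^2 := by
          refine Finset.sum_le_sum_of_subset_of_nonneg Finset.subset_union_right
            (fun i _ _ => by positivity)
        have h2c : ∑ h ∈ D g N, ‖π h‖^2 * ‖z‖^2 = ‖z‖^2 * ∑ t ∈ D g N, ‖π t‖^2 := by
          rw [← Finset.sum_mul]; ring
        linarith
      have h3 : ∑ t ∈ F N, ‖π t z‖^2
          ≤ (∑ t ∈ F N, ‖π t (π g z)‖^2) + ‖z‖^2 * ∑ t ∈ D g N, ‖π t‖^2 := by linarith
      have h4 := mul_le_mul_of_nonneg_left h3 (hcinv N).le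
      calc (1 / c N) * ∑ t ∈ F N, ‖π t z‖^2
          ≤ (1 / c N) * ((∑ t ∈ F N, ‖π t (π g z)‖^2) + ‖z‖^2 * ∑ t ∈ D g N, ‖π t‖^2) := h4
      _ = (1 / c N) * ∑ t ∈ F N, ‖π t (π g z)‖^2
            + ‖z‖^2 * ((1 / c N) * ∑ t ∈ D g N, ‖π t‖^2) := by ring
    have t1 : Tendsto (fun N => (1 / c N) * ∑ t ∈ F N, ‖π t z‖^2) ↑U (nhds (p z)) := hre z
    have t2 : Tendsto (fun N => (1 / c N) * ∑ t ∈ F N, ‖π t (π g z)‖^2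
        + ‖z‖^2 * ((1 / c N) * ∑ t ∈ D g N, ‖π t‖^2)) ↑U (nhds (p (π g z) + ‖z‖^2 * 0)) := by
      refine (hre (π g z)).add ?_
      exact (((hsd g).mono_left hU)).const_mul (‖z‖^2)
    have := le_of_tendsto_of_tendsto' t1 t2 key
    simpa using this
  -- uniform bound on the representation
  have hKbound : ∀ (s : S) (x : H), ‖π s x‖^2 ≤ (2*M^4/m^2) * ‖x‖^2 := by
    intro s x
    have hev : ∀ᶠ N in Filter.atTop, (((D s N).card : ℝ) / c N) < 1/2 := by
      have h00 := hFolner s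
      exact h00.eventually (Filter.Tendsto.eventually_lt_const (by norm_num) tendsto_id)
    obtain ⟨J, hJ⟩ := hev.exists
    set I : Finset S := (F J).image (· * s) with hIdef
    have hFI : ((F J \ I).card : ℝ) ≤ ((D s J).card : ℝ) := by
      exact_mod_cast Finset.card_le_card (Finset.subset_union_right (s₁ := I \ F J))
    have hJ' : ((D s J).card : ℝ) < c J / 2 := by
      rw [div_lt_iff₀ (hcpos J)] at hJ
      linarith
    have hcardFI : c J / 2 ≤ ((F J ∩ I).card : ℝ) := by
      have h0 : (F J ∩ I).card + (F J \ I).card = (F J).card :=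
        Finset.card_inter_add_card_sdiff (F J) I
      have h1 : ((F J ∩ I).card : ℝ) + ((F J \ I).card : ℝ) = c J := by
        simp only [hc]
        exact_mod_cast h0
      linarith
    -- pointwise estimate on F J ∩ I
    have hpt : ∀ t ∈ F J ∩ I, m^2 * ‖π s x‖^2 ≤ M^2 * ‖π t x‖^2 := by
      intro t ht
      obtain ⟨g, hg, hgt⟩ := Finset.mem_image.mp (Finset.mem_of_mem_inter_right ht)
      have h1 : m^2*‖π s x‖^2 ≤ p (π s x) := hp_lb _
      have h2 : p (π s x) ≤ p (π g (π s x)) := hsub g _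
      have h3 : π g (π s x) = π t x := by
        rw [← hgt, hrep g s]
        rfl
      have h4 : p (π t x) ≤ M^2 * ‖π t x‖^2 := hp_ub _
      rw [h3] at h2
      linarith
    -- summation
    have hsum1 : ((F J ∩ I).card : ℝ) * (m^2 * ‖π s x‖^2) ≤ M^2 * ∑ t ∈ F J ∩ I, ‖π t x‖^2 := by
      have := Finset.card_nsmul_le_sum (F J ∩ I) (fun t => M^2 * ‖π t x‖^2)
        (m^2 * ‖π s x‖^2) hpt
      rw [nsmul_eq_mul] at this
      rw [← Finset.mul_sum] at this
      exact this
    have hsum2 : ∑ t ∈ F J ∩ I, ‖π t x‖^2 ≤ ∑ t ∈ F J, ‖π t x‖^2 :=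
      Finset.sum_le_sum_of_subset_of_nonneg Finset.inter_subset_left (fun i _ _ => sq_nonneg _)
    have hsum3 : ∑ t ∈ F J, ‖π t x‖^2 ≤ c J * (M^2 * ‖x‖^2) := by
      have h1 := (hbd J x).2
      rw [div_mul_eq_mul_div, div_le_iff₀ (hcpos J), one_mul] at h1
      linarith
    -- combine
    have hQ : 0 ≤ ‖π s x‖^2 := sq_nonneg _
    have hX : 0 ≤ ‖x‖^2 := sq_nonneg _
    have hchain : (c J / 2) * (m^2 * ‖π s x‖^2) ≤ c J * (M^2 * (M^2 * ‖x‖^2)) := by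
      have e1 : (c J / 2) * (m^2 * ‖π s x‖^2) ≤ ((F J ∩ I).card : ℝ) * (m^2 * ‖π s x‖^2) := by
        apply mul_le_mul_of_nonneg_right hcardFI
        positivity
      have e2 : M^2 * ∑ t ∈ F J ∩ I, ‖π t x‖^2 ≤ M^2 * (c J * (M^2 * ‖x‖^2)) := by
        apply mul_le_mul_of_nonneg_left _ (by positivity)
        linarith
      calc (c J / 2) * (m^2 * ‖π s x‖^2) ≤ ((F J ∩ I).card : ℝ) * (m^2 * ‖π s x‖^2) := e1
      _ ≤ M^2 * ∑ t ∈ F J ∩ I, ‖π t x‖^2 := hsum1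
      _ ≤ M^2 * (c J * (M^2 * ‖x‖^2)) := e2
      _ = c J * (M^2 * (M^2 * ‖x‖^2)) := by ring
    have hcJ := hcpos J
    rw [div_mul_eq_mul_div] at hchain
    have hchain2 : m^2 * ‖π s x‖^2 ≤ 2 * (M^2 * (M^2 * ‖x‖^2)) := by
      nlinarith
    rw [div_mul_eq_mul_div, le_div_iff₀ (by positivity : (0:ℝ) < m^2)]
    nlinarith
  -- invariance of W
  have hWinv : ∀ (s : S) (x y : H), W (π s x) (π s y) = W x y := by
    intro s x y
    set Cb : ℝ := (2*M^4/m^2)/2 * (‖x‖^2 + ‖y‖^2) with hCb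
    have hCb0 : 0 ≤ Cb := by positivity
    have hfb : ∀ h : S, ‖⟪π h x, π h y⟫‖ ≤ Cb := by
      intro h
      refine (norm_inner_le_norm _ _).trans ?_
      have h1 := hKbound h x
      have h2 := hKbound h y
      rw [hCb]
      nlinarith [sq_nonneg (‖π h x‖ - ‖π h y‖), norm_nonneg (π h x), norm_nonneg (π h y)]
    have keyN : ∀ N, ‖q N (π s x) (π s y) - q N x y‖
        ≤ 2 * Cb * (((D s N).card : ℝ) / c N) := by
      intro N
      have hq1 : ∀ g ∈ F N, ⟪π g (π s x), π g (π s y)⟫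
          = (fun h => ⟪π h x, π h y⟫) ((fun u => u * s) g) := by
        intro g _
        simp only
        rw [hrep g s]
        rfl
      have hcount := count_near (F N) (· * s) (fun h => ⟪π h x, π h y⟫) Cb hCb0 hfb
      have e1 : ‖q N (π s x) (π s y) - q N x y‖
          = (1 / c N) * ‖(∑ g ∈ F N, (fun h => ⟪π h x, π h y⟫) ((fun u => u * s) g))
              - ∑ g ∈ F N, ⟪π g x, π g y⟫‖ := by
        rw [hq]
        simp only
        rw [← Finset.sum_congr rfl hq1]
        rw [← mul_sub, norm_mul, Complex.norm_real, Real.norm_eq_abs, abs_of_pos (hcinv N)]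
      rw [e1]
      calc (1 / c N) * ‖(∑ g ∈ F N, (fun h => ⟪π h x, π h y⟫) ((fun u => u * s) g))
              - ∑ g ∈ F N, ⟪π g x, π g y⟫‖
          ≤ (1 / c N) * (2 * Cb * ((D s N).card : ℝ)) :=
            mul_le_mul_of_nonneg_left hcount (hcinv N).le
      _ = 2 * Cb * (((D s N).card : ℝ) / c N) := by ring
    have hto0 : Tendsto (fun N => 2 * Cb * (((D s N).card : ℝ) / c N)) ↑U (nhds 0) := by
      have h0 := (hFolner s).mono_left hU
      have := h0.const_mul (2*Cb)
      simpa using this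
    have hdiff : Tendsto (fun N => q N (π s x) (π s y) - q N x y) ↑U (nhds 0) :=
      squeeze_zero_norm keyN hto0
    have huniq := tendsto_nhds_unique ((hW (π s x) (π s y)).sub (hW x y)) hdiff
    exact sub_eq_zero.mp huniq
  -- algebraic properties of W
  have hW_addr : ∀ x y z : H, W x (y + z) = W x y + W x z := by
    intro x y z
    have hqe : ∀ N, q N x y + q N x z = q N x (y + z) := by
      intro N
      rw [hq]
      simp only
      rw [← mul_add, ← Finset.sum_add_distrib]
      have e : ∀ g ∈ F N, ⟪π g x, π g y⟫ + ⟪π g x, π g z⟫ = ⟪π g x, π g (y + z)⟫ := by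
        intro g _
        rw [map_add (π g), inner_add_right]
      rw [Finset.sum_congr rfl e]
    have h2 : Tendsto (fun N => q N x (y + z)) ↑U (nhds (W x y + W x z)) :=
      ((hW x y).add (hW x z)).congr hqe
    exact tendsto_nhds_unique (hW x (y+z)) h2
  have hW_smulr : ∀ (a : ℂ) (x y : H), W x (a • y) = a * W x y := by
    intro a x y
    have hqe : ∀ N, q N x (a • y) = a * q N x y := by
      intro N
      rw [hq]
      simp only
      have e : ∀ g ∈ F N, ⟪π g x, π g (a • y)⟫ = a * ⟪π g x, π g y⟫ := by
        intro g _
        rw [map_smul (π g), inner_smul_right]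
      rw [Finset.sum_congr rfl e, Finset.mul_sum]
      rw [Finset.mul_sum]
      rw [Finset.mul_sum]
      refine Finset.sum_congr rfl fun g _ => by ring
    have h2 : Tendsto (fun N => q N x (a • y)) ↑U (nhds (a * W x y)) :=
      ((hW x y).const_mul a).congr fun N => (hqe N).symm
    exact tendsto_nhds_unique (hW x (a • y)) h2
  have hW_conj : ∀ x y : H, W y x = conj (W x y) := by
    intro x y
    have hqe : ∀ N, conj (q N x y) = q N y x := by
      intro N
      rw [hq]
      simp only
      rw [map_mul, map_sum]
      congr 1
      · exact Complex.conj_ofReal _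
      · exact Finset.sum_congr rfl fun g _ => inner_conj_symm _ _
    have h2 : Tendsto (fun N => q N y x) ↑U (nhds (conj (W x y))) := by
      have := ((Complex.continuous_conj).tendsto (W x y)).comp (hW x y)
      exact this.congr hqe
    exact tendsto_nhds_unique (hW y x) h2
  have hW_zero_r : ∀ x : H, W x 0 = 0 := by
    intro x
    have := hW_smulr 0 x 0
    simpa using this
  have hW_norm2 : ∀ x y : H, ‖W x y‖ ≤ M^2/2 * (‖x‖^2 + ‖y‖^2) := fun x y =>
    le_of_tendsto (hW x y).norm (Eventually.of_forall fun N => qbound N x y)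
  have hW_norm : ∀ x y : H, ‖W x y‖ ≤ M^2 * ‖x‖ * ‖y‖ := by
    intro x y
    rcases eq_or_ne y 0 with rfl | hy
    · simp [hW_zero_r x]
    rcases eq_or_ne x 0 with rfl | hx
    · rw [show W 0 y = conj (W y 0) from hW_conj y 0, hW_zero_r y]
      simp
    have hy0 : 0 < ‖y‖ := norm_pos_iff.mpr hy
    have hx0 : 0 < ‖x‖ := norm_pos_iff.mpr hx
    set t : ℝ := ‖x‖ / ‖y‖ with ht
    have htpos : 0 < t := by positivity
    have h1 : ‖W x ((t:ℂ) • y)‖ ≤ M^2/2*(‖x‖^2 + ‖(t:ℂ) • y‖^2) := hW_norm2 x _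
    rw [hW_smulr, norm_mul] at h1
    have h2 : ‖(t:ℂ)‖ = t := by
      rw [Complex.norm_real, Real.norm_eq_abs]
      exact abs_of_pos htpos
    have h3 : ‖(t:ℂ) • y‖ = t * ‖y‖ := by rw [norm_smul, h2]
    rw [h2, h3] at h1
    have h4 : t * ‖y‖ = ‖x‖ := div_mul_cancel₀ _ hy0.ne'
    rw [h4] at h1
    -- h1 : t * ‖W x y‖ ≤ M^2/2 * (‖x‖^2 + ‖x‖^2)
    have h5 : t * ‖W x y‖ ≤ M^2 * ‖x‖^2 := by nlinarith
    have h6 : ‖W x y‖ ≤ (M^2 * ‖x‖^2) / t := by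
      rw [le_div_iff₀ htpos]
      linarith [h5]
    refine h6.trans ?_
    refine le_of_eq ?_
    rw [ht]
    field_simp
  -- left-argument linearity
  have hW_addl : ∀ x y z : H, W (x + y) z = W x z + W y z := by
    intro x y z
    rw [hW_conj z (x+y), hW_conj z x, hW_conj z y, hW_addr z x y, map_add]
  have hW_smull : ∀ (a : ℂ) (x y : H), W (a • x) y = conj a * W x y := by
    intro a x y
    rw [hW_conj y (a • x), hW_smulr a y x, map_mul, ← hW_conj y x]
  -- construct the operator G with ⟪G x, y⟫ = W x y
  obtain ⟨G, hG⟩ : ∃ G : H →L[ℂ] H, ∀ x y, ⟪G x, y⟫ = W x y := by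
    have hMx : ∀ x : H, (0:ℝ) ≤ M^2 * ‖x‖ := fun x => by positivity
    let φ : H → StrongDual ℂ H := fun x => LinearMap.mkContinuous
      { toFun := fun y => W x y
        map_add' := hW_addr x
        map_smul' := fun a y => by simpa using hW_smulr a x y }
      (M^2 * ‖x‖) (fun y => by
        simpa [mul_assoc] using hW_norm x y)
    have hφ : ∀ x y, φ x y = W x y := fun x y => rfl
    let V : H → H := fun x => (InnerProductSpace.toDual ℂ H).symm (φ x)
    have hV : ∀ x y, ⟪V x, y⟫ = W x y := fun x y => by
      rw [show (⟪V x, y⟫ : ℂ) = φ x y from InnerProductSpace.toDual_symm_apply]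
      exact hφ x y
    have hVadd : ∀ x y : H, V (x + y) = V x + V y := by
      intro x y
      refine ext_inner_right ℂ fun z => ?_
      rw [hV (x+y) z, inner_add_left, hV x z, hV y z, hW_addl]
    have hVsmul : ∀ (a : ℂ) (x : H), V (a • x) = a • V x := by
      intro a x
      refine ext_inner_right ℂ fun z => ?_
      rw [hV (a • x) z, inner_smul_left, hV x z, hW_smull]
    have hVbound : ∀ x : H, ‖V x‖ ≤ M^2 * ‖x‖ := by
      intro x
      have h1 : ‖V x‖ = ‖φ x‖ :=
        LinearIsometryEquiv.norm_map (InnerProductSpace.toDual ℂ H).symm (φ x)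
      rw [h1]
      exact LinearMap.mkContinuous_norm_le _ (hMx x) _
    exact ⟨LinearMap.mkContinuous
      { toFun := V
        map_add' := hVadd
        map_smul' := fun a x => by simpa using hVsmul a x } (M^2) (fun x => by
          simpa [mul_assoc] using hVbound x), fun x y => hV x y⟩
  -- G is selfadjoint and positive
  have hGsym : ∀ x y : H, ⟪G x, y⟫ = ⟪x, G y⟫ := by
    intro x y
    rw [hG x y, ← inner_conj_symm x (G y), hG y x, hW_conj x y]
    exact (Complex.conj_conj _).symm
  have hGsa : IsSelfAdjoint G :=
    ContinuousLinearMap.isSelfAdjoint_iff_isSymmetric.mpr fun x y => hGsym x y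
  have hGre : ∀ x : H, Complex.re ⟪G x, x⟫ = p x := fun x => by rw [hG x x]
  have hGpos : (0:H →L[ℂ] H) ≤ G := by
    rw [ContinuousLinearMap.nonneg_iff_isPositive]
    refine ⟨ContinuousLinearMap.isSelfAdjoint_iff_isSymmetric.mp hGsa, fun x => ?_⟩
    have h1 : ContinuousLinearMap.reApplyInnerSelf G x = Complex.re ⟪G x, x⟫ := rfl
    rw [h1, hGre x]
    have := hp_lb x
    nlinarith [sq_nonneg ‖x‖, sq_nonneg (m*‖x‖)]
  -- square root of G
  obtain ⟨R, hRsa, hRR⟩ : ∃ R : H →L[ℂ] H, IsSelfAdjoint R ∧ ∀ z, R (R z) = G z := by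
    refine ⟨CFC.sqrt G, IsSelfAdjoint.of_nonneg (CFC.sqrt_nonneg (a := G)), fun z => ?_⟩
    have h := CFC.sq_sqrt G hGpos
    have h2 : CFC.sqrt G * CFC.sqrt G = G := by rwa [sq] at h
    calc CFC.sqrt G (CFC.sqrt G z) = (CFC.sqrt G * CFC.sqrt G) z := rfl
    _ = G z := by rw [h2]
  have hRsym : ∀ a b : H, ⟪R a, b⟫ = ⟪a, R b⟫ :=
    fun a b => (ContinuousLinearMap.isSelfAdjoint_iff_isSymmetric.mp hRsa) a b
  have hRn : ∀ z : H, ‖R z‖^2 = p z := by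
    intro z
    have h1 : ⟪G z, z⟫ = ⟪R z, R z⟫ := by
      rw [← hRR z]
      exact hRsym (R z) z
    have h2 : ⟪R z, R z⟫ = ((‖R z‖^2 : ℝ) : ℂ) := by
      rw [inner_self_eq_norm_sq_to_K]
      norm_cast
    have h3 : Complex.re ⟪G z, z⟫ = p z := hGre z
    rw [h1, h2] at h3
    rw [Complex.ofReal_re] at h3
    exact h3
  have hRlow : ∀ z : H, m * ‖z‖ ≤ ‖R z‖ := by
    intro z
    have h1 : (m * ‖z‖)^2 ≤ ‖R z‖^2 := by
      rw [hRn z, mul_pow]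
      exact hp_lb z
    exact le_of_pow_le_pow_left₀ two_ne_zero (norm_nonneg _) h1
  have hRhigh : ∀ z : H, ‖R z‖ ≤ M * ‖z‖ := by
    intro z
    have h1 : ‖R z‖^2 ≤ (M * ‖z‖)^2 := by
      rw [hRn z, mul_pow]
      exact hp_ub z
    exact le_of_pow_le_pow_left₀ two_ne_zero (by positivity) h1
  -- R is bijective
  have hker : LinearMap.ker (R : H →ₗ[ℂ] H) = ⊥ := by
    rw [Submodule.eq_bot_iff]
    intro x hx
    have hx0 : R x = 0 := hx
    have := hRlow x
    rw [hx0, norm_zero] at this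
    have hxn : ‖x‖ = 0 := le_antisymm (by nlinarith [norm_nonneg x]) (norm_nonneg x)
    exact norm_eq_zero.mp hxn
  have hclosed : IsClosed ((LinearMap.range (R : H →ₗ[ℂ] H) : Submodule ℂ H) : Set H) := by
    have hanti : AntilipschitzWith (Real.toNNReal m⁻¹) R := by
      refine ContinuousLinearMap.antilipschitz_of_bound R fun x => ?_
      have h1 := hRlow x
      have h2 : ((Real.toNNReal m⁻¹ : NNReal) : ℝ) = m⁻¹ := Real.coe_toNNReal _ (by positivity)
      rw [h2]
      rw [inv_mul_eq_div, le_div_iff₀ hm, mul_comm]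
      exact h1
    have := hanti.isClosed_range R.uniformContinuous
    rwa [show ((LinearMap.range (R : H →ₗ[ℂ] H) : Submodule ℂ H) : Set H) = Set.range R from
      LinearMap.coe_range _]
  have hrange : LinearMap.range (R : H →ₗ[ℂ] H) = ⊤ := by
    haveI : CompleteSpace (LinearMap.range (R : H →ₗ[ℂ] H) : Submodule ℂ H) := hclosed.completeSpace_coe
    rw [← Submodule.orthogonal_eq_bot_iff (K := LinearMap.range (R : H →ₗ[ℂ] H))]
    rw [Submodule.eq_bot_iff]
    intro y hy
    have h0 : ⟪G y, y⟫ = 0 := by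
      have hmem : G y ∈ LinearMap.range (R : H →ₗ[ℂ] H) := by
        rw [← hRR y]
        exact ⟨R y, rfl⟩
      exact (Submodule.mem_orthogonal _ y).mp hy (G y) hmem
    have h1 : p y = 0 := by
      rw [← hGre y, h0]
      simp
    have h2 := hp_lb y
    have hyn : ‖y‖ = 0 := by
      rw [h1] at h2
      have hm2 : (0:ℝ) < m^2 := by positivity
      have h2' : m^2 * ‖y‖^2 ≤ m^2 * 0 := by simpa using h2
      have h4 : ‖y‖^2 ≤ 0 := le_of_mul_le_mul_left h2' hm2
      have h3 : ‖y‖^2 = 0 := le_antisymm h4 (sq_nonneg _)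
      exact pow_eq_zero_iff two_ne_zero |>.mp h3
    exact norm_eq_zero.mp hyn
  set Req : H ≃L[ℂ] H := ContinuousLinearEquiv.ofBijective R hker hrange with hReqdef
  have hReqap : ∀ z : H, Req z = R z := fun z => rfl
  refine ⟨Req.symm, ?_, ?_⟩
  · -- norm bound
    have hn1 : ‖((Req.symm.symm : H ≃L[ℂ] H) : H →L[ℂ] H)‖ ≤ M := by
      refine ContinuousLinearMap.opNorm_le_bound _ hM.le fun z => ?_
      have h1 : ((Req.symm.symm : H ≃L[ℂ] H) : H →L[ℂ] H) z = R z := by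
        rw [ContinuousLinearEquiv.symm_symm]
        exact hReqap z
      rw [h1]
      exact hRhigh z
    have hn2 : ‖((Req.symm : H ≃L[ℂ] H) : H →L[ℂ] H)‖ ≤ m⁻¹ := by
      refine ContinuousLinearMap.opNorm_le_bound _ (by positivity) fun x => ?_
      have h1 : m * ‖Req.symm x‖ ≤ ‖R (Req.symm x)‖ := hRlow _
      have h2 : R (Req.symm x) = x := by
        rw [← hReqap]
        exact Req.apply_symm_apply x
      rw [h2] at h1
      rw [inv_mul_eq_div, le_div_iff₀ hm, mul_comm]
      exact h1
    calc ‖((Req.symm.symm : H ≃L[ℂ] H) : H →L[ℂ] H)‖ * ‖((Req.symm : H ≃L[ℂ] H) : H →L[ℂ] H)‖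
        ≤ M * m⁻¹ := by
          apply mul_le_mul hn1 hn2 (norm_nonneg _) hM.le
    _ = M / m := by rw [div_eq_mul_inv]
  · -- isometry
    intro s x
    set z : H := Req.symm x with hz
    have hRzx : R z = x := by
      rw [← hReqap]
      exact Req.apply_symm_apply x
    have e1 : (Req.symm.symm : H ≃L[ℂ] H) (π s ((Req.symm : H ≃L[ℂ] H) x)) = R (π s z) := by
      rw [ContinuousLinearEquiv.symm_symm]
      exact hReqap _
    rw [e1]
    have e2 : ‖R (π s z)‖^2 = ‖x‖^2 := by
      rw [hRn (π s z)]
      have h1 : p (π s z) = p z := by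
        simp only [hp]
        rw [hWinv s z z]
      rw [h1, ← hRn z, hRzx]
    have := congrArg Real.sqrt e2
    rwa [Real.sqrt_sq (norm_nonneg _), Real.sqrt_sq (norm_nonneg _)] at this
end

section
/- Let S be a semigroup and π : S → B(H) a representation such that m²I ≤ π(s)*π(s) ≤ M²I for all s ∈ S, for some 0 < m ≤ M. Suppose m_r is a right invariant mean on the bounded functions on S (m_r(f(·s)) = m_r(f) for all s). Then |x|² = m_r(t ↦ ‖π(t)x‖²) defines an equivalent Hilbertian norm with m‖x‖ ≤ |x| ≤ M‖x‖ in which every π(s) is an isometry; hence there is an invertible L ∈ B(H) with ‖L⁻¹‖‖L‖ ≤ M/m such that L⁻¹π(·)L is an isometric representation. -/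
open scoped ComplexConjugate

set_option maxHeartbeats 1000000 in
theorem aux_exists_T {S : Type*}
    {H : Type*} [NormedAddCommGroup H] [InnerProductSpace ℂ H] [CompleteSpace H]
    (π : S → (H →L[ℂ] H)) (M : ℝ) (hM : 0 ≤ M)
    (hbd : ∀ (s : S) (x : H), ‖π s x‖ ≤ M * ‖x‖)
    (mean : (S → ℝ) → ℝ)
    (hadd : ∀ f g : S → ℝ, mean (f + g) = mean f + mean g)
    (hsmul : ∀ (c : ℝ) (f : S → ℝ), mean (c • f) = c * mean f)
    (hmono : ∀ f g : S → ℝ, (∀ t, f t ≤ g t) → mean f ≤ mean g)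
    (hone : mean (fun _ => 1) = 1) :
    ∃ T : H →L[ℂ] H, IsSelfAdjoint T ∧
      ∀ x : H, (inner ℂ (T x) x : ℂ) = ((mean fun t => ‖π t x‖ ^ 2 : ℝ) : ℂ) := by
  -- basic mean lemmas
  have hconst : ∀ c : ℝ, mean (fun _ => c) = c := by
    intro c
    have h := hsmul c (fun _ => 1)
    rw [hone, mul_one] at h
    calc (mean fun _ => c) = mean (c • fun _ => (1:ℝ)) := by
          congr 1
          funext t
          simp
      _ = c := h
  have hmean_add : ∀ f g : S → ℝ, mean (fun t => f t + g t) = mean f + mean g :=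
    fun f g => hadd f g
  have hmean_smul : ∀ (c : ℝ) (f : S → ℝ), mean (fun t => c * f t) = c * mean f :=
    fun c f => hsmul c f
  have hmean_neg : ∀ f : S → ℝ, mean (fun t => -(f t)) = -mean f := by
    intro f
    have h := hsmul (-1) f
    simp at h; exact h
  have hmean_congr : ∀ f g : S → ℝ, (∀ t, f t = g t) → mean f = mean g := by
    intro f g h
    congr 1
    exact funext h
  have habs : ∀ (f : S → ℝ) (c : ℝ), (∀ t, |f t| ≤ c) → |mean f| ≤ c := by
    intro f c h
    rw [abs_le]
    constructor
    · have := hmono (fun _ => -c) f (fun t => (abs_le.mp (h t)).1)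
      rwa [hconst] at this
    · have := hmono f (fun _ => c) (fun t => (abs_le.mp (h t)).2)
      rwa [hconst] at this
  -- the real part form
  set Br : H → H → ℝ := fun x y => mean (fun t => RCLike.re (inner ℂ (π t x) (π t y) : ℂ))
    with hBrdef
  -- the complex form
  set Bc : H → H → ℂ := fun x y =>
    ((Br x y : ℝ) : ℂ) - Complex.I * ((Br x (Complex.I • y) : ℝ) : ℂ) with hBcdef
  -- bound on Br
  have hBr_bound : ∀ x y : H, |Br x y| ≤ M ^ 2 * ‖x‖ * ‖y‖ := by
    intro x y
    apply habs
    intro t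
    calc |RCLike.re (inner ℂ (π t x) (π t y) : ℂ)| ≤ ‖(inner ℂ (π t x) (π t y) : ℂ)‖ :=
        RCLike.abs_re_le_norm _
      _ ≤ ‖π t x‖ * ‖π t y‖ := norm_inner_le_norm _ _
      _ ≤ (M * ‖x‖) * (M * ‖y‖) :=
          mul_le_mul (hbd t x) (hbd t y) (norm_nonneg _) (by positivity)
      _ = M ^ 2 * ‖x‖ * ‖y‖ := by ring
  -- additivity in the second variable
  have hBr_add : ∀ x y z : H, Br x (y + z) = Br x y + Br x z := by
    intro x y z
    rw [hBrdef]
    simp only [map_add, inner_add_right]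
    rw [← hmean_add]
  have hBr_smul : ∀ (r : ℝ) (x y : H), Br x (r • y) = r * Br x y := by
    intro r x y
    rw [hBrdef]
    simp only []
    rw [← hmean_smul]
    apply hmean_congr
    intro t
    rw [ContinuousLinearMap.map_smul_of_tower, RCLike.real_smul_eq_coe_smul (K := ℂ),
      inner_smul_right, RCLike.re_ofReal_mul]
  -- symmetry of the real part
  have hBr_symm : ∀ x y : H, Br x y = Br y x := by
    intro x y
    apply hmean_congr
    intro t
    exact inner_re_symm _ _
  -- the skewness identity: Br y (I • x) = - Br x (I • y)
  have hBr_skew : ∀ x y : H, Br y (Complex.I • x) = -Br x (Complex.I • y) := by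
    intro x y
    rw [← hmean_neg]
    apply hmean_congr
    intro t
    rw [ContinuousLinearMap.map_smul, ContinuousLinearMap.map_smul,
      inner_smul_right, inner_smul_right]
    simp only [RCLike.re_to_complex, Complex.mul_re, Complex.I_re, Complex.I_im]
    rw [← inner_conj_symm ((π t) x) ((π t) y), Complex.conj_im]
    ring
  -- Bc is hermitian
  have hBc_herm : ∀ x y : H, Bc y x = conj (Bc x y) := by
    intro x y
    rw [hBcdef]
    simp only [map_sub, map_mul, Complex.conj_I, Complex.conj_ofReal]
    rw [hBr_symm y x, hBr_skew x y]
    push_cast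
    ring
  -- Bc additive in second variable
  have hBc_add : ∀ x y z : H, Bc x (y + z) = Bc x y + Bc x z := by
    intro x y z
    rw [hBcdef]
    simp only [smul_add]
    rw [hBr_add, hBr_add]
    push_cast
    ring
  -- Bc real-homogeneous in second variable
  have hBc_rsmul : ∀ (r : ℝ) (x y : H), Bc x (r • y) = (r : ℂ) * Bc x y := by
    intro r x y
    rw [hBcdef]
    simp only [smul_comm Complex.I (r : ℝ)]
    rw [hBr_smul, hBr_smul]
    push_cast
    ring
  -- Bc I-homogeneous in second variable
  have hBc_Ismul : ∀ x y : H, Bc x (Complex.I • y) = Complex.I * Bc x y := by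
    intro x y
    rw [hBcdef]
    simp only []
    have h1 : Complex.I • Complex.I • y = (-1 : ℝ) • y := by
      rw [smul_smul, Complex.I_mul_I, RCLike.real_smul_eq_coe_smul (K := ℂ)]
      norm_num
    rw [h1, hBr_smul]
    have hI : Complex.I * Complex.I = -1 := Complex.I_mul_I
    push_cast
    linear_combination ((Br x (Complex.I • y) : ℝ) : ℂ) * hI
  -- Bc ℂ-homogeneous in second variable
  have hBc_smul : ∀ (c : ℂ) (x y : H), Bc x (c • y) = c * Bc x y := by
    intro c x y
    have hdecomp : c • y = (c.re : ℝ) • y + (c.im : ℝ) • (Complex.I • y) := by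
      rw [RCLike.real_smul_eq_coe_smul (K := ℂ), RCLike.real_smul_eq_coe_smul (K := ℂ),
        smul_smul, ← add_smul]
      congr 1
      exact (Complex.re_add_im c).symm
    rw [hdecomp, hBc_add, hBc_rsmul, hBc_rsmul, hBc_Ismul]
    linear_combination Bc x y * Complex.re_add_im c
  -- conjugate-linearity in the first variable
  have hBc_add_left : ∀ x x' y : H, Bc (x + x') y = Bc x y + Bc x' y := by
    intro x x' y
    rw [hBc_herm, hBc_add, map_add, ← hBc_herm, ← hBc_herm]
  have hBc_smul_left : ∀ (c : ℂ) (x y : H), Bc (c • x) y = conj c * Bc x y := by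
    intro c x y
    rw [hBc_herm, hBc_smul, map_mul, ← hBc_herm]
  -- norm bound on Bc
  have hBc_bound : ∀ x y : H, ‖Bc x y‖ ≤ 2 * M ^ 2 * ‖x‖ * ‖y‖ := by
    intro x y
    rw [hBcdef]
    calc ‖((Br x y : ℝ) : ℂ) - Complex.I * ((Br x (Complex.I • y) : ℝ) : ℂ)‖
        ≤ ‖((Br x y : ℝ) : ℂ)‖ + ‖Complex.I * ((Br x (Complex.I • y) : ℝ) : ℂ)‖ :=
          norm_sub_le _ _
      _ = |Br x y| + |Br x (Complex.I • y)| := by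
          rw [norm_mul, Complex.norm_I, one_mul, Complex.norm_real, Complex.norm_real,
            Real.norm_eq_abs, Real.norm_eq_abs]
      _ ≤ M ^ 2 * ‖x‖ * ‖y‖ + M ^ 2 * ‖x‖ * ‖Complex.I • y‖ :=
          add_le_add (hBr_bound _ _) (hBr_bound _ _)
      _ = 2 * M ^ 2 * ‖x‖ * ‖y‖ := by
          rw [norm_smul, Complex.norm_I, one_mul]; ring
  -- construct the operator pointwise via Riesz representation
  have hT : ∀ x : H, ∃ w : H, ∀ y, (inner ℂ w y : ℂ) = Bc x y := by
    intro x
    have hbound : ∀ y : H, ‖Bc x y‖ ≤ 2 * M ^ 2 * ‖x‖ * ‖y‖ := fun y => hBc_bound x y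
    let ℓ : H →ₗ[ℂ] ℂ :=
      { toFun := fun y => Bc x y
        map_add' := hBc_add x
        map_smul' := fun c y => by simpa using hBc_smul c x y }
    let ℓc : H →L[ℂ] ℂ := LinearMap.mkContinuous ℓ (2 * M ^ 2 * ‖x‖) hbound
    refine ⟨(InnerProductSpace.toDual ℂ H).symm ℓc, fun y => ?_⟩
    exact InnerProductSpace.toDual_symm_apply
  choose T0 hT0 using hT
  have hT0add : ∀ x x', T0 (x + x') = T0 x + T0 x' := by
    intro x x'
    apply ext_inner_right ℂ
    intro y
    rw [inner_add_left, hT0, hT0, hT0, hBc_add_left]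
  have hT0smul : ∀ (c : ℂ) x, T0 (c • x) = c • T0 x := by
    intro c x
    apply ext_inner_right ℂ
    intro y
    rw [inner_smul_left, hT0, hT0, hBc_smul_left]
  have hT0bound : ∀ x, ‖T0 x‖ ≤ 2 * M ^ 2 * ‖x‖ := by
    intro x
    rcases eq_or_ne (T0 x) 0 with h | h
    · rw [h, norm_zero]
      positivity
    · have h1 : ‖T0 x‖ ^ 2 ≤ ‖(inner ℂ (T0 x) (T0 x) : ℂ)‖ := by
        rw [← inner_self_eq_norm_sq (𝕜 := ℂ) (T0 x)]
        exact RCLike.re_le_norm _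
      have h2 : ‖(inner ℂ (T0 x) (T0 x) : ℂ)‖ ≤ 2 * M ^ 2 * ‖x‖ * ‖T0 x‖ := by
        rw [hT0]
        exact hBc_bound x (T0 x)
      have h3 : (0:ℝ) < ‖T0 x‖ := norm_pos_iff.mpr h
      nlinarith
  let Tl : H →ₗ[ℂ] H :=
    { toFun := T0
      map_add' := hT0add
      map_smul' := fun c x => by simpa using hT0smul c x }
  let T : H →L[ℂ] H := LinearMap.mkContinuous Tl (2 * M ^ 2) (fun x => by
    exact hT0bound x)
  have hTapp : ∀ x : H, T x = T0 x := fun _ => rfl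
  have hTinner : ∀ x y : H, (inner ℂ (T x) y : ℂ) = Bc x y := by
    intro x y
    rw [hTapp]
    exact hT0 x y
  refine ⟨T, ?_, ?_⟩
  · rw [ContinuousLinearMap.isSelfAdjoint_iff_isSymmetric]
    intro x y
    calc (inner ℂ (T x) y : ℂ) = Bc x y := hTinner x y
      _ = conj (Bc y x) := by rw [hBc_herm y x]
      _ = conj (inner ℂ (T y) x : ℂ) := by rw [hTinner]
      _ = (inner ℂ x (T y) : ℂ) := inner_conj_symm _ _
  · intro x
    have hzero : Br x (Complex.I • x) = 0 := by
      have h1 : mean (fun _ => (0:ℝ)) = 0 := hconst 0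
      rw [← h1]
      apply hmean_congr
      intro t
      rw [ContinuousLinearMap.map_smul, inner_smul_right]
      simp [RCLike.re_to_complex, Complex.mul_re, inner_self_im]
      rw [← Complex.ofReal_pow, Complex.ofReal_im]
    have hxx : Br x x = mean (fun t => ‖π t x‖ ^ 2) := by
      apply hmean_congr
      intro t
      exact inner_self_eq_norm_sq _
    rw [hTinner]
    simp only [hBcdef]
    rw [hzero, hxx]
    simp


set_option maxHeartbeats 1000000 in
open ContinuousLinearMap in
theorem aux_exists_L {H : Type*} [NormedAddCommGroup H] [InnerProductSpace ℂ H] [CompleteSpace H]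
    {S : Type*} (π : S → (H →L[ℂ] H))
    (T : H →L[ℂ] H) (hsa : IsSelfAdjoint T)
    (m M : ℝ) (hm : 0 < m) (hmM : m ≤ M)
    (hlow : ∀ x : H, m ^ 2 * ‖x‖ ^ 2 ≤ RCLike.re (inner ℂ (T x) x : ℂ))
    (hup : ∀ x : H, RCLike.re (inner ℂ (T x) x : ℂ) ≤ M ^ 2 * ‖x‖ ^ 2)
    (hq : ∀ (s : S) (x : H), (inner ℂ (T (π s x)) (π s x) : ℂ) = inner ℂ (T x) x) :
    ∃ L : H ≃L[ℂ] H,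
      ‖(L.symm : H →L[ℂ] H)‖ * ‖(L : H →L[ℂ] H)‖ ≤ M / m ∧
      ∀ (s : S) (x : H), ‖L.symm (π s (L x))‖ = ‖x‖ := by
  have hM : 0 < M := lt_of_lt_of_le hm hmM
  -- T is positive
  have hpos : T.IsPositive := by
    refine ⟨hsa.isSymmetric, fun x => ?_⟩
    have := hlow x
    have h0 : (0:ℝ) ≤ m ^ 2 * ‖x‖ ^ 2 := by positivity
    exact le_trans h0 this
  -- lower norm bound for T
  have hTlow : ∀ z : H, m ^ 2 * ‖z‖ ≤ ‖T z‖ := by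
    intro z
    rcases eq_or_ne z 0 with rfl | hz
    · simp
    · have h1 : m ^ 2 * ‖z‖ ^ 2 ≤ ‖(inner ℂ (T z) z : ℂ)‖ :=
        le_trans (hlow z) (RCLike.re_le_norm _)
      have h2 : ‖(inner ℂ (T z) z : ℂ)‖ ≤ ‖T z‖ * ‖z‖ := norm_inner_le_norm _ _
      have hzpos : (0:ℝ) < ‖z‖ := norm_pos_iff.mpr hz
      have := le_trans h1 h2
      nlinarith [this, hzpos]
  -- T is a unit
  have hunit : IsUnit T := by
    refine isUnit_of_forall_le_norm_inner_map T (c := ⟨m ^ 2, by positivity⟩)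
      (by exact_mod_cast (by positivity : (0:ℝ) < m ^ 2)) fun x => ?_
    have h1 : m ^ 2 * ‖x‖ ^ 2 ≤ ‖(inner ℂ (T x) x : ℂ)‖ :=
      le_trans (hlow x) (RCLike.re_le_norm _)
    calc ‖x‖ ^ 2 * (⟨m ^ 2, by positivity⟩ : NNReal) = m ^ 2 * ‖x‖ ^ 2 := by
          simp [mul_comm]
      _ ≤ _ := h1
  -- 0 ≤ T and T ≤ M^2 • 1
  have hT0 : (0 : H →L[ℂ] H) ≤ T := (nonneg_iff_isPositive T).mpr hpos
  have hTle : T ≤ (M ^ 2 : ℝ) • (1 : H →L[ℂ] H) := by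
    rw [le_def]
    constructor
    · have h1 : IsSelfAdjoint ((M ^ 2 : ℝ) • (1 : H →L[ℂ] H)) := by
        rw [IsSelfAdjoint, star_smul, star_one, star_trivial]
      exact (h1.sub hsa).isSymmetric
    · intro x
      have : T.reApplyInnerSelf x ≤ M ^ 2 * ‖x‖ ^ 2 := hup x
      have hx : RCLike.re (inner ℂ (((M ^ 2 : ℝ) • (1 : H →L[ℂ] H) - T) x) x : ℂ)
          = M ^ 2 * ‖x‖ ^ 2 - RCLike.re (inner ℂ (T x) x : ℂ) := by
        rw [sub_apply, inner_sub_left, map_sub, smul_apply, ContinuousLinearMap.one_apply,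
          RCLike.real_smul_eq_coe_smul (K := ℂ), inner_smul_left, RCLike.conj_ofReal,
          RCLike.re_ofReal_mul, inner_self_eq_norm_sq]
      change 0 ≤ RCLike.re (inner ℂ (((M ^ 2 : ℝ) • (1 : H →L[ℂ] H) - T) x) x : ℂ)
      rw [hx]
      linarith [hup x]
  have hTnorm : ‖T‖ ≤ M ^ 2 := by
    have := CStarAlgebra.norm_le_norm_of_nonneg_of_le hT0 hTle
    calc ‖T‖ ≤ ‖(M ^ 2 : ℝ) • (1 : H →L[ℂ] H)‖ := this
      _ = M ^ 2 * ‖(1 : H →L[ℂ] H)‖ := by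
          rw [norm_smul]; simp [abs_of_nonneg (by positivity : (0:ℝ) ≤ M ^ 2)]
      _ ≤ M ^ 2 * 1 := by
          have : ‖(1 : H →L[ℂ] H)‖ ≤ 1 := norm_id_le
          nlinarith
      _ = M ^ 2 := mul_one _
  -- square root
  set sq : H →L[ℂ] H := CFC.sqrt T with hsqdef
  have hsq0 : (0 : H →L[ℂ] H) ≤ sq := CFC.sqrt_nonneg T
  have hsqsa : IsSelfAdjoint sq := IsSelfAdjoint.of_nonneg hsq0
  have hsqmul : sq * sq = T := CFC.sqrt_mul_sqrt_self T hT0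
  have hsqnorm : ‖sq‖ ≤ M := by
    have h1 : ‖sq‖ * ‖sq‖ = ‖T‖ := by
      rw [← hsqmul]
      calc ‖sq‖ * ‖sq‖ = ‖star sq * sq‖ := (CStarRing.norm_star_mul_self).symm
        _ = ‖sq * sq‖ := by rw [hsqsa.star_eq]
    nlinarith [norm_nonneg sq, h1, hTnorm, hM.le]
  -- the unit structure
  set uT : (H →L[ℂ] H)ˣ := hunit.unit with huT
  have huTval : (uT : H →L[ℂ] H) = T := hunit.unit_spec
  set Ti : H →L[ℂ] H := ((uT⁻¹ : (H →L[ℂ] H)ˣ) : H →L[ℂ] H) with hTi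
  have hTi1 : Ti * T = 1 := by rw [hTi, ← huTval]; exact uT.inv_mul
  have hTi2 : T * Ti = 1 := by rw [hTi, ← huTval]; exact uT.mul_inv
  have hsqT : sq * T = T * sq := by rw [← hsqmul, mul_assoc]
  have hcomm : sq * Ti = Ti * sq := by
    calc sq * Ti = 1 * (sq * Ti) := (one_mul _).symm
      _ = (Ti * T) * (sq * Ti) := by rw [hTi1]
      _ = Ti * (T * sq) * Ti := by noncomm_ring
      _ = Ti * (sq * T) * Ti := by rw [hsqT]
      _ = (Ti * sq) * (T * Ti) := by noncomm_ring
      _ = Ti * sq := by rw [hTi2, mul_one]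
  have hvi : sq * (Ti * sq) = 1 := by
    calc sq * (Ti * sq) = (sq * Ti) * sq := (mul_assoc _ _ _).symm
      _ = Ti * (sq * sq) := by rw [hcomm, mul_assoc]
      _ = Ti * T := by rw [hsqmul]
      _ = 1 := hTi1
  have hiv : (Ti * sq) * sq = 1 := by rw [mul_assoc, hsqmul]; exact hTi1
  set u : (H →L[ℂ] H)ˣ := ⟨sq, Ti * sq, hvi, hiv⟩ with hu
  have huval : (u : H →L[ℂ] H) = sq := rfl
  have hstar_uinv : IsSelfAdjoint (Ti * sq) := by
    have h1 : star (Ti * sq) * sq = 1 := by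
      have h2 := congrArg star hvi
      rwa [star_mul, hsqsa.star_eq, star_one] at h2
    have h3 : star (Ti * sq) = star (Ti * sq) * (sq * (Ti * sq)) := by rw [hvi, mul_one]
    rw [IsSelfAdjoint, h3, ← mul_assoc, h1, one_mul]
  -- norm bound on Ti
  have hTinorm : ∀ y : H, ‖Ti y‖ ≤ (m ^ 2)⁻¹ * ‖y‖ := by
    intro y
    have h1 : m ^ 2 * ‖Ti y‖ ≤ ‖T (Ti y)‖ := hTlow _
    have h2 : T (Ti y) = y := by
      have : (T * Ti) y = (1 : H →L[ℂ] H) y := by rw [hTi2]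
      simpa using this
    rw [h2] at h1
    rw [inv_mul_eq_div, le_div_iff₀ (by positivity : (0:ℝ) < m ^ 2), mul_comm]
    exact h1
  have hTinorm' : ‖Ti‖ ≤ (m ^ 2)⁻¹ := by
    apply ContinuousLinearMap.opNorm_le_bound _ (by positivity) hTinorm
  have huinv_norm : ‖Ti * sq‖ ≤ m⁻¹ := by
    have hself : (Ti * sq) * (Ti * sq) = Ti := by
      calc (Ti * sq) * (Ti * sq) = Ti * ((sq * Ti) * sq) := by
            rw [mul_assoc, ← mul_assoc sq Ti sq]
        _ = Ti * (Ti * (sq * sq)) := by rw [hcomm, mul_assoc]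
        _ = Ti * (Ti * T) := by rw [hsqmul]
        _ = Ti * 1 := by rw [hTi1]
        _ = Ti := mul_one _
    have h1 : ‖Ti * sq‖ * ‖Ti * sq‖ = ‖(Ti * sq) * (Ti * sq)‖ := by
      rw [← CStarRing.norm_star_mul_self, hstar_uinv.star_eq]
    rw [hself] at h1
    have h2 : ‖Ti * sq‖ ^ 2 ≤ m⁻¹ ^ 2 := by
      calc ‖Ti * sq‖ ^ 2 = ‖Ti‖ := by rw [pow_two]; exact h1
        _ ≤ (m ^ 2)⁻¹ := hTinorm'
        _ = m⁻¹ ^ 2 := by rw [inv_pow]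
    exact (pow_le_pow_iff_left₀ (norm_nonneg _) (by positivity) (by norm_num)).mp h2
  -- the equivalence
  refine ⟨(ContinuousLinearEquiv.unitsEquiv ℂ H u).symm, ?_, ?_⟩
  · have e1 : (((ContinuousLinearEquiv.unitsEquiv ℂ H u).symm.symm : H ≃L[ℂ] H) : H →L[ℂ] H) = sq := rfl
    have e2 : (((ContinuousLinearEquiv.unitsEquiv ℂ H u).symm : H ≃L[ℂ] H) : H →L[ℂ] H) = Ti * sq := rfl
    rw [e1, e2]
    calc ‖sq‖ * ‖Ti * sq‖ ≤ M * m⁻¹ :=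
        mul_le_mul hsqnorm huinv_norm (norm_nonneg _) hM.le
      _ = M / m := by rw [div_eq_mul_inv]
  · intro s x
    have hLx : (ContinuousLinearEquiv.unitsEquiv ℂ H u).symm x = (Ti * sq) x := rfl
    have hLs : ∀ z : H, (ContinuousLinearEquiv.unitsEquiv ℂ H u).symm.symm z = sq z := fun _ => rfl
    have hsym : ∀ a b : H, (inner ℂ (sq a) b : ℂ) = inner ℂ a (sq b) := fun a b =>
      hsqsa.isSymmetric a b
    have key : ∀ w : H, ‖sq w‖ ^ 2 = RCLike.re (inner ℂ (T w) w : ℂ) := by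
      intro w
      have h4 : (inner ℂ (sq w) (sq w) : ℂ) = inner ℂ w (T w) := by
        calc (inner ℂ (sq w) (sq w) : ℂ) = inner ℂ w (sq (sq w)) := hsym _ _
          _ = inner ℂ w (T w) := by
              congr 1
              have h5 : (sq * sq) w = T w := by rw [hsqmul]
              simpa using h5
      rw [← inner_self_eq_norm_sq (𝕜 := ℂ) (sq w), h4, inner_re_symm]
    have h6 : sq ((Ti * sq) x) = x := by
      have h7 : (sq * (Ti * sq)) x = (1 : H →L[ℂ] H) x := by rw [hvi]
      simpa using h7
    rw [hLx, hLs]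
    have h7 : ‖sq ((π s) ((Ti * sq) x))‖ ^ 2 = ‖x‖ ^ 2 := by
      rw [key, congrArg RCLike.re (hq s ((Ti * sq) x)), ← key, h6]
    have h8 := congrArg Real.sqrt h7
    rwa [Real.sqrt_sq (norm_nonneg _), Real.sqrt_sq (norm_nonneg _)] at h8


set_option maxHeartbeats 1000000 in
theorem isometrizable_of_right_invariant_mean
    {S : Type*} [Semigroup S]
    {H : Type*} [NormedAddCommGroup H] [InnerProductSpace ℂ H] [CompleteSpace H]
    (π : S → (H →L[ℂ] H))
    (hrep : ∀ s t : S, π (s * t) = (π s).comp (π t))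
    (m M : ℝ) (hm : 0 < m) (hmM : m ≤ M)
    (hbd : ∀ (s : S) (x : H), m * ‖x‖ ≤ ‖π s x‖ ∧ ‖π s x‖ ≤ M * ‖x‖)
    (mean : (S → ℝ) → ℝ)
    (hadd : ∀ f g : S → ℝ, mean (f + g) = mean f + mean g)
    (hsmul : ∀ (c : ℝ) (f : S → ℝ), mean (c • f) = c * mean f)
    (hmono : ∀ f g : S → ℝ, (∀ t, f t ≤ g t) → mean f ≤ mean g)
    (hone : mean (fun _ => 1) = 1)
    (hinv : ∀ (f : S → ℝ) (s : S), mean (fun t => f (t * s)) = mean f) :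
    (∀ x : H, m ^ 2 * ‖x‖ ^ 2 ≤ mean (fun t => ‖π t x‖ ^ 2) ∧
      mean (fun t => ‖π t x‖ ^ 2) ≤ M ^ 2 * ‖x‖ ^ 2) ∧
    (∀ (s : S) (x : H),
      mean (fun t => ‖π t (π s x)‖ ^ 2) = mean (fun t => ‖π t x‖ ^ 2)) ∧
    (∃ L : H ≃L[ℂ] H,
      ‖(L.symm : H →L[ℂ] H)‖ * ‖(L : H →L[ℂ] H)‖ ≤ M / m ∧
      ∀ (s : S) (x : H), ‖L.symm (π s (L x))‖ = ‖x‖) := by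
  have hconst : ∀ c : ℝ, mean (fun _ => c) = c := by
    intro c
    have h := hsmul c (fun _ => 1)
    rw [hone, mul_one] at h
    calc (mean fun _ => c) = mean (c • fun _ => (1:ℝ)) := by
          congr 1
          funext t
          simp
      _ = c := h
  -- part 1
  have part1 : ∀ x : H, m ^ 2 * ‖x‖ ^ 2 ≤ mean (fun t => ‖π t x‖ ^ 2) ∧
      mean (fun t => ‖π t x‖ ^ 2) ≤ M ^ 2 * ‖x‖ ^ 2 := by
    intro x
    constructor
    · have h1 : ∀ t : S, m ^ 2 * ‖x‖ ^ 2 ≤ ‖π t x‖ ^ 2 := by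
        intro t
        have h2 := pow_le_pow_left₀ (by positivity) (hbd t x).1 2
        calc m ^ 2 * ‖x‖ ^ 2 = (m * ‖x‖) ^ 2 := by ring
          _ ≤ ‖π t x‖ ^ 2 := h2
      have := hmono (fun _ => m ^ 2 * ‖x‖ ^ 2) (fun t => ‖π t x‖ ^ 2) h1
      rwa [hconst] at this
    · have h1 : ∀ t : S, ‖π t x‖ ^ 2 ≤ M ^ 2 * ‖x‖ ^ 2 := by
        intro t
        have h2 := pow_le_pow_left₀ (norm_nonneg (π t x)) (hbd t x).2 2
        calc ‖π t x‖ ^ 2 ≤ (M * ‖x‖) ^ 2 := h2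
          _ = M ^ 2 * ‖x‖ ^ 2 := by ring
      have := hmono (fun t => ‖π t x‖ ^ 2) (fun _ => M ^ 2 * ‖x‖ ^ 2) h1
      rwa [hconst] at this
  -- part 2
  have part2 : ∀ (s : S) (x : H),
      mean (fun t => ‖π t (π s x)‖ ^ 2) = mean (fun t => ‖π t x‖ ^ 2) := by
    intro s x
    have h1 : (fun t => ‖π t (π s x)‖ ^ 2) = (fun t => (fun r => ‖π r x‖ ^ 2) (t * s)) := by
      funext t
      have h2 : π (t * s) = (π t).comp (π s) := hrep t s
      simp [h2]
    rw [h1]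
    exact hinv (fun r => ‖π r x‖ ^ 2) s
  refine ⟨part1, part2, ?_⟩
  -- part 3
  obtain ⟨T, hsa, hquad⟩ := aux_exists_T π M (hm.trans_le hmM).le
    (fun s x => (hbd s x).2) mean hadd hsmul hmono hone
  have hre : ∀ x : H, RCLike.re (inner ℂ (T x) x : ℂ) = mean (fun t => ‖π t x‖ ^ 2) := by
    intro x
    rw [hquad x]
    simp
  apply aux_exists_L π T hsa m M hm hmM
  · intro x
    rw [hre]
    exact (part1 x).1
  · intro x
    rw [hre]
    exact (part1 x).2
  · intro s x
    rw [hquad, hquad]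
    exact_mod_cast congrArg (fun r : ℝ => (r : ℂ)) (part2 s x)
end

section
/- Let G be a group and π : G → B(H) a representation by invertible operators. Fix a finitely additive, right-invariant probability mean on G, and suppose the functions g ↦ ‖π(g)x‖² and g ↦ ‖π(g)*x‖² are bounded by C²‖x‖² in mean for every x ∈ H, for some C ≥ 1. Then ‖x‖² ≤ C²·mean(g ↦ ‖π(g⁻¹)x‖²) for every x ∈ H; i.e., the mean of the squared orbit norms along inverses is bounded below by C⁻²‖x‖². -/
open ContinuousLinearMap

theorem mean_lower_bound_along_inverses
    {G : Type*} [Group G]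
    {H : Type*} [NormedAddCommGroup H] [InnerProductSpace ℂ H] [CompleteSpace H]
    (π : G → (H →L[ℂ] H))
    (hrep : ∀ g h : G, π (g * h) = (π g).comp (π h))
    (hone : π 1 = ContinuousLinearMap.id ℂ H)
    (mean : (G → ℝ) → ℝ)
    (hadd : ∀ f g : G → ℝ, mean (f + g) = mean f + mean g)
    (hsmul : ∀ (c : ℝ) (f : G → ℝ), mean (c • f) = c * mean f)
    (hmono : ∀ f g : G → ℝ, (∀ t, f t ≤ g t) → mean f ≤ mean g)
    (hone' : mean (fun _ => 1) = 1)
    (hinv : ∀ (f : G → ℝ) (s : G), mean (fun g => f (g * s)) = mean f)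
    (C : ℝ) (hC : 1 ≤ C)
    (hup : ∀ x : H, mean (fun g => ‖π g x‖ ^ 2) ≤ C ^ 2 * ‖x‖ ^ 2)
    (hup' : ∀ x : H, mean (fun g => ‖adjoint (π g) x‖ ^ 2) ≤ C ^ 2 * ‖x‖ ^ 2) :
    ∀ x : H, ‖x‖ ^ 2 ≤ C ^ 2 * mean (fun g => ‖π g⁻¹ x‖ ^ 2) := by
  intro x
  have hC0 : (0:ℝ) < C := lt_of_lt_of_le one_pos hC
  -- pointwise inequality
  have key : ∀ g : G, 2 * C ^ 2 * ‖x‖ ^ 2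
      ≤ C ^ 4 * ‖π g⁻¹ x‖ ^ 2 + ‖adjoint (π g) x‖ ^ 2 := by
    intro g
    have hx : π g (π g⁻¹ x) = x := by
      have h := hrep g g⁻¹
      rw [mul_inv_cancel] at h
      have := congrArg (fun (T : H →L[ℂ] H) => T x) (h.symm.trans hone)
      simpa using this
    have h1 : ‖x‖ ^ 2 ≤ ‖π g⁻¹ x‖ * ‖adjoint (π g) x‖ := by
      have heq : (inner ℂ (π g⁻¹ x) (adjoint (π g) x) : ℂ) = inner ℂ x x := by
        rw [adjoint_inner_right, hx]
      have : ‖x‖ ^ 2 = RCLike.re (inner ℂ (π g⁻¹ x) (adjoint (π g) x) : ℂ) := by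
        rw [heq, inner_self_eq_norm_sq]
      rw [this]
      calc RCLike.re (inner ℂ (π g⁻¹ x) (adjoint (π g) x) : ℂ)
          ≤ ‖(inner ℂ (π g⁻¹ x) (adjoint (π g) x) : ℂ)‖ := RCLike.re_le_norm _
        _ ≤ ‖π g⁻¹ x‖ * ‖adjoint (π g) x‖ := norm_inner_le_norm _ _
    nlinarith [sq_nonneg (C ^ 2 * ‖π g⁻¹ x‖ - ‖adjoint (π g) x‖), sq_nonneg C,
      norm_nonneg (π g⁻¹ x), norm_nonneg (adjoint (π g) x)]
  set M : ℝ := mean (fun g => ‖π g⁻¹ x‖ ^ 2) with hM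
  have hmean : 2 * C ^ 2 * ‖x‖ ^ 2 ≤ C ^ 4 * M + C ^ 2 * ‖x‖ ^ 2 := by
    have h1 : mean (fun _ => 2 * C ^ 2 * ‖x‖ ^ 2) = 2 * C ^ 2 * ‖x‖ ^ 2 := by
      have hc : (fun (_ : G) => 2 * C ^ 2 * ‖x‖ ^ 2)
          = (2 * C ^ 2 * ‖x‖ ^ 2) • (fun (_ : G) => (1:ℝ)) := by
        funext g; simp
      rw [hc, hsmul, hone', mul_one]
    have h2 : mean (fun g => C ^ 4 * ‖π g⁻¹ x‖ ^ 2 + ‖adjoint (π g) x‖ ^ 2)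
        = C ^ 4 * M + mean (fun g => ‖adjoint (π g) x‖ ^ 2) := by
      have hfun : (fun g => C ^ 4 * ‖π g⁻¹ x‖ ^ 2 + ‖adjoint (π g) x‖ ^ 2)
          = (C ^ 4 • fun g => ‖π g⁻¹ x‖ ^ 2) + (fun g => ‖adjoint (π g) x‖ ^ 2) := by
        funext g; simp [Pi.smul_apply, smul_eq_mul]
      rw [hfun, hadd, hsmul]
    have h3 := hmono _ _ key
    rw [h1, h2] at h3
    have h4 := hup' x
    linarith
  nlinarith [sq_nonneg C, mul_pos hC0 hC0, hmean]
end
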